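/- arXiv:2501.11018 — 6 statements merged into one kernel-verified Lean document; each statement's English description precedes it below -/
import Mathlib

section
/- Let f_i ∈ L¹(ℝ^n, ℝ₊), i = 1,2, and suppose f_i is more log-convex than g_{A_i} for positive-definite symmetric n×n matrices A_i > 0, i = 1,2. Then the convolution f_1 ∗ f_2 is more log-convex than g_C, where C is the positive-definite matrix determined by C^{-1} = A_1^{-1} + A_2^{-1}. -/
open MeasureTheory Matrix

/-- The (un-normalized) centered Gaussian `g_A(x) = exp(-(1/2)⟨Ax,x⟩)`. -/
noncomputable def gaussFn {ι : Type*} [Fintype ι] (A : Matrix ι ι ℝ) (x : ι → ℝ) : ℝ :=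
  Real.exp (-(1/2 : ℝ) * (x ⬝ᵥ A.mulVec x))

/-- A nonnegative function is log-convex if
`f(tx + (1-t)y) ≤ f(x)^t f(y)^(1-t)` for all `x, y` and `t ∈ [0,1]`. -/
def IsLogConvex {ι : Type*} (f : (ι → ℝ) → ℝ) : Prop :=
  (∀ x, 0 ≤ f x) ∧ ∀ x y : ι → ℝ, ∀ t : ℝ, 0 ≤ t → t ≤ 1 →
    f (t • x + (1 - t) • y) ≤ f x ^ t * f y ^ (1 - t)

/-- `f` is more log-convex than `g_A` if `f = g_A ⬝ h` with `h` log-convex. -/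
def MoreLogConvexThan {ι : Type*} [Fintype ι] (A : Matrix ι ι ℝ) (f : (ι → ℝ) → ℝ) : Prop :=
  ∃ h : (ι → ℝ) → ℝ, IsLogConvex h ∧ f = fun x => gaussFn A x * h x

/-- The convolution `(f₁ ∗ f₂)(x) = ∫ f₁(x - y) f₂(y) dy`. -/
noncomputable def convFn {ι : Type*} [Fintype ι] (f₁ f₂ : (ι → ℝ) → ℝ) (x : ι → ℝ) : ℝ :=
  ∫ y : ι → ℝ, f₁ (x - y) * f₂ y

open scoped ENNReal

namespace ConvLogConvexAux

variable {n : ℕ}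

lemma measurable_quadForm (B : Matrix (Fin n) (Fin n) ℝ) :
    Measurable fun z : Fin n → ℝ => z ⬝ᵥ B *ᵥ z := by
  simp only [dotProduct, Matrix.mulVec]
  exact Finset.measurable_sum _ fun i _ =>
    (measurable_pi_apply i).mul
      (Finset.measurable_sum _ fun j _ => (measurable_pi_apply j).const_mul _)

lemma measurable_gauss (B : Matrix (Fin n) (Fin n) ℝ) : Measurable (gaussFn B) :=
  Real.measurable_exp.comp ((measurable_quadForm B).const_mul _)

lemma gauss_pos (B : Matrix (Fin n) (Fin n) ℝ) (x : Fin n → ℝ) : 0 < gaussFn B x :=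
  Real.exp_pos _

lemma ofReal_logConvex {h : (Fin n → ℝ) → ℝ} (hh : IsLogConvex h) (x y : Fin n → ℝ)
    {t : ℝ} (ht0 : 0 ≤ t) (ht1 : t ≤ 1) :
    ENNReal.ofReal (h (t • x + (1 - t) • y))
      ≤ ENNReal.ofReal (h x) ^ t * ENNReal.ofReal (h y) ^ (1 - t) := by
  refine le_trans (ENNReal.ofReal_le_ofReal (hh.2 x y t ht0 ht1)) (le_of_eq ?_)
  rw [ENNReal.ofReal_mul (Real.rpow_nonneg (hh.1 x) t),
    ENNReal.ofReal_rpow_of_nonneg (hh.1 x) ht0,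
    ENNReal.ofReal_rpow_of_nonneg (hh.1 y) (by linarith)]

lemma lintegral_holder {u v w : (Fin n → ℝ) → ℝ≥0∞} {t : ℝ} (ht0 : 0 < t) (ht1 : t < 1)
    (hu : AEMeasurable u volume) (hv : AEMeasurable v volume)
    (hw : ∀ z, w z ≤ u z ^ t * v z ^ (1 - t)) :
    ∫⁻ z, w z ≤ (∫⁻ z, u z) ^ t * (∫⁻ z, v z) ^ (1 - t) := by
  have ht1' : (0:ℝ) < 1 - t := by linarith
  have hpq : Real.HolderConjugate (1/t) (1/(1-t)) := by
    refine Real.holderConjugate_iff.mpr ⟨?_, ?_⟩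
    · rw [lt_div_iff₀ ht0]; linarith
    · rw [one_div, one_div, inv_inv, inv_inv]; ring
  have h1 := ENNReal.lintegral_mul_le_Lp_mul_Lq volume hpq
    (f := fun z => u z ^ t) (g := fun z => v z ^ (1-t))
    (hu.pow_const t) (hv.pow_const (1-t))
  have e1 : ∀ z, (u z ^ t) ^ (1/t) = u z := by
    intro z
    rw [← ENNReal.rpow_mul, mul_one_div_cancel (ne_of_gt ht0), ENNReal.rpow_one]
  have e2 : ∀ z, (v z ^ (1-t)) ^ (1/(1-t)) = v z := by
    intro z
    rw [← ENNReal.rpow_mul, mul_one_div_cancel (ne_of_gt ht1'), ENNReal.rpow_one]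
  calc ∫⁻ z, w z ≤ ∫⁻ z, (fun z => u z ^ t) z * (fun z => v z ^ (1-t)) z :=
        lintegral_mono hw
    _ ≤ (∫⁻ z, (u z ^ t) ^ (1/t)) ^ (1/(1/t)) * (∫⁻ z, (v z ^ (1-t)) ^ (1/(1-t))) ^ (1/(1/(1-t))) := h1
    _ = (∫⁻ z, u z) ^ t * (∫⁻ z, v z) ^ (1 - t) := by
        simp_rw [e1, e2, one_div_one_div]

lemma dot_symm {S : Matrix (Fin n) (Fin n) ℝ} (hS : Sᵀ = S) (u v : Fin n → ℝ) :
    u ⬝ᵥ S *ᵥ v = v ⬝ᵥ S *ᵥ u := by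
  rw [Matrix.dotProduct_mulVec, ← Matrix.mulVec_transpose, hS, dotProduct_comm]

lemma quad_identity {A₁ A₂ : Matrix (Fin n) (Fin n) ℝ} (h1 : A₁ᵀ = A₁) (h2 : A₂ᵀ = A₂)
    (hBinv : (A₁ + A₂) * (A₁ + A₂)⁻¹ = 1) (x y : Fin n → ℝ) :
    (x - y) ⬝ᵥ A₁ *ᵥ (x - y) + y ⬝ᵥ A₂ *ᵥ y
      = x ⬝ᵥ (A₁ - A₁ * (A₁ + A₂)⁻¹ * A₁) *ᵥ x
        + (y - ((A₁ + A₂)⁻¹ * A₁) *ᵥ x) ⬝ᵥ (A₁ + A₂) *ᵥ (y - ((A₁ + A₂)⁻¹ * A₁) *ᵥ x) := by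
  set B := A₁ + A₂ with hBdef
  set m := (B⁻¹ * A₁) *ᵥ x with hmdef
  have hBsymm : Bᵀ = B := by rw [hBdef, Matrix.transpose_add, h1, h2]
  have hBm : B *ᵥ m = A₁ *ᵥ x := by
    rw [hmdef, Matrix.mulVec_mulVec, ← Matrix.mul_assoc, hBinv, Matrix.one_mul]
  have e1 : y ⬝ᵥ B *ᵥ m = y ⬝ᵥ A₁ *ᵥ x := by rw [hBm]
  have e2 : m ⬝ᵥ B *ᵥ y = y ⬝ᵥ A₁ *ᵥ x := by rw [dot_symm hBsymm, hBm]
  have e3 : m ⬝ᵥ B *ᵥ m = x ⬝ᵥ (A₁ * B⁻¹ * A₁) *ᵥ x := by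
    rw [hBm, dot_symm h1, hmdef, Matrix.mulVec_mulVec, ← Matrix.mul_assoc]
  have e4 : x ⬝ᵥ A₁ *ᵥ y = y ⬝ᵥ A₁ *ᵥ x := dot_symm h1 x y
  have hyB : y ⬝ᵥ B *ᵥ y = y ⬝ᵥ A₁ *ᵥ y + y ⬝ᵥ A₂ *ᵥ y := by
    rw [hBdef, Matrix.add_mulVec, dotProduct_add]
  have hxC : x ⬝ᵥ (A₁ - A₁ * B⁻¹ * A₁) *ᵥ x
      = x ⬝ᵥ A₁ *ᵥ x - x ⬝ᵥ (A₁ * B⁻¹ * A₁) *ᵥ x := by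
    rw [Matrix.sub_mulVec, dotProduct_sub]
  have hL : (x - y) ⬝ᵥ A₁ *ᵥ (x - y)
      = x ⬝ᵥ A₁ *ᵥ x - x ⬝ᵥ A₁ *ᵥ y - (y ⬝ᵥ A₁ *ᵥ x - y ⬝ᵥ A₁ *ᵥ y) := by
    rw [Matrix.mulVec_sub, sub_dotProduct, dotProduct_sub, dotProduct_sub]
  have hR : (y - m) ⬝ᵥ B *ᵥ (y - m)
      = y ⬝ᵥ B *ᵥ y - y ⬝ᵥ B *ᵥ m - (m ⬝ᵥ B *ᵥ y - m ⬝ᵥ B *ᵥ m) := by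
    rw [Matrix.mulVec_sub, sub_dotProduct, dotProduct_sub, dotProduct_sub]
  rw [hL, hR, hxC, hyB, e1, e2, e3, e4]
  ring

lemma C_eq {A₁ A₂ : Matrix (Fin n) (Fin n) ℝ} (h1 : IsUnit A₁.det) (h2 : IsUnit A₂.det)
    (hB : IsUnit (A₁ + A₂).det) :
    (A₁⁻¹ + A₂⁻¹)⁻¹ = A₁ - A₁ * (A₁ + A₂)⁻¹ * A₁ := by
  have key : A₁⁻¹ + A₂⁻¹ = A₁⁻¹ * (A₁ + A₂) * A₂⁻¹ := by
    rw [Matrix.mul_add, Matrix.nonsing_inv_mul _ h1, Matrix.add_mul, Matrix.one_mul,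
      Matrix.mul_assoc, Matrix.mul_nonsing_inv _ h2, Matrix.mul_one, add_comm]
  have hA₂ : A₂ = (A₁ + A₂) - A₁ := by abel
  rw [key, Matrix.mul_inv_rev, Matrix.mul_inv_rev, Matrix.nonsing_inv_nonsing_inv _ h1,
    Matrix.nonsing_inv_nonsing_inv _ h2]
  calc A₂ * ((A₁ + A₂)⁻¹ * A₁)
      = ((A₁ + A₂) - A₁) * ((A₁ + A₂)⁻¹ * A₁) := by rw [← hA₂]
    _ = (A₁ + A₂) * ((A₁ + A₂)⁻¹ * A₁) - A₁ * ((A₁ + A₂)⁻¹ * A₁) := Matrix.sub_mul _ _ _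
    _ = A₁ - A₁ * (A₁ + A₂)⁻¹ * A₁ := by
        rw [← Matrix.mul_assoc, Matrix.mul_nonsing_inv _ hB, Matrix.one_mul, Matrix.mul_assoc]

end ConvLogConvexAux

open ConvLogConvexAux

/-- If `f_i ∈ L¹(ℝ^n, ℝ₊)` is more log-convex than `g_{A_i}`, `A_i > 0`, `i = 1,2`, then
`f₁ ∗ f₂` is more log-convex than `g_C` where `C⁻¹ = A₁⁻¹ + A₂⁻¹`. -/
theorem convolution_more_log_convex (n : ℕ)
    (f₁ f₂ : (Fin n → ℝ) → ℝ) (hf₁int : Integrable f₁) (hf₂int : Integrable f₂)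
    (hf₁nn : ∀ x, 0 ≤ f₁ x) (hf₂nn : ∀ x, 0 ≤ f₂ x)
    (A₁ A₂ : Matrix (Fin n) (Fin n) ℝ) (hA₁ : A₁.PosDef) (hA₂ : A₂.PosDef)
    (hf₁ : MoreLogConvexThan A₁ f₁) (hf₂ : MoreLogConvexThan A₂ f₂) :
    MoreLogConvexThan (A₁⁻¹ + A₂⁻¹)⁻¹ (convFn f₁ f₂) := by
  classical
  obtain ⟨h₁, hh₁, hfe₁⟩ := hf₁
  obtain ⟨h₂, hh₂, hfe₂⟩ := hf₂
  have hfx₁ : ∀ w, f₁ w = gaussFn A₁ w * h₁ w := fun w => by rw [hfe₁]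
  have hfx₂ : ∀ w, f₂ w = gaussFn A₂ w * h₂ w := fun w => by rw [hfe₂]
  have hBpos : (A₁ + A₂).PosDef := hA₁.add hA₂
  have hdet₁ : IsUnit A₁.det := isUnit_iff_ne_zero.mpr (ne_of_gt hA₁.det_pos)
  have hdet₂ : IsUnit A₂.det := isUnit_iff_ne_zero.mpr (ne_of_gt hA₂.det_pos)
  have hdetB : IsUnit (A₁ + A₂).det := isUnit_iff_ne_zero.mpr (ne_of_gt hBpos.det_pos)
  have hBinv : (A₁ + A₂) * (A₁ + A₂)⁻¹ = 1 := Matrix.mul_nonsing_inv _ hdetB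
  have hsymm₁ : A₁ᵀ = A₁ := by
    have := hA₁.isHermitian
    rwa [Matrix.IsHermitian, Matrix.conjTranspose_eq_transpose_of_trivial] at this
  have hsymm₂ : A₂ᵀ = A₂ := by
    have := hA₂.isHermitian
    rwa [Matrix.IsHermitian, Matrix.conjTranspose_eq_transpose_of_trivial] at this
  set C := A₁ - A₁ * (A₁ + A₂)⁻¹ * A₁ with hCdef
  have hCeq : (A₁⁻¹ + A₂⁻¹)⁻¹ = C := C_eq hdet₁ hdet₂ hdetB
  set mm : (Fin n → ℝ) → (Fin n → ℝ) := fun x => ((A₁ + A₂)⁻¹ * A₁) *ᵥ x with hmm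
  have hgauss : ∀ x y : Fin n → ℝ,
      gaussFn A₁ (x - y) * gaussFn A₂ y = gaussFn C x * gaussFn (A₁ + A₂) (y - mm x) := by
    intro x y
    unfold gaussFn
    rw [← Real.exp_add, ← Real.exp_add]
    congr 1
    have hq := quad_identity hsymm₁ hsymm₂ hBinv x y
    rw [hmm]
    linear_combination (-(1/2 : ℝ)) * hq
  set G : (Fin n → ℝ) → ℝ≥0∞ := fun z => ENNReal.ofReal (gaussFn (A₁ + A₂) z) with hG
  set H₁ : (Fin n → ℝ) → ℝ≥0∞ := fun w => ENNReal.ofReal (h₁ w) with hH₁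
  set H₂ : (Fin n → ℝ) → ℝ≥0∞ := fun w => ENNReal.ofReal (h₂ w) with hH₂
  set K : (Fin n → ℝ) → ℝ≥0∞ :=
    fun x => ∫⁻ z, G z * H₁ (x - mm x - z) * H₂ (mm x + z) with hK
  set Φ : (Fin n → ℝ) → ℝ≥0∞ :=
    fun x => ∫⁻ y, ENNReal.ofReal (f₁ (x - y) * f₂ y) with hΦ
  have hgCpos : ∀ x, 0 < gaussFn C x := fun x => Real.exp_pos _
  -- Step A : Φ x = ofReal (g_C x) * K x
  have stepA : ∀ x, Φ x = ENNReal.ofReal (gaussFn C x) * K x := by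
    intro x
    have hmap : Measure.map (⇑(MeasurableEquiv.addLeft (mm x))) (volume : Measure (Fin n → ℝ))
        = volume := by
      rw [MeasurableEquiv.coe_addLeft]
      exact map_add_left_eq_self volume (mm x)
    have htrans : Φ x = ∫⁻ z, ENNReal.ofReal (f₁ (x - (mm x + z)) * f₂ (mm x + z)) := by
      calc Φ x = ∫⁻ y, ENNReal.ofReal (f₁ (x - y) * f₂ y)
            ∂(Measure.map (⇑(MeasurableEquiv.addLeft (mm x))) volume) := by rw [hmap]
        _ = ∫⁻ z, ENNReal.ofReal (f₁ (x - (MeasurableEquiv.addLeft (mm x)) z)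
              * f₂ ((MeasurableEquiv.addLeft (mm x)) z)) :=
            lintegral_map_equiv _ _
        _ = ∫⁻ z, ENNReal.ofReal (f₁ (x - (mm x + z)) * f₂ (mm x + z)) := by
            simp only [MeasurableEquiv.coe_addLeft]
    have hpt : ∀ z, ENNReal.ofReal (f₁ (x - (mm x + z)) * f₂ (mm x + z))
        = ENNReal.ofReal (gaussFn C x) * (G z * H₁ (x - mm x - z) * H₂ (mm x + z)) := by
      intro z
      have h1 : x - (mm x + z) = x - mm x - z := sub_add_eq_sub_sub x (mm x) z
      have h2 : mm x + z - mm x = z := by abel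
      have hreal : f₁ (x - mm x - z) * f₂ (mm x + z)
          = gaussFn C x * (gaussFn (A₁ + A₂) z * h₁ (x - mm x - z) * h₂ (mm x + z)) := by
        rw [hfx₁, hfx₂]
        have hg := hgauss x (mm x + z)
        rw [h1, h2] at hg
        linear_combination (h₁ (x - mm x - z) * h₂ (mm x + z)) * hg
      rw [h1, hreal, ENNReal.ofReal_mul (hgCpos x).le,
        ENNReal.ofReal_mul (mul_nonneg (gauss_pos _ _).le (hh₁.1 _)),
        ENNReal.ofReal_mul (gauss_pos _ _).le]
    rw [htrans]
    simp_rw [hpt]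
    rw [lintegral_const_mul' _ _ ENNReal.ofReal_ne_top, hK]
  -- measurability of the pieces
  have hGmeas : Measurable G := (measurable_gauss (A₁ + A₂)).ennreal_ofReal
  have hH₁meas : AEMeasurable H₁ volume := by
    have hh : h₁ = fun w => f₁ w / gaussFn A₁ w := by
      funext w
      rw [hfx₁ w, mul_div_cancel_left₀ _ (ne_of_gt (gauss_pos A₁ w))]
    rw [hH₁, hh]
    exact (hf₁int.aemeasurable.div (measurable_gauss A₁).aemeasurable).ennreal_ofReal
  have hH₂meas : AEMeasurable H₂ volume := by
    have hh : h₂ = fun w => f₂ w / gaussFn A₂ w := by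
      funext w
      rw [hfx₂ w, mul_div_cancel_left₀ _ (ne_of_gt (gauss_pos A₂ w))]
    rw [hH₂, hh]
    exact (hf₂int.aemeasurable.div (measurable_gauss A₂).aemeasurable).ennreal_ofReal
  have hint_meas : ∀ x : Fin n → ℝ,
      AEMeasurable (fun z => G z * H₁ (x - mm x - z) * H₂ (mm x + z)) volume := by
    intro x
    have m1 : AEMeasurable (fun z : Fin n → ℝ => H₁ (x - mm x - z)) volume := by
      have := hH₁meas.comp_quasiMeasurePreserving
        (Measure.measurePreserving_sub_left volume (x - mm x)).quasiMeasurePreserving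
      simpa [Function.comp_def] using this
    have m2 : AEMeasurable (fun z : Fin n → ℝ => H₂ (mm x + z)) volume := by
      have := hH₂meas.comp_quasiMeasurePreserving
        (measurePreserving_add_left volume (mm x)).quasiMeasurePreserving
      simpa [Function.comp_def] using this
    exact (hGmeas.aemeasurable.mul m1).mul m2
  -- Step B : ENNReal log-convexity of K
  have stepB : ∀ x y : Fin n → ℝ, ∀ t : ℝ, 0 < t → t < 1 →
      K (t • x + (1 - t) • y) ≤ K x ^ t * K y ^ (1 - t) := by
    intro x y t ht0 ht1
    have hmm_lin : mm (t • x + (1 - t) • y) = t • mm x + (1 - t) • mm y := by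
      simp only [hmm]
      rw [Matrix.mulVec_add, Matrix.mulVec_smul, Matrix.mulVec_smul]
    have key1 : ∀ z : Fin n → ℝ, (t • x + (1 - t) • y) - mm (t • x + (1 - t) • y) - z
        = t • (x - mm x - z) + (1 - t) • (y - mm y - z) := by
      intro z; rw [hmm_lin]; module
    have key2 : ∀ z : Fin n → ℝ, mm (t • x + (1 - t) • y) + z
        = t • (mm x + z) + (1 - t) • (mm y + z) := by
      intro z; rw [hmm_lin]; module
    have hpt : ∀ z, G z * H₁ ((t • x + (1 - t) • y) - mm (t • x + (1 - t) • y) - z)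
          * H₂ (mm (t • x + (1 - t) • y) + z)
        ≤ (G z * H₁ (x - mm x - z) * H₂ (mm x + z)) ^ t
          * (G z * H₁ (y - mm y - z) * H₂ (mm y + z)) ^ (1 - t) := by
      intro z
      have e1 : H₁ ((t • x + (1 - t) • y) - mm (t • x + (1 - t) • y) - z)
          ≤ H₁ (x - mm x - z) ^ t * H₁ (y - mm y - z) ^ (1 - t) := by
        rw [key1 z, hH₁]
        exact ofReal_logConvex hh₁ _ _ ht0.le ht1.le
      have e2 : H₂ (mm (t • x + (1 - t) • y) + z)
          ≤ H₂ (mm x + z) ^ t * H₂ (mm y + z) ^ (1 - t) := by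
        rw [key2 z, hH₂]
        exact ofReal_logConvex hh₂ _ _ ht0.le ht1.le
      have hG0 : G z ≠ 0 := by
        have : 0 < G z := ENNReal.ofReal_pos.mpr (gauss_pos (A₁ + A₂) z)
        exact this.ne'
      have hGtop : G z ≠ ⊤ := ENNReal.ofReal_ne_top
      have eG : G z = G z ^ t * G z ^ (1 - t) := by
        rw [← ENNReal.rpow_add t (1 - t) hG0 hGtop]
        norm_num
      calc G z * H₁ ((t • x + (1 - t) • y) - mm (t • x + (1 - t) • y) - z)
            * H₂ (mm (t • x + (1 - t) • y) + z)
          ≤ G z * (H₁ (x - mm x - z) ^ t * H₁ (y - mm y - z) ^ (1 - t))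
            * (H₂ (mm x + z) ^ t * H₂ (mm y + z) ^ (1 - t)) :=
            mul_le_mul' (mul_le_mul' le_rfl e1) e2
        _ = (G z * H₁ (x - mm x - z) * H₂ (mm x + z)) ^ t
            * (G z * H₁ (y - mm y - z) * H₂ (mm y + z)) ^ (1 - t) := by
            rw [ENNReal.mul_rpow_of_nonneg _ _ ht0.le, ENNReal.mul_rpow_of_nonneg _ _ ht0.le,
              ENNReal.mul_rpow_of_nonneg _ _ (by linarith : (0:ℝ) ≤ 1 - t),
              ENNReal.mul_rpow_of_nonneg _ _ (by linarith : (0:ℝ) ≤ 1 - t)]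
            nth_rewrite 1 [eG]
            ring
    exact lintegral_holder ht0 ht1 (hint_meas x) (hint_meas y) hpt
  -- Step C : Φ is finite a.e.
  have hΦae : ∀ᵐ x : Fin n → ℝ, Φ x < ⊤ := by
    obtain ⟨q₁, hq₁m, hq₁e⟩ : ∃ q, Measurable q ∧ f₁ =ᵐ[volume] q :=
      ⟨hf₁int.aemeasurable.mk f₁, hf₁int.aemeasurable.measurable_mk,
        hf₁int.aemeasurable.ae_eq_mk⟩
    obtain ⟨q₂, hq₂m, hq₂e⟩ : ∃ q, Measurable q ∧ f₂ =ᵐ[volume] q :=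
      ⟨hf₂int.aemeasurable.mk f₂, hf₂int.aemeasurable.measurable_mk,
        hf₂int.aemeasurable.ae_eq_mk⟩
    have hΦeq : ∀ x, Φ x = ∫⁻ y, ENNReal.ofReal (q₁ (x - y)) * ENNReal.ofReal (q₂ y) := by
      intro x
      rw [hΦ]
      refine lintegral_congr_ae ?_
      have h1 : (fun y : Fin n → ℝ => f₁ (x - y)) =ᵐ[volume] fun y => q₁ (x - y) := by
        have := Measure.QuasiMeasurePreserving.ae_eq_comp
          (Measure.measurePreserving_sub_left volume x).quasiMeasurePreserving hq₁e
        simpa [Function.comp_def] using this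
      filter_upwards [h1, hq₂e] with y hy1 hy2
      rw [← hy1, ← hy2, ← ENNReal.ofReal_mul (hf₁nn _)]
    have hFmeas : Measurable (fun p : (Fin n → ℝ) × (Fin n → ℝ) =>
        ENNReal.ofReal (q₁ (p.1 - p.2)) * ENNReal.ofReal (q₂ p.2)) :=
      ((hq₁m.comp (measurable_fst.sub measurable_snd)).ennreal_ofReal).mul
        ((hq₂m.comp measurable_snd).ennreal_ofReal)
    have hΨmeas : Measurable (fun x : Fin n → ℝ =>
        ∫⁻ y, ENNReal.ofReal (q₁ (x - y)) * ENNReal.ofReal (q₂ y)) :=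
      hFmeas.lintegral_prod_right'
    have hint : (∫⁻ x, ∫⁻ y, ENNReal.ofReal (q₁ (x - y)) * ENNReal.ofReal (q₂ y)) ≠ ⊤ := by
      have hfin₁ : (∫⁻ a, ENNReal.ofReal (q₁ a)) < ⊤ := by
        have hcongr : (fun a => ENNReal.ofReal (q₁ a)) =ᵐ[volume]
            fun a => ENNReal.ofReal (f₁ a) := by
          filter_upwards [hq₁e] with a ha
          rw [ha]
        rw [lintegral_congr_ae hcongr]; exact hf₁int.lintegral_lt_top
      have hfin₂ : (∫⁻ a, ENNReal.ofReal (q₂ a)) < ⊤ := by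
        have hcongr : (fun a => ENNReal.ofReal (q₂ a)) =ᵐ[volume]
            fun a => ENNReal.ofReal (f₂ a) := by
          filter_upwards [hq₂e] with a ha
          rw [ha]
        rw [lintegral_congr_ae hcongr]; exact hf₂int.lintegral_lt_top
      have h1 : (∫⁻ x, ∫⁻ y, ENNReal.ofReal (q₁ (x - y)) * ENNReal.ofReal (q₂ y))
          = ∫⁻ p : (Fin n → ℝ) × (Fin n → ℝ),
              ENNReal.ofReal (q₁ (p.1 - p.2)) * ENNReal.ofReal (q₂ p.2)
              ∂((volume : Measure (Fin n → ℝ)).prod volume) :=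
        (lintegral_prod _ hFmeas.aemeasurable).symm
      have h2 : (∫⁻ p : (Fin n → ℝ) × (Fin n → ℝ),
              ENNReal.ofReal (q₁ (p.1 - p.2)) * ENNReal.ofReal (q₂ p.2)
              ∂((volume : Measure (Fin n → ℝ)).prod volume))
          = ∫⁻ p : (Fin n → ℝ) × (Fin n → ℝ),
              ENNReal.ofReal (q₁ p.1) * ENNReal.ofReal (q₂ p.2)
              ∂((volume : Measure (Fin n → ℝ)).prod volume) := by
        have := (measurePreserving_sub_prod (volume : Measure (Fin n → ℝ)) volume).lintegral_comp
          (f := fun p : (Fin n → ℝ) × (Fin n → ℝ) =>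
            ENNReal.ofReal (q₁ p.1) * ENNReal.ofReal (q₂ p.2))
          (((hq₁m.comp measurable_fst).ennreal_ofReal).mul
            ((hq₂m.comp measurable_snd).ennreal_ofReal))
        simpa using this
      have h3 : (∫⁻ p : (Fin n → ℝ) × (Fin n → ℝ),
              ENNReal.ofReal (q₁ p.1) * ENNReal.ofReal (q₂ p.2)
              ∂((volume : Measure (Fin n → ℝ)).prod volume))
          = (∫⁻ a, ENNReal.ofReal (q₁ a)) * ∫⁻ a, ENNReal.ofReal (q₂ a) :=
        lintegral_prod_mul hq₁m.ennreal_ofReal.aemeasurable hq₂m.ennreal_ofReal.aemeasurable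
      rw [h1, h2, h3]
      exact ENNReal.mul_ne_top hfin₁.ne hfin₂.ne
    have := ae_lt_top hΨmeas hint
    filter_upwards [this] with x hx
    rw [hΦeq x]
    exact hx
  -- Step D : K is finite everywhere
  have hKfin : ∀ x, K x ≠ ⊤ := by
    have hKae : ∀ᵐ x : Fin n → ℝ, K x < ⊤ := by
      filter_upwards [hΦae] with x hx
      rw [stepA x] at hx
      by_contra hcon
      rw [not_lt, top_le_iff] at hcon
      rw [hcon, ENNReal.mul_top (ENNReal.ofReal_pos.mpr (hgCpos x)).ne'] at hx
      exact absurd hx (lt_irrefl _)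
    intro x₀
    have hnull : volume {x : Fin n → ℝ | ¬ K x < ⊤} = 0 := ae_iff.mp hKae
    have hplus : volume ((fun v => x₀ + v) ⁻¹' {x : Fin n → ℝ | ¬ K x < ⊤}) = 0 :=
      (measurePreserving_add_left volume x₀).quasiMeasurePreserving.preimage_null hnull
    have hminus : volume ((fun v => x₀ - v) ⁻¹' {x : Fin n → ℝ | ¬ K x < ⊤}) = 0 :=
      (Measure.measurePreserving_sub_left volume x₀).quasiMeasurePreserving.preimage_null hnull
    have hunion : volume ((fun v => x₀ + v) ⁻¹' {x : Fin n → ℝ | ¬ K x < ⊤}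
        ∪ (fun v => x₀ - v) ⁻¹' {x : Fin n → ℝ | ¬ K x < ⊤}) = 0 :=
      measure_union_null hplus hminus
    have hne : ((fun v => x₀ + v) ⁻¹' {x : Fin n → ℝ | ¬ K x < ⊤}
        ∪ (fun v => x₀ - v) ⁻¹' {x : Fin n → ℝ | ¬ K x < ⊤})ᶜ.Nonempty := by
      by_contra hcon
      rw [Set.not_nonempty_iff_eq_empty, Set.compl_empty_iff] at hcon
      rw [hcon] at hunion
      exact (isOpen_univ.measure_ne_zero volume Set.univ_nonempty) hunion
    obtain ⟨v, hv⟩ := hne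
    simp only [Set.mem_compl_iff, Set.mem_union, Set.mem_preimage, Set.mem_setOf_eq, not_or,
      not_not] at hv
    have hx : x₀ = (1/2 : ℝ) • (x₀ + v) + (1 - 1/2 : ℝ) • (x₀ - v) := by
      have h12 : (1 - 1/2 : ℝ) = 1/2 := by norm_num
      rw [h12]
      module
    have hle := stepB (x₀ + v) (x₀ - v) (1/2) (by norm_num) (by norm_num)
    rw [← hx] at hle
    exact ne_top_of_le_ne_top
      (ENNReal.mul_ne_top (ENNReal.rpow_ne_top_of_nonneg (by norm_num) hv.1.ne)
        (ENNReal.rpow_ne_top_of_nonneg (by norm_num) hv.2.ne)) hle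
  -- Step E : assemble
  refine ⟨fun x => (K x).toReal, ⟨fun x => ENNReal.toReal_nonneg, ?_⟩, ?_⟩
  · intro x y t ht0 ht1
    rcases eq_or_lt_of_le ht0 with h0 | h0
    · rw [← h0]
      rw [zero_smul, sub_zero, one_smul, zero_add, Real.rpow_zero, Real.rpow_one, one_mul]
    rcases eq_or_lt_of_le ht1 with h1 | h1
    · rw [h1]
      rw [one_smul, sub_self, zero_smul, add_zero, Real.rpow_zero, Real.rpow_one, mul_one]
    · have hle := stepB x y t h0 h1
      have hne : K x ^ t * K y ^ (1 - t) ≠ ⊤ :=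
        ENNReal.mul_ne_top (ENNReal.rpow_ne_top_of_nonneg h0.le (hKfin x))
          (ENNReal.rpow_ne_top_of_nonneg (by linarith) (hKfin y))
      have := ENNReal.toReal_mono hne hle
      rwa [ENNReal.toReal_mul, ← ENNReal.toReal_rpow, ← ENNReal.toReal_rpow] at this
  · funext x
    have hmeas : AEStronglyMeasurable (fun y : Fin n → ℝ => f₁ (x - y) * f₂ y) volume := by
      have h1 : AEStronglyMeasurable (fun y : Fin n → ℝ => f₁ (x - y)) volume := by
        have := hf₁int.1.comp_quasiMeasurePreserving
          (Measure.measurePreserving_sub_left volume x).quasiMeasurePreserving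
        simpa [Function.comp_def] using this
      exact h1.mul hf₂int.1
    have hnn : 0 ≤ᵐ[volume] fun y : Fin n → ℝ => f₁ (x - y) * f₂ y :=
      Filter.Eventually.of_forall fun y => mul_nonneg (hf₁nn _) (hf₂nn _)
    have hconv : convFn f₁ f₂ x = (Φ x).toReal := by
      rw [convFn, integral_eq_lintegral_of_nonneg_ae hnn hmeas, hΦ]
    rw [hconv, stepA x, ENNReal.toReal_mul, ENNReal.toReal_ofReal (hgCpos x).le, hCeq]
end

section
/- Let f_1, f_2 ∈ L¹(ℝ^n, ℝ₊) and suppose f_1 is more log-convex than g_{A_1} for a positive-definite symmetric n×n matrix A_1 > 0. Then, without any further assumptions on f_2, the convolution f_1 ∗ f_2 is more log-convex than g_{A_1}; equivalently, x ↦ e^{(1/2)⟨A_1 x, x⟩} (f_1 ∗ f_2)(x) is log-convex. -/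
open MeasureTheory Matrix
open scoped ENNReal

lemma my_quad_bound {n : ℕ} (A : Matrix (Fin n) (Fin n) ℝ) (v : Fin n → ℝ) (hv : ‖v‖ ≤ 1) :
    v ⬝ᵥ A.mulVec v ≤ ∑ i, ∑ j, |A i j| := by
  have hvi : ∀ i, |v i| ≤ 1 := fun i => le_trans (norm_le_pi_norm v i) hv
  calc v ⬝ᵥ A.mulVec v ≤ |v ⬝ᵥ A.mulVec v| := le_abs_self _
    _ ≤ ∑ i, |v i * A.mulVec v i| := Finset.abs_sum_le_sum_abs _ _
    _ ≤ ∑ i, ∑ j, |A i j| := by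
        refine Finset.sum_le_sum fun i _ => ?_
        rw [abs_mul]
        have h1 : |A.mulVec v i| ≤ ∑ j, |A i j| * |v j| := by
          rw [Matrix.mulVec, dotProduct]
          refine le_trans (Finset.abs_sum_le_sum_abs _ _) ?_
          refine Finset.sum_le_sum fun j _ => ?_
          rw [abs_mul]
        calc |v i| * |A.mulVec v i| ≤ 1 * (∑ j, |A i j| * |v j|) :=
              mul_le_mul (hvi i) h1 (abs_nonneg _) zero_le_one
          _ = ∑ j, |A i j| * |v j| := one_mul _
          _ ≤ ∑ j, |A i j| := by
              refine Finset.sum_le_sum fun j _ => ?_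
              calc |A i j| * |v j| ≤ |A i j| * 1 :=
                    mul_le_mul_of_nonneg_left (hvi j) (abs_nonneg _)
                _ = |A i j| := mul_one _

lemma my_bounded {n : ℕ} (A : Matrix (Fin n) (Fin n) ℝ) (f₁ : (Fin n → ℝ) → ℝ)
    (hint : Integrable f₁) (hnn : ∀ x, 0 ≤ f₁ x) (hf : MoreLogConvexThan A f₁) :
    ∃ M : ℝ, 0 ≤ M ∧ ∀ z, f₁ z ≤ M := by
  obtain ⟨h, ⟨hh0, hhc⟩, hfe⟩ := hf
  set lA : ℝ := (1/2) * ∑ i, ∑ j, |A i j| with hlA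
  -- pointwise averaging inequality
  have key : ∀ z v : Fin n → ℝ, ‖v‖ ≤ 1 →
      f₁ z ≤ Real.exp lA * ((f₁ (z + v) + f₁ (z - v)) / 2) := by
    intro z v hv
    have hmid : (1/2 : ℝ) • (z + v) + (1 - (1/2:ℝ)) • (z - v) = z := by
      have : (1 - (1/2:ℝ)) = (1/2:ℝ) := by norm_num
      rw [this]; module
    have h1 : h z ≤ h (z + v) ^ (1/2:ℝ) * h (z - v) ^ (1 - (1/2:ℝ)) := by
      have := hhc (z + v) (z - v) (1/2) (by norm_num) (by norm_num)
      rwa [hmid] at this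
    rw [show (1 - (1/2:ℝ)) = (1/2:ℝ) by norm_num] at h1
    have hpar : (z+v) ⬝ᵥ A.mulVec (z+v) + (z-v) ⬝ᵥ A.mulVec (z-v)
        = 2*(z ⬝ᵥ A.mulVec z) + 2*(v ⬝ᵥ A.mulVec v) := by
      simp only [Matrix.mulVec_add, Matrix.mulVec_sub, dotProduct_add, dotProduct_sub,
        add_dotProduct, sub_dotProduct]
      ring
    have hgz : gaussFn A z = Real.exp ((1/2) * (v ⬝ᵥ A.mulVec v)) *
        (gaussFn A (z+v) ^ (1/2:ℝ) * gaussFn A (z-v) ^ (1/2:ℝ)) := by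
      simp only [gaussFn, ← Real.exp_mul, ← Real.exp_add]
      congr 1
      nlinarith [hpar]
    have step1 : f₁ z ≤ Real.exp ((1/2) * (v ⬝ᵥ A.mulVec v)) *
        ((gaussFn A (z+v) * h (z+v)) ^ (1/2:ℝ) * (gaussFn A (z-v) * h (z-v)) ^ (1/2:ℝ)) := by
      rw [hfe]
      simp only []
      calc gaussFn A z * h z ≤ gaussFn A z * (h (z+v) ^ (1/2:ℝ) * h (z-v) ^ (1/2:ℝ)) :=
            mul_le_mul_of_nonneg_left h1 (Real.exp_nonneg _)
        _ = Real.exp ((1/2) * (v ⬝ᵥ A.mulVec v)) *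
            ((gaussFn A (z+v) * h (z+v)) ^ (1/2:ℝ) * (gaussFn A (z-v) * h (z-v)) ^ (1/2:ℝ)) := by
            have hg1 : (0:ℝ) ≤ gaussFn A (z+v) := Real.exp_nonneg _
            have hg2 : (0:ℝ) ≤ gaussFn A (z-v) := Real.exp_nonneg _
            rw [Real.mul_rpow hg1 (hh0 _), Real.mul_rpow hg2 (hh0 _), hgz]
            ring
    refine le_trans step1 ?_
    have hamgm : (gaussFn A (z+v) * h (z+v)) ^ (1/2:ℝ) * (gaussFn A (z-v) * h (z-v)) ^ (1/2:ℝ)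
        ≤ ((gaussFn A (z+v) * h (z+v)) + (gaussFn A (z-v) * h (z-v))) / 2 := by
      set a := gaussFn A (z+v) * h (z+v)
      set b := gaussFn A (z-v) * h (z-v)
      have ha : 0 ≤ a := mul_nonneg (Real.exp_nonneg _) (hh0 _)
      have hb : 0 ≤ b := mul_nonneg (Real.exp_nonneg _) (hh0 _)
      rw [← Real.sqrt_eq_rpow, ← Real.sqrt_eq_rpow]
      nlinarith [sq_nonneg (Real.sqrt a - Real.sqrt b), Real.sq_sqrt ha, Real.sq_sqrt hb,
        Real.sqrt_nonneg a, Real.sqrt_nonneg b]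
    have hexple : Real.exp ((1/2) * (v ⬝ᵥ A.mulVec v)) ≤ Real.exp lA := by
      apply Real.exp_le_exp.2
      rw [hlA]
      have := my_quad_bound A v hv
      linarith
    have hsum_eq : (gaussFn A (z+v) * h (z+v)) + (gaussFn A (z-v) * h (z-v))
        = f₁ (z+v) + f₁ (z-v) := by rw [hfe]
    calc Real.exp ((1/2) * (v ⬝ᵥ A.mulVec v)) *
          ((gaussFn A (z+v) * h (z+v)) ^ (1/2:ℝ) * (gaussFn A (z-v) * h (z-v)) ^ (1/2:ℝ))
        ≤ Real.exp ((1/2) * (v ⬝ᵥ A.mulVec v)) *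
          (((gaussFn A (z+v) * h (z+v)) + (gaussFn A (z-v) * h (z-v))) / 2) :=
          mul_le_mul_of_nonneg_left hamgm (Real.exp_nonneg _)
      _ ≤ Real.exp lA * (((gaussFn A (z+v) * h (z+v)) + (gaussFn A (z-v) * h (z-v))) / 2) := by
          apply mul_le_mul_of_nonneg_right hexple
          have := mul_nonneg (Real.exp_nonneg (-(1/2) * ((z+v) ⬝ᵥ A.mulVec (z+v)))) (hh0 (z+v))
          have := mul_nonneg (Real.exp_nonneg (-(1/2) * ((z-v) ⬝ᵥ A.mulVec (z-v)))) (hh0 (z-v))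
          simp only [gaussFn] at *
          linarith
      _ = Real.exp lA * ((f₁ (z+v) + f₁ (z-v)) / 2) := by rw [hsum_eq]
  -- integrate over the unit ball
  set B : Set (Fin n → ℝ) := Metric.closedBall 0 1 with hB
  have hBmeas : MeasurableSet B := measurableSet_closedBall
  have hBpos : (0:ℝ≥0∞) < volume B := Metric.measure_closedBall_pos _ _ one_pos
  have hBfin : volume B ≠ ⊤ := measure_closedBall_lt_top.ne
  have hmeas : AEMeasurable (fun x => ENNReal.ofReal (f₁ x)) volume :=
    hint.aestronglyMeasurable.aemeasurable.ennreal_ofReal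
  have key2 : ∀ z, volume B * ENNReal.ofReal (f₁ z)
      ≤ ENNReal.ofReal (Real.exp lA) * ENNReal.ofReal (∫ x, f₁ x) := by
    intro z
    have hma : AEMeasurable (fun v => ENNReal.ofReal (f₁ (z + v))) volume :=
      hmeas.comp_quasiMeasurePreserving
        (measurePreserving_add_left volume z).quasiMeasurePreserving
    calc volume B * ENNReal.ofReal (f₁ z)
        = ∫⁻ _ in B, ENNReal.ofReal (f₁ z) := by rw [setLIntegral_const]; ring
      _ ≤ ∫⁻ v in B, (ENNReal.ofReal (Real.exp lA * (1/2)) *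
            (ENNReal.ofReal (f₁ (z + v)) + ENNReal.ofReal (f₁ (z - v)))) := by
          apply lintegral_mono_ae
          rw [ae_restrict_iff' hBmeas]
          refine ae_of_all _ fun v hv => ?_
          have hv1 : ‖v‖ ≤ 1 := by rwa [hB, Metric.mem_closedBall, dist_zero_right] at hv
          calc ENNReal.ofReal (f₁ z)
              ≤ ENNReal.ofReal (Real.exp lA * ((f₁ (z+v) + f₁ (z-v))/2)) :=
                ENNReal.ofReal_le_ofReal (key z v hv1)
            _ = _ := by
                rw [show Real.exp lA * ((f₁ (z+v) + f₁ (z-v))/2)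
                    = (Real.exp lA * (1/2)) * (f₁ (z+v) + f₁ (z-v)) by ring,
                  ENNReal.ofReal_mul (by positivity), ENNReal.ofReal_add (hnn _) (hnn _)]
      _ = ENNReal.ofReal (Real.exp lA * (1/2)) *
            ((∫⁻ v in B, ENNReal.ofReal (f₁ (z + v))) + ∫⁻ v in B, ENNReal.ofReal (f₁ (z - v))) := by
          rw [lintegral_const_mul' _ _ ENNReal.ofReal_ne_top,
            lintegral_add_left' (hma.restrict)]
      _ ≤ ENNReal.ofReal (Real.exp lA * (1/2)) *
            ((∫⁻ v, ENNReal.ofReal (f₁ (z + v))) + ∫⁻ v, ENNReal.ofReal (f₁ (z - v))) :=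
          mul_le_mul_of_nonneg_left (add_le_add (setLIntegral_le_lintegral _ _)
            (setLIntegral_le_lintegral _ _)) zero_le
      _ = ENNReal.ofReal (Real.exp lA * (1/2)) * (2 * ENNReal.ofReal (∫ x, f₁ x)) := by
          rw [lintegral_add_left_eq_self (fun x => ENNReal.ofReal (f₁ x)) z,
            (Measure.measurePreserving_sub_left volume z).lintegral_comp_emb
              (MeasurableEquiv.subLeft z).measurableEmbedding (fun x => ENNReal.ofReal (f₁ x)),
            ← ofReal_integral_eq_lintegral_ofReal hint (ae_of_all _ hnn), two_mul]
      _ = ENNReal.ofReal (Real.exp lA) * ENNReal.ofReal (∫ x, f₁ x) := by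
          rw [← mul_assoc, show (2:ℝ≥0∞) = ENNReal.ofReal 2 by simp,
            ← ENNReal.ofReal_mul (by positivity)]
          congr 1
          ring_nf
  set C : ℝ≥0∞ := (ENNReal.ofReal (Real.exp lA) * ENNReal.ofReal (∫ x, f₁ x)) / volume B with hC
  have hCfin : C ≠ ⊤ :=
    (ENNReal.div_lt_top (ENNReal.mul_ne_top ENNReal.ofReal_ne_top ENNReal.ofReal_ne_top)
      hBpos.ne').ne
  refine ⟨C.toReal, ENNReal.toReal_nonneg, fun z => ?_⟩
  have h1 : ENNReal.ofReal (f₁ z) ≤ C := by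
    rw [hC, ENNReal.le_div_iff_mul_le (Or.inl hBpos.ne') (Or.inl hBfin), mul_comm]
    exact key2 z
  have h2 := ENNReal.toReal_mono hCfin h1
  rwa [ENNReal.toReal_ofReal (hnn z)] at h2


lemma my_key {n : ℕ} (f₁ f₂ : (Fin n → ℝ) → ℝ) (hf₁int : Integrable f₁)
    (hf₂int : Integrable f₂)
    (hf₁nn : ∀ x, 0 ≤ f₁ x) (hf₂nn : ∀ x, 0 ≤ f₂ x)
    (A₁ : Matrix (Fin n) (Fin n) ℝ)
    (hf₁ : MoreLogConvexThan A₁ f₁) :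
    IsLogConvex (fun x => Real.exp ((1/2 : ℝ) * (x ⬝ᵥ A₁.mulVec x)) * convFn f₁ f₂ x) := by
  obtain ⟨M, hM0, hMb⟩ := my_bounded A₁ f₁ hf₁int hf₁nn hf₁
  obtain ⟨h, ⟨hh0, hhc⟩, hfe⟩ := hf₁
  have hint : ∀ x, Integrable (fun y => f₁ (x - y) * f₂ y) := by
    intro x
    have hm : AEStronglyMeasurable (fun y => f₁ (x - y)) volume :=
      hf₁int.aestronglyMeasurable.comp_quasiMeasurePreserving
        (Measure.measurePreserving_sub_left volume x).quasiMeasurePreserving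
    refine Integrable.mono' (hf₂int.const_mul M) (hm.mul hf₂int.aestronglyMeasurable)
      (ae_of_all _ fun y => ?_)
    rw [Real.norm_eq_abs, abs_mul, abs_of_nonneg (hf₁nn _), abs_of_nonneg (hf₂nn _)]
    exact mul_le_mul_of_nonneg_right (hMb _) (hf₂nn y)
  have hconvnn : ∀ x, 0 ≤ convFn f₁ f₂ x := fun x =>
    integral_nonneg fun y => mul_nonneg (hf₁nn _) (hf₂nn _)
  set c : (Fin n → ℝ) → ℝ := fun z => Real.exp ((1/2 : ℝ) * (z ⬝ᵥ A₁.mulVec z)) with hc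
  have hcnn : ∀ z, 0 ≤ c z := fun z => Real.exp_nonneg _
  set P : (Fin n → ℝ) → (Fin n → ℝ) → ℝ := fun z w => c z * (f₁ (z - w) * f₂ w) with hP
  have hPnn : ∀ z w, 0 ≤ P z w := fun z w =>
    mul_nonneg (hcnn z) (mul_nonneg (hf₁nn _) (hf₂nn _))
  have hPint : ∀ z, Integrable (P z) := fun z => (hint z).const_mul _
  have hlint : ∀ z, (∫⁻ w, ENNReal.ofReal (P z w)) = ENNReal.ofReal (c z * convFn f₁ f₂ z) := by
    intro z
    rw [← ofReal_integral_eq_lintegral_ofReal (hPint z) (ae_of_all _ (hPnn z))]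
    congr 1
    rw [hP]
    exact integral_const_mul _ _
  set e : (Fin n → ℝ) → (Fin n → ℝ) → ℝ := fun z w =>
    (1/2)*(z ⬝ᵥ A₁.mulVec z) - (1/2)*((z - w) ⬝ᵥ A₁.mulVec (z - w)) with he
  have hPform : ∀ z w, P z w = Real.exp (e z w) * (h (z - w) * f₂ w) := by
    intro z w
    rw [hP, hfe]
    simp only [hc, he, gaussFn]
    rw [show Real.exp (1/2 * (z ⬝ᵥ A₁.mulVec z)) *
        (Real.exp (-(1/2) * ((z-w) ⬝ᵥ A₁.mulVec (z-w))) * h (z-w) * f₂ w)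
        = (Real.exp (1/2 * (z ⬝ᵥ A₁.mulVec z)) *
          Real.exp (-(1/2) * ((z-w) ⬝ᵥ A₁.mulVec (z-w)))) * (h (z-w) * f₂ w) by ring,
      ← Real.exp_add]
    congr 2
    ring
  -- pointwise log-convexity of the integrand
  have hptw : ∀ x y : Fin n → ℝ, ∀ t : ℝ, 0 < t → t < 1 → ∀ w,
      P (t • x + (1-t) • y) w ≤ P x w ^ t * P y w ^ (1-t) := by
    intro x y t ht0 ht1 w
    have ht1' : (0:ℝ) ≤ 1 - t := by linarith
    have hEaff : e (t • x + (1-t) • y) w = t * e x w + (1-t) * e y w := by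
      simp only [he, Matrix.mulVec_add, Matrix.mulVec_sub, Matrix.mulVec_smul, dotProduct_add,
        dotProduct_sub, add_dotProduct, sub_dotProduct, smul_dotProduct, dotProduct_smul,
        smul_eq_mul]
      ring
    have hmw : (t • x + (1-t) • y) - w = t • (x - w) + (1-t) • (y - w) := by module
    have hhle : h ((t • x + (1-t) • y) - w) ≤ h (x-w) ^ t * h (y-w) ^ (1-t) := by
      rw [hmw]; exact hhc (x-w) (y-w) t ht0.le (by linarith)
    rcases (hf₂nn w).eq_or_lt with hw | hw
    · have hz : P (t • x + (1-t) • y) w = 0 := by rw [hPform, ← hw]; ring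
      rw [hz]
      exact mul_nonneg (Real.rpow_nonneg (hPnn x w) t) (Real.rpow_nonneg (hPnn y w) _)
    · rw [hPform, hPform, hPform]
      have key_eq : (Real.exp (e x w) * (h (x-w) * f₂ w)) ^ t *
          (Real.exp (e y w) * (h (y-w) * f₂ w)) ^ (1-t)
          = Real.exp (e (t • x + (1-t) • y) w) * ((h (x-w) ^ t * h (y-w) ^ (1-t)) * f₂ w) := by
        rw [Real.mul_rpow (Real.exp_nonneg _) (mul_nonneg (hh0 _) (hf₂nn _)),
          Real.mul_rpow (Real.exp_nonneg _) (mul_nonneg (hh0 _) (hf₂nn _)),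
          Real.mul_rpow (hh0 _) (hf₂nn _), Real.mul_rpow (hh0 _) (hf₂nn _),
          ← Real.exp_mul, ← Real.exp_mul, hEaff,
          show t * e x w + (1-t) * e y w = e x w * t + e y w * (1-t) by ring, Real.exp_add]
        have hf2 : f₂ w ^ t * f₂ w ^ (1-t) = f₂ w := by rw [← Real.rpow_add hw]; norm_num
        linear_combination (Real.exp (e x w * t) * Real.exp (e y w * (1-t)) *
          (h (x-w) ^ t) * (h (y-w) ^ (1-t))) * hf2
      rw [key_eq]
      exact mul_le_mul_of_nonneg_left (mul_le_mul_of_nonneg_right hhle (hf₂nn w))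
        (Real.exp_nonneg _)
  -- main inequality via Hoelder
  constructor
  · exact fun x => mul_nonneg (Real.exp_nonneg _) (hconvnn x)
  intro x y t ht0 ht1
  rcases eq_or_lt_of_le ht0 with rfl | ht0'
  · simp
  rcases eq_or_lt_of_le ht1 with rfl | ht1'
  · simp
  set m := t • x + (1-t) • y with hm
  have hconj : Real.HolderConjugate (1/t) (1/(1-t)) := by
    rw [Real.holderConjugate_iff]
    constructor
    · rw [lt_div_iff₀ ht0', one_mul]; exact ht1'
    · simp only [one_div, inv_inv]; ring
  have hmx : AEMeasurable (fun w => ENNReal.ofReal (P x w)) volume :=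
    (hPint x).aestronglyMeasurable.aemeasurable.ennreal_ofReal
  have hmy : AEMeasurable (fun w => ENNReal.ofReal (P y w)) volume :=
    (hPint y).aestronglyMeasurable.aemeasurable.ennreal_ofReal
  have holder := ENNReal.lintegral_mul_le_Lp_mul_Lq volume hconj
    (hmx.pow_const t) (hmy.pow_const (1-t))
  simp only [Pi.mul_apply, ← ENNReal.rpow_mul, mul_one_div_cancel ht0'.ne',
    mul_one_div_cancel (show (1:ℝ) - t ≠ 0 by linarith), one_div_one_div,
    ENNReal.rpow_one] at holder
  have step : ENNReal.ofReal (c m * convFn f₁ f₂ m)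
      ≤ ENNReal.ofReal (c x * convFn f₁ f₂ x) ^ t *
        ENNReal.ofReal (c y * convFn f₁ f₂ y) ^ (1-t) := by
    calc ENNReal.ofReal (c m * convFn f₁ f₂ m) = ∫⁻ w, ENNReal.ofReal (P m w) := (hlint m).symm
      _ ≤ ∫⁻ w, (ENNReal.ofReal (P x w) ^ t * ENNReal.ofReal (P y w) ^ (1-t)) := by
          refine lintegral_mono fun w => ?_
          calc ENNReal.ofReal (P m w) ≤ ENNReal.ofReal (P x w ^ t * P y w ^ (1-t)) :=
                ENNReal.ofReal_le_ofReal (hptw x y t ht0' ht1' w)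
            _ = ENNReal.ofReal (P x w) ^ t * ENNReal.ofReal (P y w) ^ (1-t) := by
                rw [ENNReal.ofReal_mul (Real.rpow_nonneg (hPnn x w) t),
                  ENNReal.ofReal_rpow_of_nonneg (hPnn x w) ht0'.le,
                  ENNReal.ofReal_rpow_of_nonneg (hPnn y w) (by linarith)]
      _ ≤ (∫⁻ w, ENNReal.ofReal (P x w)) ^ t * (∫⁻ w, ENNReal.ofReal (P y w)) ^ (1-t) := holder
      _ = _ := by rw [hlint x, hlint y]
  have hRnn : 0 ≤ (c x * convFn f₁ f₂ x) ^ t * (c y * convFn f₁ f₂ y) ^ (1-t) :=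
    mul_nonneg (Real.rpow_nonneg (mul_nonneg (hcnn x) (hconvnn x)) t)
      (Real.rpow_nonneg (mul_nonneg (hcnn y) (hconvnn y)) _)
  show c m * convFn f₁ f₂ m ≤ (c x * convFn f₁ f₂ x) ^ t * (c y * convFn f₁ f₂ y) ^ (1-t)
  rw [ENNReal.ofReal_rpow_of_nonneg (mul_nonneg (hcnn x) (hconvnn x)) ht0'.le,
    ENNReal.ofReal_rpow_of_nonneg (mul_nonneg (hcnn y) (hconvnn y))
      (show (0:ℝ) ≤ 1 - t by linarith),
    ← ENNReal.ofReal_mul (Real.rpow_nonneg (mul_nonneg (hcnn x) (hconvnn x)) t)] at step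
  exact (ENNReal.ofReal_le_ofReal_iff hRnn).1 step


/-- If `f₁ ∈ L¹(ℝ^n, ℝ₊)` is more log-convex than `g_{A₁}`, `A₁ > 0`, then without any
further assumptions on `f₂ ∈ L¹(ℝ^n, ℝ₊)`, the convolution `f₁ ∗ f₂` is also more log-convex
than `g_{A₁}`; equivalently, `x ↦ e^{(1/2)⟨A₁x,x⟩}(f₁ ∗ f₂)(x)` is log-convex. -/
theorem convolution_more_log_convex_one_sided (n : ℕ)
    (f₁ f₂ : (Fin n → ℝ) → ℝ) (hf₁int : Integrable f₁) (hf₂int : Integrable f₂)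
    (hf₁nn : ∀ x, 0 ≤ f₁ x) (hf₂nn : ∀ x, 0 ≤ f₂ x)
    (A₁ : Matrix (Fin n) (Fin n) ℝ) (hA₁ : A₁.PosDef)
    (hf₁ : MoreLogConvexThan A₁ f₁) :
    MoreLogConvexThan A₁ (convFn f₁ f₂) ∧
      IsLogConvex (fun x => Real.exp ((1/2 : ℝ) * (x ⬝ᵥ A₁.mulVec x)) * convFn f₁ f₂ x) := by
  have key := my_key f₁ f₂ hf₁int hf₂int hf₁nn hf₂nn A₁ hf₁
  refine ⟨⟨fun x => Real.exp ((1/2 : ℝ) * (x ⬝ᵥ A₁.mulVec x)) * convFn f₁ f₂ x, key, ?_⟩, key⟩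
  funext x
  simp only [gaussFn]
  rw [← mul_assoc, ← Real.exp_add,
    show -(1/2:ℝ) * (x ⬝ᵥ A₁.mulVec x) + (1/2) * (x ⬝ᵥ A₁.mulVec x) = 0 by ring,
    Real.exp_zero, one_mul]
end

section
/- Fix an N×N real symmetric matrix Q, c_1,…,c_m > 0, and m-tuples of symmetric matrices A = (A_1,…,A_m), B = (B_1,…,B_m) with 0 < A_i ≤ B_i for all i. If f = (f_1,…,f_m) ∈ F_{A,B}, then BL(f)² ≥ I_{A,B} · BL(Conv f), where Conv f = (Conv f_1,…,Conv f_m) and Conv f_i(x) := 2^{n_i/2} (f_i ∗ f_i)(√2 x). -/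
open MeasureTheory Matrix Filter

/-- A nonnegative function is log-concave if
`f(tx + (1-t)y) ≥ f(x)^t f(y)^(1-t)` for all `x, y` and `t ∈ [0,1]`. -/
def IsLogConcave {ι : Type*} (f : (ι → ℝ) → ℝ) : Prop :=
  (∀ x, 0 ≤ f x) ∧ ∀ x y : ι → ℝ, ∀ t : ℝ, 0 ≤ t → t ≤ 1 →
    f x ^ t * f y ^ (1 - t) ≤ f (t • x + (1 - t) • y)

/-- `f` is more log-concave than `g_A` if `f = g_A ⬝ h` with `h` log-concave. -/
def MoreLogConcaveThan {ι : Type*} [Fintype ι] (A : Matrix ι ι ℝ) (f : (ι → ℝ) → ℝ) : Prop :=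
  ∃ h : (ι → ℝ) → ℝ, IsLogConcave h ∧ f = fun x => gaussFn A x * h x

/-- The Brascamp–Lieb functional
`BL(f) = (∫ e^{-(1/2)⟨Qx,x⟩} ∏ f_i(x_i)^{c_i} dx) / ∏ (∫ f_i)^{c_i}`. -/
noncomputable def BL {m : ℕ} {n : Fin m → ℕ}
    (Q : Matrix ((i : Fin m) × Fin (n i)) ((i : Fin m) × Fin (n i)) ℝ)
    (c : Fin m → ℝ) (f : ∀ i, (Fin (n i) → ℝ) → ℝ) : ℝ :=
  (∫ x : ((i : Fin m) × Fin (n i)) → ℝ,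
      Real.exp (-(1/2 : ℝ) * (x ⬝ᵥ Q.mulVec x)) * ∏ i, f i (fun j => x ⟨i, j⟩) ^ c i) /
    ∏ i, (∫ y : Fin (n i) → ℝ, f i y) ^ c i

/-- `f ∈ F_A`: each `f_i ∈ L¹(ℝ^{n_i}, ℝ₊)` is even, non-zero, and more log-concave
than `g_{A_i}`. -/
def memFA {m : ℕ} {n : Fin m → ℕ} (A : ∀ i, Matrix (Fin (n i)) (Fin (n i)) ℝ)
    (f : ∀ i, (Fin (n i) → ℝ) → ℝ) : Prop :=
  ∀ i, Integrable (f i) ∧ (∀ x, 0 ≤ f i x) ∧ (∀ x, f i (-x) = f i x) ∧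
    (0 < ∫ x : Fin (n i) → ℝ, f i x) ∧ MoreLogConcaveThan (A i) (f i)

/-- `f ∈ F_{A,B}`: each `f_i ∈ L¹(ℝ^{n_i}, ℝ₊)` is even, non-zero, more log-concave
than `g_{A_i}` and more log-convex than `g_{B_i}`. -/
def memFAB {m : ℕ} {n : Fin m → ℕ} (A B : ∀ i, Matrix (Fin (n i)) (Fin (n i)) ℝ)
    (f : ∀ i, (Fin (n i) → ℝ) → ℝ) : Prop :=
  memFA A f ∧ ∀ i, MoreLogConvexThan (B i) (f i)

section Helpers

open Matrix

variable {ι : Type*} [Fintype ι]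

lemma gaussFn_pos (A : Matrix ι ι ℝ) (x : ι → ℝ) : 0 < gaussFn A x := Real.exp_pos _

lemma quad_par (A : Matrix ι ι ℝ) (x y : ι → ℝ) :
    (x + y) ⬝ᵥ A.mulVec (x + y) + (x - y) ⬝ᵥ A.mulVec (x - y)
      = 2 * (x ⬝ᵥ A.mulVec x) + 2 * (y ⬝ᵥ A.mulVec y) := by
  simp only [Matrix.mulVec_add, Matrix.mulVec_sub, add_dotProduct,
    sub_dotProduct, dotProduct_add, dotProduct_sub]
  ring

lemma quad_smul (A : Matrix ι ι ℝ) (c : ℝ) (x : ι → ℝ) :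
    (c • x) ⬝ᵥ A.mulVec (c • x) = c ^ 2 * (x ⬝ᵥ A.mulVec x) := by
  simp only [Matrix.mulVec_smul, smul_dotProduct, dotProduct_smul, smul_eq_mul]
  ring

/-- key quadratic identity for the rotation. -/
lemma quad_rot (A : Matrix ι ι ℝ) (x y : ι → ℝ) :
    ((Real.sqrt 2)⁻¹ • (x + y)) ⬝ᵥ A.mulVec ((Real.sqrt 2)⁻¹ • (x + y))
      + ((Real.sqrt 2)⁻¹ • (x - y)) ⬝ᵥ A.mulVec ((Real.sqrt 2)⁻¹ • (x - y))
      = x ⬝ᵥ A.mulVec x + y ⬝ᵥ A.mulVec y := by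
  rw [quad_smul, quad_smul, ← mul_add, quad_par]
  have h : ((Real.sqrt 2)⁻¹ : ℝ) ^ 2 = 1 / 2 := by
    rw [sq, ← mul_inv, Real.mul_self_sqrt (by norm_num)]
    norm_num
  rw [h]; ring

end Helpers

section LogConc

variable {ι : Type*} [Fintype ι]

lemma IsLogConcave.mul {h₁ h₂ : (ι → ℝ) → ℝ} (H₁ : IsLogConcave h₁) (H₂ : IsLogConcave h₂) :
    IsLogConcave (fun x => h₁ x * h₂ x) := by
  refine ⟨fun x => mul_nonneg (H₁.1 x) (H₂.1 x), fun x y t ht0 ht1 => ?_⟩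
  calc (h₁ x * h₂ x) ^ t * (h₁ y * h₂ y) ^ (1 - t)
      = (h₁ x ^ t * h₁ y ^ (1 - t)) * (h₂ x ^ t * h₂ y ^ (1 - t)) := by
        rw [Real.mul_rpow (H₁.1 x) (H₂.1 x), Real.mul_rpow (H₁.1 y) (H₂.1 y)]; ring
    _ ≤ _ := mul_le_mul (H₁.2 x y t ht0 ht1) (H₂.2 x y t ht0 ht1)
        (mul_nonneg (Real.rpow_nonneg (H₂.1 x) _) (Real.rpow_nonneg (H₂.1 y) _))
        (le_trans (mul_nonneg (Real.rpow_nonneg (H₁.1 x) _) (Real.rpow_nonneg (H₁.1 y) _))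
          (H₁.2 x y t ht0 ht1))

lemma IsLogConvex.mul {h₁ h₂ : (ι → ℝ) → ℝ} (H₁ : IsLogConvex h₁) (H₂ : IsLogConvex h₂) :
    IsLogConvex (fun x => h₁ x * h₂ x) := by
  refine ⟨fun x => mul_nonneg (H₁.1 x) (H₂.1 x), fun x y t ht0 ht1 => ?_⟩
  calc h₁ (t • x + (1 - t) • y) * h₂ (t • x + (1 - t) • y)
      ≤ (h₁ x ^ t * h₁ y ^ (1 - t)) * (h₂ x ^ t * h₂ y ^ (1 - t)) :=
        mul_le_mul (H₁.2 x y t ht0 ht1) (H₂.2 x y t ht0 ht1) (H₂.1 _)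
          (mul_nonneg (Real.rpow_nonneg (H₁.1 x) _) (Real.rpow_nonneg (H₁.1 y) _))
    _ = (h₁ x * h₂ x) ^ t * (h₁ y * h₂ y) ^ (1 - t) := by
        rw [Real.mul_rpow (H₁.1 x) (H₂.1 x), Real.mul_rpow (H₁.1 y) (H₂.1 y)]; ring

lemma IsLogConcave.comp_affine {h : (ι → ℝ) → ℝ} (H : IsLogConcave h) (σ : ℝ) (b : ι → ℝ) :
    IsLogConcave (fun x => h (σ • x + b)) := by
  refine ⟨fun x => H.1 _, fun x y t ht0 ht1 => ?_⟩
  have : σ • (t • x + (1 - t) • y) + b = t • (σ • x + b) + (1 - t) • (σ • y + b) := by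
    simp only [smul_add, smul_smul]
    module
  beta_reduce
  rw [this]
  exact H.2 _ _ t ht0 ht1

lemma IsLogConvex.comp_affine {h : (ι → ℝ) → ℝ} (H : IsLogConvex h) (σ : ℝ) (b : ι → ℝ) :
    IsLogConvex (fun x => h (σ • x + b)) := by
  refine ⟨fun x => H.1 _, fun x y t ht0 ht1 => ?_⟩
  have : σ • (t • x + (1 - t) • y) + b = t • (σ • x + b) + (1 - t) • (σ • y + b) := by
    simp only [smul_add, smul_smul]
    module
  beta_reduce
  rw [this]
  exact H.2 _ _ t ht0 ht1

lemma IsLogConcave.const_mul {h : (ι → ℝ) → ℝ} (H : IsLogConcave h) {k : ℝ} (hk : 0 < k) :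
    IsLogConcave (fun x => k * h x) := by
  refine ⟨fun x => mul_nonneg hk.le (H.1 x), fun x y t ht0 ht1 => ?_⟩
  have hkk : k ^ t * k ^ (1 - t) = k := by
    rw [← Real.rpow_add hk]; simp
  calc (k * h x) ^ t * (k * h y) ^ (1 - t)
      = k * (h x ^ t * h y ^ (1 - t)) := by
        rw [Real.mul_rpow hk.le (H.1 x), Real.mul_rpow hk.le (H.1 y)]
        rw [show k ^ t * h x ^ t * (k ^ (1 - t) * h y ^ (1 - t))
          = (k ^ t * k ^ (1 - t)) * (h x ^ t * h y ^ (1 - t)) by ring, hkk]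
    _ ≤ k * h (t • x + (1 - t) • y) :=
        mul_le_mul_of_nonneg_left (H.2 x y t ht0 ht1) hk.le

lemma IsLogConvex.const_mul {h : (ι → ℝ) → ℝ} (H : IsLogConvex h) {k : ℝ} (hk : 0 < k) :
    IsLogConvex (fun x => k * h x) := by
  refine ⟨fun x => mul_nonneg hk.le (H.1 x), fun x y t ht0 ht1 => ?_⟩
  have hkk : k ^ t * k ^ (1 - t) = k := by
    rw [← Real.rpow_add hk]; simp
  calc k * h (t • x + (1 - t) • y)
      ≤ k * (h x ^ t * h y ^ (1 - t)) :=
        mul_le_mul_of_nonneg_left (H.2 x y t ht0 ht1) hk.le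
    _ = (k * h x) ^ t * (k * h y) ^ (1 - t) := by
        rw [Real.mul_rpow hk.le (H.1 x), Real.mul_rpow hk.le (H.1 y)]
        rw [show k ^ t * h x ^ t * (k ^ (1 - t) * h y ^ (1 - t))
          = (k ^ t * k ^ (1 - t)) * (h x ^ t * h y ^ (1 - t)) by ring, hkk]

/-- `g_A` is log-concave when `A` is positive semidefinite. -/
lemma isLogConcave_gaussFn {A : Matrix ι ι ℝ} (hA : A.PosSemidef) :
    IsLogConcave (gaussFn A) := by
  refine ⟨fun x => (gaussFn_pos A x).le, fun x y t ht0 ht1 => ?_⟩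
  unfold gaussFn
  rw [← Real.exp_log (Real.rpow_pos_of_pos (Real.exp_pos _) t),
    ← Real.exp_log (Real.rpow_pos_of_pos (Real.exp_pos _) (1 - t)), ← Real.exp_add]
  apply Real.exp_le_exp.2
  rw [Real.log_rpow (Real.exp_pos _), Real.log_rpow (Real.exp_pos _), Real.log_exp, Real.log_exp]
  have key : t * (x ⬝ᵥ A.mulVec x) + (1 - t) * (y ⬝ᵥ A.mulVec y)
      - ((t • x + (1 - t) • y) ⬝ᵥ A.mulVec (t • x + (1 - t) • y))
      = t * (1 - t) * ((x - y) ⬝ᵥ A.mulVec (x - y)) := by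
    simp only [Matrix.mulVec_add, Matrix.mulVec_sub, Matrix.mulVec_smul,
      add_dotProduct, sub_dotProduct, dotProduct_add,
      dotProduct_sub, smul_dotProduct, dotProduct_smul, smul_eq_mul]
    ring
  have hpos : 0 ≤ (x - y) ⬝ᵥ A.mulVec (x - y) := by
    have := hA.dotProduct_mulVec_nonneg (x - y)
    simpa using this
  nlinarith [mul_nonneg (mul_nonneg ht0 (by linarith : (0:ℝ) ≤ 1 - t)) hpos]

end LogConc

section Pos

variable {ι : Type*} [Fintype ι]

/-- A function that is more log-convex than a Gaussian and has positive integral is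
everywhere positive. -/
lemma pos_of_moreLogConvex {B : Matrix ι ι ℝ} {f : (ι → ℝ) → ℝ}
    (hB : MoreLogConvexThan B f) (hnn : ∀ x, 0 ≤ f x)
    (hint : 0 < ∫ x : ι → ℝ, f x) : ∀ x, 0 < f x := by
  obtain ⟨h, hh, hfe⟩ := hB
  by_contra hcon
  push_neg at hcon
  obtain ⟨x₀, hx₀⟩ := hcon
  have hfx₀ : f x₀ = 0 := le_antisymm hx₀ (hnn x₀)
  have hhx₀ : h x₀ = 0 := by
    by_contra hne
    have : 0 < h x₀ := lt_of_le_of_ne (hh.1 x₀) (Ne.symm hne)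
    have := mul_pos (gaussFn_pos B x₀) this
    rw [hfe] at hfx₀
    simp only at hfx₀
    linarith
  have hzero : ∀ z, h z = 0 := by
    intro z
    have key := hh.2 x₀ ((2:ℝ) • z - x₀) (1/2) (by norm_num) (by norm_num)
    have heq : (1/2 : ℝ) • x₀ + (1 - 1/2 : ℝ) • ((2:ℝ) • z - x₀) = z := by
      norm_num
      module
    rw [heq, hhx₀, Real.zero_rpow (by norm_num)] at key
    simp only [zero_mul] at key
    exact le_antisymm key (hh.1 z)
  have : f = fun _ => 0 := by
    funext z
    rw [hfe]
    simp [hzero z]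
  rw [this] at hint
  simp at hint

/-- An even log-concave(-decomposable) nonnegative function attains its max at 0. -/
lemma le_apply_zero_of_even {A : Matrix ι ι ℝ} {f : (ι → ℝ) → ℝ}
    (hA : A.PosSemidef) (hf : MoreLogConcaveThan A f) (hnn : ∀ x, 0 ≤ f x)
    (heven : ∀ x, f (-x) = f x) : ∀ x, f x ≤ f 0 := by
  obtain ⟨h, hh, hfe⟩ := hf
  have hflc : IsLogConcave f := by
    rw [hfe]; exact (isLogConcave_gaussFn hA).mul hh
  intro x
  rcases eq_or_lt_of_le (hnn x) with h0 | hpos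
  · rw [← h0]; exact hnn 0
  have key := hflc.2 x (-x) (1/2) (by norm_num) (by norm_num)
  have heq : (1/2 : ℝ) • x + (1 - 1/2 : ℝ) • (-x) = 0 := by
    module
  rw [heq, heven] at key
  calc f x = f x ^ ((1:ℝ)/2) * f x ^ (1 - (1:ℝ)/2) := by
        rw [← Real.rpow_add hpos]; norm_num
    _ ≤ f 0 := by norm_num at key ⊢; exact key
  
end Pos

section IntLemmas

variable {ι : Type*} [Fintype ι]

lemma integrable_comp_affine {f : (ι → ℝ) → ℝ} (hf : Integrable f)
    {σ : ℝ} (hσ : σ ≠ 0) (b : ι → ℝ) :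
    Integrable (fun u : ι → ℝ => f (σ • (u + b))) := by
  have h1 : Integrable (fun u : ι → ℝ => f (u + σ • b)) := hf.comp_add_right (σ • b)
  have h2 : Integrable (fun u : ι → ℝ => f (σ • u + σ • b)) := h1.comp_smul hσ
  simpa [smul_add] using h2

lemma sqrt_two_pow_card : (Real.sqrt 2) ^ (Fintype.card ι) = (2:ℝ) ^ ((Fintype.card ι : ℝ)/2) := by
  rw [Real.sqrt_eq_rpow, ← Real.rpow_natCast ((2:ℝ) ^ ((1:ℝ)/2)) (Fintype.card ι),
    ← Real.rpow_mul (by norm_num)]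
  ring_nf

/-- The integral of `u ↦ f((u+v)/√2) f((u-v)/√2)` equals `2^{d/2} (f ∗ f)(√2 v)`. -/
lemma integral_shift_pair {f : (ι → ℝ) → ℝ} (heven : ∀ x, f (-x) = f x) (v : ι → ℝ) :
    ∫ u : ι → ℝ, f ((Real.sqrt 2)⁻¹ • (u + v)) * f ((Real.sqrt 2)⁻¹ • (u - v))
      = (2:ℝ) ^ ((Fintype.card ι : ℝ)/2) * convFn f f (Real.sqrt 2 • v) := by
  have hs2 : Real.sqrt 2 ≠ 0 := by positivity
  set c : ℝ := (Real.sqrt 2)⁻¹ with hc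
  set g : (ι → ℝ) → ℝ := fun u => f (c • (u + v)) * f (c • (u - v)) with hg
  have h1 : ∫ u, g (Real.sqrt 2 • u)
      = |((Real.sqrt 2) ^ (Fintype.card ι))⁻¹| • ∫ u, g u := by
    rw [Measure.integral_comp_smul volume g (Real.sqrt 2), Module.finrank_pi]
  have habs : |((Real.sqrt 2) ^ (Fintype.card ι))⁻¹| = ((Real.sqrt 2) ^ (Fintype.card ι))⁻¹ := by
    rw [abs_of_pos]; positivity
  have h2 : ∀ u, g (Real.sqrt 2 • u) = f (u + c • v) * f (u - c • v) := by
    intro u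
    have e1 : c • (Real.sqrt 2 • u + v) = u + c • v := by
      rw [hc, smul_add, smul_smul, inv_mul_cancel₀ hs2, one_smul]
    have e2 : c • (Real.sqrt 2 • u - v) = u - c • v := by
      rw [hc, smul_sub, smul_smul, inv_mul_cancel₀ hs2, one_smul]
    rw [hg]; simp only [e1, e2]
  have key : (Real.sqrt 2 : ℝ) = (Real.sqrt 2)⁻¹ + (Real.sqrt 2)⁻¹ := by
    have h2' : Real.sqrt 2 * Real.sqrt 2 = 2 := Real.mul_self_sqrt (by norm_num)
    field_simp
    linarith
  have h3 : (∫ u, f (u + c • v) * f (u - c • v))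
      = ∫ u, f (u + Real.sqrt 2 • v) * f u := by
    rw [← integral_sub_right_eq_self (fun w => f (w + Real.sqrt 2 • v) * f w) (c • v)]
    congr 1
    funext u
    have huv : u - c • v + Real.sqrt 2 • v = u + c • v := by
      rw [hc, show (Real.sqrt 2 : ℝ) • v = (Real.sqrt 2)⁻¹ • v + (Real.sqrt 2)⁻¹ • v by
        rw [← add_smul, ← key]]
      module
    simp only [huv]
  have h4 : ∫ u, f (u + Real.sqrt 2 • v) * f u = convFn f f (Real.sqrt 2 • v) := by
    rw [convFn, ← integral_neg_eq_self]
    congr 1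
    funext u
    rw [show -u + Real.sqrt 2 • v = Real.sqrt 2 • v - u by module, heven]
  calc ∫ u, g u = (Real.sqrt 2) ^ (Fintype.card ι) * ∫ u, g (Real.sqrt 2 • u) := by
        rw [h1, habs, smul_eq_mul, ← mul_assoc, mul_inv_cancel₀ (by positivity), one_mul]
    _ = (2:ℝ) ^ ((Fintype.card ι : ℝ)/2) * convFn f f (Real.sqrt 2 • v) := by
        rw [← sqrt_two_pow_card]
        congr 1
        simp_rw [h2]
        rw [h3, h4]

end IntLemmas

section ConvInt

variable {ι : Type*} [Fintype ι]

/-- shear `(x, y) ↦ (x - y, y)` as a measurable equivalence. -/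
def shearSub (ι : Type*) [Fintype ι] : ((ι → ℝ) × (ι → ℝ)) ≃ᵐ ((ι → ℝ) × (ι → ℝ)) where
  toFun z := (z.1 - z.2, z.2)
  invFun z := (z.1 + z.2, z.2)
  left_inv z := by simp
  right_inv z := by simp
  measurable_toFun := (measurable_fst.sub measurable_snd).prodMk measurable_snd
  measurable_invFun := (measurable_fst.add measurable_snd).prodMk measurable_snd

lemma integral_convFn {f : (ι → ℝ) → ℝ} (hf : Integrable f) :
    (∫ x : ι → ℝ, convFn f f x) = (∫ x : ι → ℝ, f x) ^ 2 := by
  have hprod : Integrable (fun z : (ι → ℝ) × (ι → ℝ) => f z.1 * f z.2)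
      ((volume : Measure (ι → ℝ)).prod volume) := hf.mul_prod hf
  have hφ : MeasurePreserving (shearSub ι)
      ((volume : Measure (ι → ℝ)).prod volume) ((volume : Measure (ι → ℝ)).prod volume) :=
    measurePreserving_sub_prod volume volume
  have hint2 : Integrable (fun z : (ι → ℝ) × (ι → ℝ) => f (z.1 - z.2) * f z.2)
      ((volume : Measure (ι → ℝ)).prod volume) :=
    (hφ.integrable_comp_emb (shearSub ι).measurableEmbedding).2 hprod
  calc (∫ x : ι → ℝ, convFn f f x)
      = ∫ z : (ι → ℝ) × (ι → ℝ), f (z.1 - z.2) * f z.2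
          ∂((volume : Measure (ι → ℝ)).prod volume) :=
        MeasureTheory.integral_integral (f := fun x y => f (x - y) * f y) hint2
    _ = ∫ z : (ι → ℝ) × (ι → ℝ), f z.1 * f z.2
          ∂((volume : Measure (ι → ℝ)).prod volume) :=
        hφ.integral_comp' (fun w => f w.1 * f w.2)
    _ = (∫ x : ι → ℝ, f x) ^ 2 := by
        rw [integral_prod_mul]; ring

lemma integral_Conv {f : (ι → ℝ) → ℝ} (hf : Integrable f) :
    (∫ x : ι → ℝ, (2:ℝ) ^ ((Fintype.card ι : ℝ)/2) * convFn f f (Real.sqrt 2 • x))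
      = (∫ x : ι → ℝ, f x) ^ 2 := by
  rw [integral_const_mul, Measure.integral_comp_smul volume (convFn f f) (Real.sqrt 2),
    Module.finrank_pi, smul_eq_mul, ← mul_assoc,
    show |((Real.sqrt 2 ^ Fintype.card ι)⁻¹ : ℝ)| = (Real.sqrt 2 ^ Fintype.card ι)⁻¹ by
      rw [abs_of_pos]; positivity,
    ← sqrt_two_pow_card, mul_inv_cancel₀ (by positivity), one_mul]
  exact integral_convFn hf

end ConvInt

section Rotation

variable (ι : Type*) [Fintype ι]

/-- The rotation `(x,y) ↦ ((x+y)/√2, (x-y)/√2)` as a function. -/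
noncomputable def rot : ((ι → ℝ) × (ι → ℝ)) → ((ι → ℝ) × (ι → ℝ)) :=
  fun p => ((Real.sqrt 2)⁻¹ • (p.1 + p.2), (Real.sqrt 2)⁻¹ • (p.1 - p.2))

lemma rot_involutive : Function.Involutive (rot ι) := by
  intro p
  have hhalf : (Real.sqrt 2)⁻¹ * (Real.sqrt 2)⁻¹ = (2:ℝ)⁻¹ := by
    rw [← mul_inv, Real.mul_self_sqrt (by norm_num)]
  unfold rot
  ext1
  · show (Real.sqrt 2)⁻¹ • ((Real.sqrt 2)⁻¹ • (p.1 + p.2) + (Real.sqrt 2)⁻¹ • (p.1 - p.2)) = p.1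
    rw [← smul_add, smul_smul, hhalf]
    module
  · show (Real.sqrt 2)⁻¹ • ((Real.sqrt 2)⁻¹ • (p.1 + p.2) - (Real.sqrt 2)⁻¹ • (p.1 - p.2)) = p.2
    rw [← smul_sub, smul_smul, hhalf]
    module

lemma rot_measurable : Measurable (rot ι) := by
  unfold rot
  fun_prop

/-- The rotation as a measurable equivalence (it is an involution). -/
noncomputable def rotEquiv : ((ι → ℝ) × (ι → ℝ)) ≃ᵐ ((ι → ℝ) × (ι → ℝ)) where
  toFun := rot ι
  invFun := rot ι
  left_inv := rot_involutive ι
  right_inv := rot_involutive ι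
  measurable_toFun := rot_measurable ι
  measurable_invFun := rot_measurable ι

/-- The linear version of the rotation on `(ι ⊕ ι) → ℝ`. -/
noncomputable def rotLin : ((ι ⊕ ι) → ℝ) →ₗ[ℝ] ((ι ⊕ ι) → ℝ) where
  toFun w := Sum.elim (fun a => (Real.sqrt 2)⁻¹ * (w (.inl a) + w (.inr a)))
    (fun a => (Real.sqrt 2)⁻¹ * (w (.inl a) - w (.inr a)))
  map_add' w₁ w₂ := by
    funext k
    cases k <;> simp <;> ring
  map_smul' r w := by
    funext k
    cases k <;> simp <;> ring

lemma rotLin_comp_self : (rotLin ι) ∘ₗ (rotLin ι) = LinearMap.id := by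
  have hhalf : (Real.sqrt 2)⁻¹ * (Real.sqrt 2)⁻¹ = (2:ℝ)⁻¹ := by
    rw [← mul_inv, Real.mul_self_sqrt (by norm_num)]
  apply LinearMap.ext
  intro w
  funext k
  cases k with
  | inl a =>
    simp only [LinearMap.comp_apply, LinearMap.id_apply, rotLin, LinearMap.coe_mk,
      AddHom.coe_mk, Sum.elim_inl, Sum.elim_inr]
    linear_combination (2 * w (Sum.inl a)) * hhalf
  | inr a =>
    simp only [LinearMap.comp_apply, LinearMap.id_apply, rotLin, LinearMap.coe_mk,
      AddHom.coe_mk, Sum.elim_inl, Sum.elim_inr]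
    linear_combination (2 * w (Sum.inr a)) * hhalf

lemma abs_det_rotLin : |LinearMap.det (rotLin ι)| = 1 := by
  have h := LinearMap.det_comp (rotLin ι) (rotLin ι)
  rw [rotLin_comp_self, LinearMap.det_id] at h
  rcases mul_self_eq_one_iff.1 h.symm with h1 | h1 <;> rw [h1] <;> norm_num

lemma measurePreserving_rotLin :
    MeasurePreserving (rotLin ι) (volume : Measure ((ι ⊕ ι) → ℝ)) volume := by
  refine ⟨(LinearMap.continuous_of_finiteDimensional (rotLin ι)).measurable, ?_⟩
  have hdet : LinearMap.det (rotLin ι) ≠ 0 := by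
    intro h
    have := abs_det_rotLin ι
    rw [h] at this; norm_num at this
  rw [Real.map_linearMap_volume_pi_eq_smul_volume_pi hdet]
  rw [show |(LinearMap.det (rotLin ι))⁻¹| = 1 by
    rw [abs_inv, abs_det_rotLin]; norm_num]
  simp

lemma measurePreserving_rot :
    MeasurePreserving (rot ι) (volume : Measure ((ι → ℝ) × (ι → ℝ))) volume := by
  have he : MeasurePreserving
      (MeasurableEquiv.sumPiEquivProdPi (fun _ : ι ⊕ ι => ℝ)).symm
      (volume : Measure ((ι → ℝ) × (ι → ℝ))) (volume : Measure ((ι ⊕ ι) → ℝ)) := by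
    have := measurePreserving_sumPiEquivProdPi_symm (fun _ : ι ⊕ ι => (volume : Measure ℝ))
    simpa [MeasureTheory.Measure.volume_eq_prod, MeasureTheory.volume_pi] using this
  have hcomp : rot ι = (MeasurableEquiv.sumPiEquivProdPi (fun _ : ι ⊕ ι => ℝ)) ∘
      (rotLin ι) ∘ (MeasurableEquiv.sumPiEquivProdPi (fun _ : ι ⊕ ι => ℝ)).symm := by
    funext p
    have hsymmfun : ((MeasurableEquiv.sumPiEquivProdPi (fun _ : ι ⊕ ι => ℝ)).symm p)
        = Sum.elim p.1 p.2 := by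
      funext k
      cases k <;> rfl
    simp only [Function.comp_apply, hsymmfun]
    apply Prod.ext <;>
      · funext a
        simp [rotLin, rot, mul_add, mul_sub, MeasurableEquiv.coe_sumPiEquivProdPi,
          Equiv.sumPiEquivProdPi_apply]
  rw [hcomp]
  exact (he.symm _).comp ((measurePreserving_rotLin ι).comp he)

end Rotation

section Pair

variable {ι : Type*} [Fintype ι]

/-- All the `F_{A,B}` properties of `u ↦ f((u+a)/√2) f((u-a)/√2)`. -/
lemma pair_props {A B : Matrix ι ι ℝ} (hA : A.PosDef) {f : (ι → ℝ) → ℝ}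
    (hint : Integrable f) (hnn : ∀ x, 0 ≤ f x) (heven : ∀ x, f (-x) = f x)
    (hpos : 0 < ∫ x : ι → ℝ, f x) (hconc : MoreLogConcaveThan A f)
    (hconv : MoreLogConvexThan B f) (a : ι → ℝ) :
    Integrable (fun u : ι → ℝ => f ((Real.sqrt 2)⁻¹ • (u + a)) * f ((Real.sqrt 2)⁻¹ • (u - a)))
    ∧ (∀ x, 0 ≤ f ((Real.sqrt 2)⁻¹ • (x + a)) * f ((Real.sqrt 2)⁻¹ • (x - a)))
    ∧ (∀ x : ι → ℝ, f ((Real.sqrt 2)⁻¹ • (-x + a)) * f ((Real.sqrt 2)⁻¹ • (-x - a))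
        = f ((Real.sqrt 2)⁻¹ • (x + a)) * f ((Real.sqrt 2)⁻¹ • (x - a)))
    ∧ (0 < ∫ x : ι → ℝ, f ((Real.sqrt 2)⁻¹ • (x + a)) * f ((Real.sqrt 2)⁻¹ • (x - a)))
    ∧ MoreLogConcaveThan A
        (fun u => f ((Real.sqrt 2)⁻¹ • (u + a)) * f ((Real.sqrt 2)⁻¹ • (u - a)))
    ∧ MoreLogConvexThan B
        (fun u => f ((Real.sqrt 2)⁻¹ • (u + a)) * f ((Real.sqrt 2)⁻¹ • (u - a))) := by
  have hs2 : ((Real.sqrt 2)⁻¹ : ℝ) ≠ 0 := by positivity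
  have fpos : ∀ x, 0 < f x := pos_of_moreLogConvex hconv hnn hpos
  have fle0 : ∀ x, f x ≤ f 0 := le_apply_zero_of_even hA.posSemidef hconc hnn heven
  -- integrability of the two factors
  have hF1 : Integrable (fun u : ι → ℝ => f ((Real.sqrt 2)⁻¹ • (u + a))) :=
    integrable_comp_affine hint hs2 a
  have hF2 : Integrable (fun u : ι → ℝ => f ((Real.sqrt 2)⁻¹ • (u - a))) := by
    have := integrable_comp_affine hint hs2 (-a)
    simpa [sub_eq_add_neg] using this
  have hInt : Integrable
      (fun u : ι → ℝ => f ((Real.sqrt 2)⁻¹ • (u + a)) * f ((Real.sqrt 2)⁻¹ • (u - a))) := by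
    refine Integrable.mono' (hF2.const_mul (f 0))
      (hF1.aestronglyMeasurable.mul hF2.aestronglyMeasurable)
      (Filter.Eventually.of_forall fun u => ?_)
    rw [Real.norm_eq_abs, abs_of_nonneg (mul_nonneg (hnn _) (hnn _))]
    exact mul_le_mul_of_nonneg_right (fle0 _) (hnn _)
  have hNN : ∀ x, 0 ≤ f ((Real.sqrt 2)⁻¹ • (x + a)) * f ((Real.sqrt 2)⁻¹ • (x - a)) :=
    fun x => mul_nonneg (hnn _) (hnn _)
  have hEven : ∀ x : ι → ℝ, f ((Real.sqrt 2)⁻¹ • (-x + a)) * f ((Real.sqrt 2)⁻¹ • (-x - a))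
      = f ((Real.sqrt 2)⁻¹ • (x + a)) * f ((Real.sqrt 2)⁻¹ • (x - a)) := by
    intro x
    rw [show (Real.sqrt 2)⁻¹ • (-x + a) = -((Real.sqrt 2)⁻¹ • (x - a)) by module,
      show (Real.sqrt 2)⁻¹ • (-x - a) = -((Real.sqrt 2)⁻¹ • (x + a)) by module,
      heven, heven]
    ring
  have hIntPos : 0 < ∫ x : ι → ℝ,
      f ((Real.sqrt 2)⁻¹ • (x + a)) * f ((Real.sqrt 2)⁻¹ • (x - a)) := by
    rw [integral_pos_iff_support_of_nonneg_ae (Filter.Eventually.of_forall hNN) hInt]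
    have : Function.support (fun x : ι → ℝ =>
        f ((Real.sqrt 2)⁻¹ • (x + a)) * f ((Real.sqrt 2)⁻¹ • (x - a))) = Set.univ := by
      rw [Set.eq_univ_iff_forall]
      intro x
      exact (mul_pos (fpos _) (fpos _)).ne'
    rw [this]
    exact isOpen_univ.measure_pos volume ⟨0, Set.mem_univ 0⟩
  -- decomposition helper
  have decomp : ∀ (C : Matrix ι ι ℝ) (h : (ι → ℝ) → ℝ),
      (f = fun x => gaussFn C x * h x) →
      (fun u : ι → ℝ => f ((Real.sqrt 2)⁻¹ • (u + a)) * f ((Real.sqrt 2)⁻¹ • (u - a)))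
        = fun u => gaussFn C u *
          (Real.exp (-(1/2 : ℝ) * (a ⬝ᵥ C.mulVec a)) *
            (h ((Real.sqrt 2)⁻¹ • (u + a)) * h ((Real.sqrt 2)⁻¹ • (u - a)))) := by
    intro C h hfe
    funext u
    rw [hfe]
    simp only [gaussFn]
    have hq := quad_rot C u a
    have key : Real.exp (-(1/2 : ℝ) *
          (((Real.sqrt 2)⁻¹ • (u + a)) ⬝ᵥ C.mulVec ((Real.sqrt 2)⁻¹ • (u + a))))
        * Real.exp (-(1/2 : ℝ) *
          (((Real.sqrt 2)⁻¹ • (u - a)) ⬝ᵥ C.mulVec ((Real.sqrt 2)⁻¹ • (u - a))))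
        = Real.exp (-(1/2 : ℝ) * (u ⬝ᵥ C.mulVec u))
          * Real.exp (-(1/2 : ℝ) * (a ⬝ᵥ C.mulVec a)) := by
      rw [← Real.exp_add, ← Real.exp_add]
      congr 1
      linear_combination (-(1/2 : ℝ)) * hq
    linear_combination (h ((Real.sqrt 2)⁻¹ • (u + a)) * h ((Real.sqrt 2)⁻¹ • (u - a))) * key
  have hMLC : MoreLogConcaveThan A
      (fun u => f ((Real.sqrt 2)⁻¹ • (u + a)) * f ((Real.sqrt 2)⁻¹ • (u - a))) := by
    obtain ⟨h, hh, hfe⟩ := hconc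
    refine ⟨fun u => Real.exp (-(1/2 : ℝ) * (a ⬝ᵥ A.mulVec a)) *
      (h ((Real.sqrt 2)⁻¹ • (u + a)) * h ((Real.sqrt 2)⁻¹ • (u - a))), ?_, decomp A h hfe⟩
    have h1 : IsLogConcave (fun u : ι → ℝ => h ((Real.sqrt 2)⁻¹ • (u + a))) := by
      have := hh.comp_affine ((Real.sqrt 2)⁻¹) ((Real.sqrt 2)⁻¹ • a)
      convert this using 2 with u
      rw [smul_add]
    have h2 : IsLogConcave (fun u : ι → ℝ => h ((Real.sqrt 2)⁻¹ • (u - a))) := by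
      have := hh.comp_affine ((Real.sqrt 2)⁻¹) (-((Real.sqrt 2)⁻¹ • a))
      convert this using 2 with u
      rw [smul_sub]
      module
    exact (h1.mul h2).const_mul (Real.exp_pos _)
  have hMLV : MoreLogConvexThan B
      (fun u => f ((Real.sqrt 2)⁻¹ • (u + a)) * f ((Real.sqrt 2)⁻¹ • (u - a))) := by
    obtain ⟨h, hh, hfe⟩ := hconv
    refine ⟨fun u => Real.exp (-(1/2 : ℝ) * (a ⬝ᵥ B.mulVec a)) *
      (h ((Real.sqrt 2)⁻¹ • (u + a)) * h ((Real.sqrt 2)⁻¹ • (u - a))), ?_, decomp B h hfe⟩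
    have h1 : IsLogConvex (fun u : ι → ℝ => h ((Real.sqrt 2)⁻¹ • (u + a))) := by
      have := hh.comp_affine ((Real.sqrt 2)⁻¹) ((Real.sqrt 2)⁻¹ • a)
      convert this using 2 with u
      rw [smul_add]
    have h2 : IsLogConvex (fun u : ι → ℝ => h ((Real.sqrt 2)⁻¹ • (u - a))) := by
      have := hh.comp_affine ((Real.sqrt 2)⁻¹) (-((Real.sqrt 2)⁻¹ • a))
      convert this using 2 with u
      rw [smul_sub]
      module
    exact (h1.mul h2).const_mul (Real.exp_pos _)
  exact ⟨hInt, hNN, hEven, hIntPos, hMLC, hMLV⟩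

end Pair

section SigmaLevel

variable {m : ℕ} {n : Fin m → ℕ}

/-- Projection of a big vector to the `i`-th block. -/
def projv (v : ((i : Fin m) × Fin (n i)) → ℝ) (i : Fin m) : Fin (n i) → ℝ := fun j => v ⟨i, j⟩

/-- The family `u ↦ f_i((u+v_i)/√2) f_i((u-v_i)/√2)`. -/
noncomputable def famV (f : ∀ i, (Fin (n i) → ℝ) → ℝ) (v : ((i : Fin m) × Fin (n i)) → ℝ) :
    ∀ i, (Fin (n i) → ℝ) → ℝ :=
  fun i u => f i ((Real.sqrt 2)⁻¹ • (u + projv v i)) * f i ((Real.sqrt 2)⁻¹ • (u - projv v i))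

lemma memFAB_famV {A B : ∀ i, Matrix (Fin (n i)) (Fin (n i)) ℝ}
    (hA : ∀ i, (A i).PosDef) {f : ∀ i, (Fin (n i) → ℝ) → ℝ} (hf : memFAB A B f)
    (v : ((i : Fin m) × Fin (n i)) → ℝ) : memFAB A B (famV f v) := by
  constructor
  · intro i
    obtain ⟨hint, hnn, heven, hpos, hconc⟩ := hf.1 i
    obtain ⟨h1, h2, h3, h4, h5, h6⟩ :=
      pair_props (hA i) hint hnn heven hpos hconc (hf.2 i) (projv v i)
    exact ⟨h1, h2, h3, h4, h5⟩
  · intro i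
    obtain ⟨hint, hnn, heven, hpos, hconc⟩ := hf.1 i
    obtain ⟨h1, h2, h3, h4, h5, h6⟩ :=
      pair_props (hA i) hint hnn heven hpos hconc (hf.2 i) (projv v i)
    exact h6

/-- The numerator of the Brascamp–Lieb functional. -/
noncomputable def blNum (Q : Matrix ((i : Fin m) × Fin (n i)) ((i : Fin m) × Fin (n i)) ℝ)
    (c : Fin m → ℝ) (f : ∀ i, (Fin (n i) → ℝ) → ℝ) : ℝ :=
  ∫ x : ((i : Fin m) × Fin (n i)) → ℝ,
    Real.exp (-(1/2 : ℝ) * (x ⬝ᵥ Q.mulVec x)) * ∏ i, f i (fun j => x ⟨i, j⟩) ^ c i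

/-- The denominator of the Brascamp–Lieb functional. -/
noncomputable def blDen (c : Fin m → ℝ) (f : ∀ i, (Fin (n i) → ℝ) → ℝ) : ℝ :=
  ∏ i, (∫ y : Fin (n i) → ℝ, f i y) ^ c i

lemma BL_eq (Q : Matrix ((i : Fin m) × Fin (n i)) ((i : Fin m) × Fin (n i)) ℝ)
    (c : Fin m → ℝ) (f : ∀ i, (Fin (n i) → ℝ) → ℝ) :
    BL Q c f = blNum Q c f / blDen c f := rfl

lemma blNum_nonneg (Q : Matrix ((i : Fin m) × Fin (n i)) ((i : Fin m) × Fin (n i)) ℝ)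
    (c : Fin m → ℝ) {f : ∀ i, (Fin (n i) → ℝ) → ℝ} (hnn : ∀ i x, 0 ≤ f i x) :
    0 ≤ blNum Q c f := by
  apply integral_nonneg
  intro x
  exact mul_nonneg (Real.exp_pos _).le
    (Finset.prod_nonneg fun i _ => Real.rpow_nonneg (hnn i _) _)

lemma blDen_pos (c : Fin m → ℝ) {f : ∀ i, (Fin (n i) → ℝ) → ℝ}
    (hpos : ∀ i, 0 < ∫ y : Fin (n i) → ℝ, f i y) : 0 < blDen c f :=
  Finset.prod_pos fun i _ => Real.rpow_pos_of_pos (hpos i) _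

lemma BL_nonneg (Q : Matrix ((i : Fin m) × Fin (n i)) ((i : Fin m) × Fin (n i)) ℝ)
    (c : Fin m → ℝ) {f : ∀ i, (Fin (n i) → ℝ) → ℝ} (hnn : ∀ i x, 0 ≤ f i x)
    (hpos : ∀ i, 0 ≤ ∫ y : Fin (n i) → ℝ, f i y) : 0 ≤ BL Q c f := by
  rw [BL_eq]
  exact div_nonneg (blNum_nonneg Q c hnn)
    (Finset.prod_nonneg fun i _ => Real.rpow_nonneg (hpos i) _)

/-- The denominator of `famV f v` is the integrand of the convolution BL numerator. -/
lemma blDen_famV (c : Fin m → ℝ) {f : ∀ i, (Fin (n i) → ℝ) → ℝ}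
    (heven : ∀ i x, f i (-x) = f i x) (v : ((i : Fin m) × Fin (n i)) → ℝ) :
    blDen c (famV f v)
      = ∏ i, ((2:ℝ) ^ ((n i : ℝ)/2) * convFn (f i) (f i) (Real.sqrt 2 • projv v i)) ^ c i := by
  unfold blDen famV
  congr 1
  funext i
  congr 1
  rw [integral_shift_pair (heven i) (projv v i), Fintype.card_fin]

end SigmaLevel

section SigmaLevel2

variable {m : ℕ} {n : Fin m → ℕ}

/-- The integrand of the Brascamp–Lieb numerator. -/
noncomputable def blInt (Q : Matrix ((i : Fin m) × Fin (n i)) ((i : Fin m) × Fin (n i)) ℝ)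
    (c : Fin m → ℝ) (f : ∀ i, (Fin (n i) → ℝ) → ℝ) (x : ((i : Fin m) × Fin (n i)) → ℝ) : ℝ :=
  Real.exp (-(1/2 : ℝ) * (x ⬝ᵥ Q.mulVec x)) * ∏ i, f i (fun j => x ⟨i, j⟩) ^ c i

lemma blNum_eq_int (Q : Matrix ((i : Fin m) × Fin (n i)) ((i : Fin m) × Fin (n i)) ℝ)
    (c : Fin m → ℝ) (f : ∀ i, (Fin (n i) → ℝ) → ℝ) :
    blNum Q c f = ∫ x, blInt Q c f x := rfl

lemma blInt_nonneg (Q : Matrix ((i : Fin m) × Fin (n i)) ((i : Fin m) × Fin (n i)) ℝ)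
    (c : Fin m → ℝ) {f : ∀ i, (Fin (n i) → ℝ) → ℝ} (hnn : ∀ i x, 0 ≤ f i x)
    (x : ((i : Fin m) × Fin (n i)) → ℝ) : 0 ≤ blInt Q c f x :=
  mul_nonneg (Real.exp_pos _).le
    (Finset.prod_nonneg fun i _ => Real.rpow_nonneg (hnn i _) _)

/-- The key pointwise rotation identity. -/
lemma blInt_rot (Q : Matrix ((i : Fin m) × Fin (n i)) ((i : Fin m) × Fin (n i)) ℝ)
    (c : Fin m → ℝ) {f : ∀ i, (Fin (n i) → ℝ) → ℝ} (hnn : ∀ i x, 0 ≤ f i x)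
    (heven : ∀ i x, f i (-x) = f i x) (v u : ((i : Fin m) × Fin (n i)) → ℝ) :
    blInt Q c f ((Real.sqrt 2)⁻¹ • (v + u)) * blInt Q c f ((Real.sqrt 2)⁻¹ • (v - u))
      = Real.exp (-(1/2 : ℝ) * (v ⬝ᵥ Q.mulVec v)) * blInt Q c (famV f v) u := by
  unfold blInt
  have p1 : ∀ i, (fun j => ((Real.sqrt 2)⁻¹ • (v + u)) ⟨i, j⟩)
      = (Real.sqrt 2)⁻¹ • ((fun j => u ⟨i, j⟩) + projv v i) := by
    intro i
    funext j
    simp only [Pi.smul_apply, Pi.add_apply, projv, smul_eq_mul]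
    ring
  have p2 : ∀ i, (fun j => ((Real.sqrt 2)⁻¹ • (v - u)) ⟨i, j⟩)
      = -((Real.sqrt 2)⁻¹ • ((fun j => u ⟨i, j⟩) - projv v i)) := by
    intro i
    funext j
    simp only [Pi.smul_apply, Pi.sub_apply, Pi.neg_apply, projv, smul_eq_mul]
    ring
  have hexp : Real.exp (-(1/2 : ℝ) *
        (((Real.sqrt 2)⁻¹ • (v + u)) ⬝ᵥ Q.mulVec ((Real.sqrt 2)⁻¹ • (v + u))))
      * Real.exp (-(1/2 : ℝ) *
        (((Real.sqrt 2)⁻¹ • (v - u)) ⬝ᵥ Q.mulVec ((Real.sqrt 2)⁻¹ • (v - u))))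
      = Real.exp (-(1/2 : ℝ) * (v ⬝ᵥ Q.mulVec v)) *
        Real.exp (-(1/2 : ℝ) * (u ⬝ᵥ Q.mulVec u)) := by
    rw [← Real.exp_add, ← Real.exp_add]
    congr 1
    linear_combination (-(1/2 : ℝ)) * quad_rot Q v u
  have hprod : (∏ i, f i (fun j => ((Real.sqrt 2)⁻¹ • (v + u)) ⟨i, j⟩) ^ c i)
      * (∏ i, f i (fun j => ((Real.sqrt 2)⁻¹ • (v - u)) ⟨i, j⟩) ^ c i)
      = ∏ i, famV f v i (fun j => u ⟨i, j⟩) ^ c i := by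
    rw [← Finset.prod_mul_distrib]
    apply Finset.prod_congr rfl
    intro i _
    rw [p1 i, p2 i, heven i, ← Real.mul_rpow (hnn i _) (hnn i _)]
    rfl
  calc Real.exp (-(1/2 : ℝ) *
        (((Real.sqrt 2)⁻¹ • (v + u)) ⬝ᵥ Q.mulVec ((Real.sqrt 2)⁻¹ • (v + u))))
        * (∏ i, f i (fun j => ((Real.sqrt 2)⁻¹ • (v + u)) ⟨i, j⟩) ^ c i)
        * (Real.exp (-(1/2 : ℝ) *
          (((Real.sqrt 2)⁻¹ • (v - u)) ⬝ᵥ Q.mulVec ((Real.sqrt 2)⁻¹ • (v - u))))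
        * (∏ i, f i (fun j => ((Real.sqrt 2)⁻¹ • (v - u)) ⟨i, j⟩) ^ c i))
      = (Real.exp (-(1/2 : ℝ) *
          (((Real.sqrt 2)⁻¹ • (v + u)) ⬝ᵥ Q.mulVec ((Real.sqrt 2)⁻¹ • (v + u))))
        * Real.exp (-(1/2 : ℝ) *
          (((Real.sqrt 2)⁻¹ • (v - u)) ⬝ᵥ Q.mulVec ((Real.sqrt 2)⁻¹ • (v - u)))))
        * ((∏ i, f i (fun j => ((Real.sqrt 2)⁻¹ • (v + u)) ⟨i, j⟩) ^ c i)
          * (∏ i, f i (fun j => ((Real.sqrt 2)⁻¹ • (v - u)) ⟨i, j⟩) ^ c i)) := by ring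
    _ = _ := by
      rw [hexp, hprod]
      ring

end SigmaLevel2

/-- Step 2 of the Nakamura–Tsuji scheme: for `f ∈ F_{A,B}` with `0 < A_i ≤ B_i`,
`BL(f)² ≥ I_{A,B} ⬝ BL(Conv f)`, where `Conv f_i = 2^{n_i/2}(f_i ∗ f_i)(√2 ⬝)` and
`I_{A,B} = inf_{g ∈ F_{A,B}} BL(g)`. -/
theorem BL_sq_ge_inf_mul_BL_conv
    (m : ℕ) (n : Fin m → ℕ)
    (Q : Matrix ((i : Fin m) × Fin (n i)) ((i : Fin m) × Fin (n i)) ℝ) (hQ : Q.IsSymm)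
    (c : Fin m → ℝ) (hc : ∀ i, 0 < c i)
    (A B : ∀ i, Matrix (Fin (n i)) (Fin (n i)) ℝ)
    (hA : ∀ i, (A i).PosDef) (hBsymm : ∀ i, (B i).IsSymm)
    (hAB : ∀ i, (B i - A i).PosSemidef)
    (f : ∀ i, (Fin (n i) → ℝ) → ℝ) (hf : memFAB A B f) :
    sInf {r : ℝ | ∃ g, memFAB A B g ∧ r = BL Q c g} *
        BL Q c (fun i x => (2 : ℝ) ^ ((n i : ℝ) / 2) * convFn (f i) (f i) (Real.sqrt 2 • x))
      ≤ (BL Q c f) ^ 2 := by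
  classical
  set convFam : ∀ i, (Fin (n i) → ℝ) → ℝ :=
    fun i x => (2 : ℝ) ^ ((n i : ℝ) / 2) * convFn (f i) (f i) (Real.sqrt 2 • x) with hconvFam
  set Sset := {r : ℝ | ∃ g, memFAB A B g ∧ r = BL Q c g} with hSset
  have hfint : ∀ i, Integrable (f i) := fun i => (hf.1 i).1
  have hfnn : ∀ i x, 0 ≤ f i x := fun i x => (hf.1 i).2.1 x
  have hfeven : ∀ i x, f i (-x) = f i x := fun i x => (hf.1 i).2.2.1 x
  have hfpos : ∀ i, 0 < ∫ y : Fin (n i) → ℝ, f i y := fun i => (hf.1 i).2.2.2.1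
  have hmem0 : ∀ r ∈ Sset, 0 ≤ r := by
    rintro r ⟨g, hg, rfl⟩
    exact BL_nonneg Q c (fun i x => (hg.1 i).2.1 x) (fun i => ((hg.1 i).2.2.2.1).le)
  have hS0 : 0 ≤ sInf Sset := Real.sInf_nonneg hmem0
  have hconvnn : ∀ i x, 0 ≤ convFam i x := fun i x =>
    mul_nonneg (Real.rpow_nonneg (by norm_num) _)
      (integral_nonneg fun y => mul_nonneg (hfnn i _) (hfnn i _))
  rcases eq_or_lt_of_le hS0 with hS | hS
  · rw [← hS, zero_mul]
    exact sq_nonneg _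
  have hBdd : BddBelow Sset := ⟨0, hmem0⟩
  have hSle : ∀ g, memFAB A B g → sInf Sset ≤ BL Q c g := fun g hg => csInf_le hBdd ⟨g, hg, rfl⟩
  have hint_mem : ∀ g, memFAB A B g → Integrable (blInt Q c g) := by
    intro g hg
    by_contra hni
    have h0 : BL Q c g = 0 := by rw [BL_eq, blNum_eq_int, integral_undef hni, zero_div]
    have h1 := hSle g hg
    rw [h0] at h1
    exact absurd (lt_of_lt_of_le hS h1) (lt_irrefl 0)
  have hWint : Integrable (blInt Q c f) := hint_mem f hf
  have hmemv : ∀ v, memFAB A B (famV f v) := memFAB_famV hA hf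
  have hvint : ∀ v, Integrable (blInt Q c (famV f v)) := fun v => hint_mem _ (hmemv v)
  have hvden : ∀ v, 0 < blDen c (famV f v) := fun v =>
    blDen_pos c (fun i => ((hmemv v).1 i).2.2.2.1)
  have hvnum : ∀ v, sInf Sset * blDen c (famV f v) ≤ blNum Q c (famV f v) := by
    intro v
    have h1 := hSle _ (hmemv v)
    rw [BL_eq, le_div_iff₀ (hvden v)] at h1
    exact h1
  have hvnn : ∀ v i x, 0 ≤ famV f v i x := fun v i x => ((hmemv v).1 i).2.1 x
  have hWaem : AEMeasurable (fun x => ENNReal.ofReal (blInt Q c f x)) volume :=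
    hWint.aestronglyMeasurable.aemeasurable.ennreal_ofReal
  have h2 : ∀ v, ENNReal.ofReal (sInf Sset * blInt Q c convFam v)
      ≤ ∫⁻ u, ENNReal.ofReal (blInt Q c f ((Real.sqrt 2)⁻¹ • (v + u))
          * blInt Q c f ((Real.sqrt 2)⁻¹ • (v - u))) := by
    intro v
    have hWc : blInt Q c convFam v
        = Real.exp (-(1/2 : ℝ) * (v ⬝ᵥ Q.mulVec v)) * blDen c (famV f v) := by
      rw [blDen_famV c hfeven v]
      rfl
    calc ENNReal.ofReal (sInf Sset * blInt Q c convFam v)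
        ≤ ENNReal.ofReal (Real.exp (-(1/2:ℝ) * (v ⬝ᵥ Q.mulVec v)) * blNum Q c (famV f v)) := by
          apply ENNReal.ofReal_le_ofReal
          rw [hWc, show sInf Sset * (Real.exp (-(1/2:ℝ) * (v ⬝ᵥ Q.mulVec v))
              * blDen c (famV f v)) = Real.exp (-(1/2:ℝ) * (v ⬝ᵥ Q.mulVec v))
              * (sInf Sset * blDen c (famV f v)) from by ring]
          exact mul_le_mul_of_nonneg_left (hvnum v) (Real.exp_pos _).le
      _ = ENNReal.ofReal (Real.exp (-(1/2:ℝ) * (v ⬝ᵥ Q.mulVec v)))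
          * ∫⁻ u, ENNReal.ofReal (blInt Q c (famV f v) u) := by
          rw [ENNReal.ofReal_mul (Real.exp_pos _).le, blNum_eq_int,
            MeasureTheory.ofReal_integral_eq_lintegral_ofReal (hvint v)
              (Filter.Eventually.of_forall (blInt_nonneg Q c (hvnn v)))]
      _ = ∫⁻ u, ENNReal.ofReal (Real.exp (-(1/2:ℝ) * (v ⬝ᵥ Q.mulVec v)))
          * ENNReal.ofReal (blInt Q c (famV f v) u) :=
          (lintegral_const_mul' _ _ ENNReal.ofReal_ne_top).symm
      _ = ∫⁻ u, ENNReal.ofReal (blInt Q c f ((Real.sqrt 2)⁻¹ • (v + u))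
          * blInt Q c f ((Real.sqrt 2)⁻¹ • (v - u))) := by
          apply lintegral_congr
          intro u
          rw [← ENNReal.ofReal_mul (Real.exp_pos _).le, ← blInt_rot Q c hfnn hfeven v u]
  have big : ENNReal.ofReal (sInf Sset) * ∫⁻ v, ENNReal.ofReal (blInt Q c convFam v)
      ≤ ENNReal.ofReal (blNum Q c f) * ENNReal.ofReal (blNum Q c f) := by
    have hGaem : AEMeasurable (fun p : (((i : Fin m) × Fin (n i)) → ℝ)
          × (((i : Fin m) × Fin (n i)) → ℝ) =>
        ENNReal.ofReal (blInt Q c f p.1) * ENNReal.ofReal (blInt Q c f p.2))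
        ((volume : Measure (((i : Fin m) × Fin (n i)) → ℝ)).prod volume) :=
      (hWaem.comp_quasiMeasurePreserving Measure.quasiMeasurePreserving_fst).mul
        (hWaem.comp_quasiMeasurePreserving Measure.quasiMeasurePreserving_snd)
    have hrot : MeasurePreserving (rot ((i : Fin m) × Fin (n i)))
        ((volume : Measure (((i : Fin m) × Fin (n i)) → ℝ)).prod volume)
        ((volume : Measure (((i : Fin m) × Fin (n i)) → ℝ)).prod volume) := by
      have := measurePreserving_rot ((i : Fin m) × Fin (n i))
      rwa [Measure.volume_eq_prod] at this
    have hrotaem : AEMeasurable (fun p : (((i : Fin m) × Fin (n i)) → ℝ)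
          × (((i : Fin m) × Fin (n i)) → ℝ) =>
        ENNReal.ofReal (blInt Q c f (rot ((i : Fin m) × Fin (n i)) p).1)
          * ENNReal.ofReal (blInt Q c f (rot ((i : Fin m) × Fin (n i)) p).2))
        ((volume : Measure (((i : Fin m) × Fin (n i)) → ℝ)).prod volume) :=
      hGaem.comp_quasiMeasurePreserving hrot.quasiMeasurePreserving
    calc ENNReal.ofReal (sInf Sset) * ∫⁻ v, ENNReal.ofReal (blInt Q c convFam v)
        = ∫⁻ v, ENNReal.ofReal (sInf Sset * blInt Q c convFam v) := by
          rw [← lintegral_const_mul' _ _ ENNReal.ofReal_ne_top]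
          apply lintegral_congr
          intro v
          rw [ENNReal.ofReal_mul hS0]
      _ ≤ ∫⁻ v, ∫⁻ u, ENNReal.ofReal (blInt Q c f ((Real.sqrt 2)⁻¹ • (v + u))
          * blInt Q c f ((Real.sqrt 2)⁻¹ • (v - u))) := lintegral_mono h2
      _ = ∫⁻ v, ∫⁻ u, ENNReal.ofReal (blInt Q c f (rot ((i : Fin m) × Fin (n i)) (v, u)).1)
          * ENNReal.ofReal (blInt Q c f (rot ((i : Fin m) × Fin (n i)) (v, u)).2) := by
          apply lintegral_congr
          intro v
          apply lintegral_congr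
          intro u
          rw [ENNReal.ofReal_mul (blInt_nonneg Q c hfnn _)]
          rfl
      _ = ∫⁻ p : (((i : Fin m) × Fin (n i)) → ℝ) × (((i : Fin m) × Fin (n i)) → ℝ),
          ENNReal.ofReal (blInt Q c f (rot ((i : Fin m) × Fin (n i)) p).1)
            * ENNReal.ofReal (blInt Q c f (rot ((i : Fin m) × Fin (n i)) p).2)
          ∂((volume : Measure (((i : Fin m) × Fin (n i)) → ℝ)).prod volume) :=
          (lintegral_prod _ hrotaem).symm
      _ = ∫⁻ p : (((i : Fin m) × Fin (n i)) → ℝ) × (((i : Fin m) × Fin (n i)) → ℝ),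
          ENNReal.ofReal (blInt Q c f p.1) * ENNReal.ofReal (blInt Q c f p.2)
          ∂((volume : Measure (((i : Fin m) × Fin (n i)) → ℝ)).prod volume) :=
          hrot.lintegral_comp_emb (rotEquiv ((i : Fin m) × Fin (n i))).measurableEmbedding
            (fun q => ENNReal.ofReal (blInt Q c f q.1) * ENNReal.ofReal (blInt Q c f q.2))
      _ = (∫⁻ x, ENNReal.ofReal (blInt Q c f x)) * (∫⁻ x, ENNReal.ofReal (blInt Q c f x)) :=
          lintegral_prod_mul hWaem hWaem
      _ = ENNReal.ofReal (blNum Q c f) * ENNReal.ofReal (blNum Q c f) := by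
          rw [blNum_eq_int, MeasureTheory.ofReal_integral_eq_lintegral_ofReal hWint
            (Filter.Eventually.of_forall (blInt_nonneg Q c hfnn))]
  by_cases hWc2 : Integrable (blInt Q c convFam)
  · have hNum2 : (∫⁻ v, ENNReal.ofReal (blInt Q c convFam v))
        = ENNReal.ofReal (blNum Q c convFam) := by
      rw [blNum_eq_int, MeasureTheory.ofReal_integral_eq_lintegral_ofReal hWc2
        (Filter.Eventually.of_forall (blInt_nonneg Q c hconvnn))]
    rw [hNum2, ← ENNReal.ofReal_mul hS0, ← ENNReal.ofReal_mul (blNum_nonneg Q c hfnn)] at big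
    have key : sInf Sset * blNum Q c convFam ≤ blNum Q c f * blNum Q c f :=
      (ENNReal.ofReal_le_ofReal_iff
        (mul_nonneg (blNum_nonneg Q c hfnn) (blNum_nonneg Q c hfnn))).1 big
    have hD : 0 < blDen c f := blDen_pos c hfpos
    have hD2 : blDen c convFam = blDen c f ^ 2 := by
      unfold blDen
      rw [← Finset.prod_pow]
      apply Finset.prod_congr rfl
      intro i _
      rw [show (∫ y : Fin (n i) → ℝ, convFam i y) = (∫ y : Fin (n i) → ℝ, f i y) ^ 2 from by
        have := integral_Conv (hfint i)
        rwa [Fintype.card_fin] at this]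
      rw [← Real.rpow_natCast (∫ y : Fin (n i) → ℝ, f i y) 2,
        ← Real.rpow_natCast ((∫ y : Fin (n i) → ℝ, f i y) ^ c i) 2,
        ← Real.rpow_mul (hfpos i).le, ← Real.rpow_mul (hfpos i).le]
      congr 1
      push_cast
      ring
    rw [BL_eq, BL_eq, hD2, div_pow]
    calc sInf Sset * (blNum Q c convFam / blDen c f ^ 2)
        = (sInf Sset * blNum Q c convFam) / blDen c f ^ 2 := by ring
      _ ≤ (blNum Q c f * blNum Q c f) / blDen c f ^ 2 :=
          (div_le_div_iff_of_pos_right (pow_pos hD 2)).2 key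
      _ = blNum Q c f ^ 2 / blDen c f ^ 2 := by ring
  · rw [show BL Q c convFam = 0 from by
      rw [BL_eq, blNum_eq_int, integral_undef hWc2, zero_div], mul_zero]
    exact sq_nonneg _
end

section
/- Fix an N×N real symmetric matrix Q, c_1,…,c_m > 0, and m-tuples of symmetric matrices A = (A_1,…,A_m), B = (B_1,…,B_m) with 0 < A_i ≤ B_i for all i. Then the infimum I_{A,B} = inf_{f ∈ F_{A,B}} BL(f) is attained: there exists f ∈ F_{A,B} with BL(f) = I_{A,B}. -/
open MeasureTheory Matrix Filter

open Real Set Topology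

namespace NT

variable {ι : Type*} [Fintype ι]

noncomputable def qf (M : Matrix ι ι ℝ) (x : ι → ℝ) : ℝ := (1/2 : ℝ) * (x ⬝ᵥ M.mulVec x)

lemma qf_zero (M : Matrix ι ι ℝ) : qf M 0 = 0 := by simp [qf]

lemma qf_smul (M : Matrix ι ι ℝ) (t : ℝ) (x : ι → ℝ) : qf M (t • x) = t^2 * qf M x := by
  unfold qf
  rw [mulVec_smul, dotProduct_smul, smul_dotProduct]
  simp only [smul_eq_mul]; ring

lemma qf_neg (M : Matrix ι ι ℝ) (x : ι → ℝ) : qf M (-x) = qf M x := by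
  have := qf_smul M (-1) x
  simpa using this

lemma dot_comm {M : Matrix ι ι ℝ} (hM : M.IsSymm) (x y : ι → ℝ) :
    x ⬝ᵥ M.mulVec y = y ⬝ᵥ M.mulVec x := by
  rw [dotProduct_mulVec, ← mulVec_transpose, hM.eq, dotProduct_comm]

lemma qf_add {M : Matrix ι ι ℝ} (hM : M.IsSymm) (x y : ι → ℝ) :
    qf M (x + y) = qf M x + x ⬝ᵥ M.mulVec y + qf M y := by
  unfold qf
  rw [mulVec_add, add_dotProduct, dotProduct_add, dotProduct_add, dot_comm hM y x]
  ring

lemma qf_sub_matrix (M N : Matrix ι ι ℝ) (x : ι → ℝ) : qf (M - N) x = qf M x - qf N x := by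
  unfold qf
  rw [sub_mulVec, dotProduct_sub]
  ring

lemma qf_nonneg {M : Matrix ι ι ℝ} (hM : M.PosSemidef) (x : ι → ℝ) : 0 ≤ qf M x := by
  have := hM.dotProduct_mulVec_nonneg x
  simp only [RCLike.re_to_real, star_trivial] at this
  unfold qf; simpa using by positivity

lemma qf_pos {M : Matrix ι ι ℝ} (hM : M.PosDef) {x : ι → ℝ} (hx : x ≠ 0) : 0 < qf M x := by
  have := hM.dotProduct_mulVec_pos hx
  simp only [RCLike.re_to_real, star_trivial] at this
  unfold qf; linarith

lemma posDef_isSymm {M : Matrix ι ι ℝ} (hM : M.PosDef) : M.IsSymm := by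
  have h := hM.1
  rw [Matrix.IsHermitian, conjTranspose_eq_transpose_of_trivial] at h
  exact h

lemma posSemidef_isSymm {M : Matrix ι ι ℝ} (hM : M.PosSemidef) : M.IsSymm := by
  have h := hM.1
  rw [Matrix.IsHermitian, conjTranspose_eq_transpose_of_trivial] at h
  exact h

lemma continuous_qf (M : Matrix ι ι ℝ) : Continuous (qf M) := by
  unfold qf dotProduct Matrix.mulVec
  apply Continuous.mul continuous_const
  apply continuous_finset_sum
  intro i _
  apply Continuous.mul (continuous_apply i)
  apply continuous_finset_sum
  intro j _
  exact continuous_const.mul (continuous_apply j)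

lemma abs_dot_le (M : Matrix ι ι ℝ) (u v : ι → ℝ) :
    |u ⬝ᵥ M.mulVec v| ≤ (∑ j, ∑ k, |M j k|) * ‖u‖ * ‖v‖ := by
  have key : |u ⬝ᵥ M.mulVec v| ≤ ∑ j, ∑ k, |u j| * |M j k| * |v k| := by
    simp only [dotProduct, Matrix.mulVec, Finset.mul_sum]
    calc |∑ j, ∑ k, u j * (M j k * v k)| ≤ ∑ j, |∑ k, u j * (M j k * v k)| :=
          Finset.abs_sum_le_sum_abs _ _
      _ ≤ ∑ j, ∑ k, |u j * (M j k * v k)| := by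
          apply Finset.sum_le_sum; intro j _; exact Finset.abs_sum_le_sum_abs _ _
      _ = ∑ j, ∑ k, |u j| * |M j k| * |v k| := by
          congr 1; ext j; congr 1; ext k; rw [abs_mul, abs_mul]; ring
  refine key.trans ?_
  rw [Finset.sum_mul, Finset.sum_mul]
  apply Finset.sum_le_sum; intro j _
  rw [Finset.sum_mul, Finset.sum_mul]
  apply Finset.sum_le_sum; intro k _
  have h1 : |u j| ≤ ‖u‖ := by simpa using norm_le_pi_norm u j
  have h2 : |v k| ≤ ‖v‖ := by simpa using norm_le_pi_norm v k
  have : |u j| * |M j k| * |v k| ≤ ‖u‖ * |M j k| * ‖v‖ := by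
    gcongr ?_ * _ * ?_
  linarith

/-- The total entry bound of a matrix. -/
noncomputable def SM (M : Matrix ι ι ℝ) : ℝ := ∑ j, ∑ k, |M j k|

lemma SM_nonneg (M : Matrix ι ι ℝ) : 0 ≤ SM M := by
  apply Finset.sum_nonneg; intro j _; apply Finset.sum_nonneg; intro k _; exact abs_nonneg _

lemma abs_qf_le (M : Matrix ι ι ℝ) (x : ι → ℝ) : |qf M x| ≤ SM M * ‖x‖ * ‖x‖ := by
  have h := abs_dot_le M x x
  have hS : (∑ j, ∑ k, |M j k|) = SM M := rfl
  rw [hS] at h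
  have hSn := SM_nonneg M
  have h0 : |qf M x| = 1/2 * |x ⬝ᵥ M.mulVec x| := by
    unfold qf; rw [abs_mul]; norm_num
  rw [h0]
  nlinarith [abs_nonneg (x ⬝ᵥ M.mulVec x),
    mul_nonneg (mul_nonneg hSn (norm_nonneg x)) (norm_nonneg x)]

lemma abs_qf_sub_le (M : Matrix ι ι ℝ) (x y : ι → ℝ) :
    |qf M x - qf M y| ≤ SM M * (‖x‖ + ‖y‖) * ‖x - y‖ := by
  have expand : qf M x - qf M y = (1/2 : ℝ) * ((x - y) ⬝ᵥ M.mulVec x + y ⬝ᵥ M.mulVec (x - y)) := by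
    unfold qf
    rw [sub_dotProduct, mulVec_sub, dotProduct_sub]
    ring
  rw [expand]
  have hS : (∑ j, ∑ k, |M j k|) = SM M := rfl
  have h1 := abs_dot_le M (x - y) x
  have h2 := abs_dot_le M y (x - y)
  rw [hS] at h1 h2
  have hSn := SM_nonneg M
  have habs : |(1/2 : ℝ) * ((x - y) ⬝ᵥ M.mulVec x + y ⬝ᵥ M.mulVec (x - y))|
      ≤ (1/2 : ℝ) * (|(x - y) ⬝ᵥ M.mulVec x| + |y ⬝ᵥ M.mulVec (x - y)|) := by
    rw [abs_mul]
    have := abs_add_le ((x - y) ⬝ᵥ M.mulVec x) (y ⬝ᵥ M.mulVec (x - y))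
    have h2' : |(1:ℝ)/2| = 1/2 := by norm_num
    rw [h2']
    nlinarith
  refine habs.trans ?_
  nlinarith [mul_nonneg (mul_nonneg hSn (add_nonneg (norm_nonneg x) (norm_nonneg y))) (norm_nonneg (x - y))]

lemma convexOn_qf {M : Matrix ι ι ℝ} (hM : M.PosSemidef) : ConvexOn ℝ univ (qf M) := by
  have hs := posSemidef_isSymm hM
  refine ⟨convex_univ, ?_⟩
  intro x _ y _ a b ha hb hab
  have key : a • qf M x + b • qf M y - qf M (a • x + b • y) = a * b * qf M (x - y) := by
    rw [qf_add hs, qf_smul, qf_smul]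
    have : (a • x) ⬝ᵥ M.mulVec (b • y) = a * b * (x ⬝ᵥ M.mulVec y) := by
      rw [mulVec_smul, dotProduct_smul, smul_dotProduct]; simp [smul_eq_mul]; ring
    rw [this]
    have hsub : qf M (x - y) = qf M x - x ⬝ᵥ M.mulVec y + qf M y := by
      have hxy : x - y = x + (-y) := by abel
      rw [hxy, qf_add hs, qf_neg]
      simp only [mulVec_neg, dotProduct_neg]
      ring
    have hb' : b = 1 - a := by linarith
    simp only [smul_eq_mul]
    rw [hsub, hb']
    ring
  have hpos : 0 ≤ a * b * qf M (x - y) := by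
    have := qf_nonneg hM (x - y); positivity
  linarith [key, hpos]

lemma continuous_dot (M : Matrix ι ι ℝ) : Continuous (fun x : ι → ℝ => x ⬝ᵥ M.mulVec x) := by
  unfold dotProduct Matrix.mulVec
  apply continuous_finset_sum
  intro i _
  apply Continuous.mul (continuous_apply i)
  apply continuous_finset_sum
  intro j _
  exact continuous_const.mul (continuous_apply j)

lemma exists_coercive {A : Matrix ι ι ℝ} (hA : A.PosDef) :
    ∃ ε : ℝ, 0 < ε ∧ ∀ x : ι → ℝ, ε * (∑ j, (x j)^2) ≤ x ⬝ᵥ A.mulVec x := by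
  classical
  rcases isEmpty_or_nonempty ι with hE | hN
  · refine ⟨1, one_pos, fun x => by simp [dotProduct]⟩
  · set g : (ι → ℝ) → ℝ := fun x => x ⬝ᵥ A.mulVec x with hgdef
    have hg : Continuous g := continuous_dot A
    set S : Set (ι → ℝ) := {x | ∑ j, (x j)^2 = 1} with hSdef
    have hcont2 : Continuous (fun x : ι → ℝ => ∑ j, (x j)^2) := by
      apply continuous_finset_sum; intro j _; exact (continuous_apply j).pow 2
    have hclosed : IsClosed S := isClosed_eq hcont2 continuous_const
    have hbdd : Bornology.IsBounded S := by
      rw [Metric.isBounded_iff_subset_closedBall 0]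
      refine ⟨1, fun x hx => ?_⟩
      simp only [Metric.mem_closedBall, dist_zero_right]
      rw [pi_norm_le_iff_of_nonneg zero_le_one]
      intro j
      have hj : (x j)^2 ≤ 1 := by
        have := Finset.single_le_sum (f := fun j => (x j)^2)
          (fun k _ => sq_nonneg (x k)) (Finset.mem_univ j)
        have hx1 : ∑ k, (x k)^2 = 1 := hx
        simpa [hx1] using this
      have h' : |x j|^2 ≤ 1 := by rwa [sq_abs]
      rw [Real.norm_eq_abs]
      nlinarith [abs_nonneg (x j)]
    have hcomp : IsCompact S := Metric.isCompact_of_isClosed_isBounded hclosed hbdd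
    have hx₀ : (Pi.single (Classical.arbitrary ι) 1 : ι → ℝ) ∈ S := by
      simp only [hSdef, mem_setOf_eq, Pi.single_apply]
      rw [Finset.sum_congr rfl (fun j _ => by
        show (if j = Classical.arbitrary ι then (1:ℝ) else 0)^2 = if j = Classical.arbitrary ι then (1:ℝ) else 0
        split <;> norm_num)]
      simp
    obtain ⟨z, hzS, hmin'⟩ := hcomp.exists_isMinOn ⟨_, hx₀⟩ hg.continuousOn
    have hmin : ∀ y ∈ S, g z ≤ g y := fun y hy => hmin' hy
    have hz : z ≠ 0 := by
      intro h
      have : (0:ℝ) = 1 := by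
        have := hzS
        simp only [hSdef, mem_setOf_eq, h] at this
        simpa using this.symm
      norm_num at this
    have hε : 0 < g z := by
      have := hA.dotProduct_mulVec_pos hz
      simpa using this
    refine ⟨g z, hε, fun x => ?_⟩
    by_cases hx : x = 0
    · simp [hx, hgdef, dotProduct]
    · set r : ℝ := Real.sqrt (∑ j, (x j)^2) with hrdef
      have hsum_pos : 0 < ∑ j, (x j)^2 := by
        obtain ⟨j, hj⟩ := Function.ne_iff.1 hx
        apply Finset.sum_pos' (fun k _ => sq_nonneg (x k)) ⟨j, Finset.mem_univ j, ?_⟩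
        have : x j ≠ 0 := hj
        positivity
      have hr : 0 < r := Real.sqrt_pos.2 hsum_pos
      have hr2 : r^2 = ∑ j, (x j)^2 := Real.sq_sqrt hsum_pos.le
      set u : ι → ℝ := r⁻¹ • x with hudef
      have hu : u ∈ S := by
        simp only [hSdef, mem_setOf_eq, hudef, Pi.smul_apply, smul_eq_mul]
        rw [Finset.sum_congr rfl (fun j _ => by rw [mul_pow]), ← Finset.mul_sum, ← hr2]
        field_simp
      have hgu := hmin u hu
      have hxu : x = r • u := by
        rw [hudef, smul_inv_smul₀ hr.ne']
      have hgx : g x = r^2 * g u := by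
        rw [hxu]
        show (r • u) ⬝ᵥ A.mulVec (r • u) = r^2 * (u ⬝ᵥ A.mulVec u)
        rw [mulVec_smul, dotProduct_smul, smul_dotProduct]
        simp only [smul_eq_mul]; ring
      calc g z * ∑ j, (x j)^2 = g z * r^2 := by rw [hr2]
        _ ≤ g u * r^2 := mul_le_mul_of_nonneg_right hgu (sq_nonneg r)
        _ = g x := by rw [hgx]; ring

lemma integrable_exp_neg_qf {A : Matrix ι ι ℝ} (hA : A.PosDef) :
    Integrable (fun x : ι → ℝ => rexp (-qf A x)) := by
  rcases exists_coercive hA with ⟨ε, hε, hco⟩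
  have hint : Integrable (fun x : ι → ℝ => ∏ j, rexp (-(ε/2) * (x j)^2)) :=
    Integrable.fintype_prod (f := fun (j : ι) (t : ℝ) => rexp (-(ε/2) * t^2))
      (fun j => integrable_exp_neg_mul_sq (by linarith))
  apply hint.mono' ((continuous_qf A).neg.rexp.aestronglyMeasurable)
  apply Eventually.of_forall
  intro x
  rw [Real.norm_eq_abs, abs_of_pos (Real.exp_pos _), ← Real.exp_sum]
  apply Real.exp_le_exp.2
  have := hco x
  show -qf A x ≤ _
  unfold qf
  rw [Finset.sum_congr rfl (fun j _ => rfl)]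
  have hsum : ∑ j, -(ε/2) * (x j)^2 = -(ε/2) * ∑ j, (x j)^2 := by
    rw [Finset.mul_sum]
  rw [hsum]
  linarith

lemma volume_univ_pos : 0 < (volume : Measure (ι → ℝ)) univ := by
  apply isOpen_univ.measure_pos volume univ_nonempty

lemma integral_pos_of_pos {f : (ι → ℝ) → ℝ} (hf : Integrable f) (hpos : ∀ x, 0 < f x) :
    0 < ∫ x, f x := by
  rw [integral_pos_iff_support_of_nonneg (fun x => (hpos x).le) hf]
  have : Function.support f = univ := by
    ext x; simp [Function.mem_support, (hpos x).ne']
  rw [this]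
  exact volume_univ_pos

/-! ### The class of normalized log-profiles -/

def Nice (A B : Matrix ι ι ℝ) (φ : (ι → ℝ) → ℝ) : Prop :=
  φ 0 = 0 ∧ (∀ x, φ (-x) = φ x) ∧ ConcaveOn ℝ univ (fun x => φ x + qf A x) ∧
    ConvexOn ℝ univ (fun x => φ x + qf B x)

lemma Nice.le_neg_qfA {A B : Matrix ι ι ℝ} {φ : (ι → ℝ) → ℝ} (hφ : Nice A B φ) (x : ι → ℝ) :
    φ x ≤ -qf A x := by
  obtain ⟨h0, hev, hconc, _⟩ := hφ
  have := hconc.2 (mem_univ x) (mem_univ (-x)) (by norm_num : (0:ℝ) ≤ 1/2)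
    (by norm_num : (0:ℝ) ≤ 1/2) (by norm_num)
  have hmix : (1/2 : ℝ) • x + (1/2 : ℝ) • (-x) = 0 := by
    rw [smul_neg]; abel
  rw [hmix] at this
  simp only [smul_eq_mul, h0, qf_zero, add_zero, qf_neg, hev] at this
  linarith

lemma Nice.neg_qfB_le {A B : Matrix ι ι ℝ} {φ : (ι → ℝ) → ℝ} (hφ : Nice A B φ) (x : ι → ℝ) :
    -qf B x ≤ φ x := by
  obtain ⟨h0, hev, _, hcvx⟩ := hφ
  have := hcvx.2 (mem_univ x) (mem_univ (-x)) (by norm_num : (0:ℝ) ≤ 1/2)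
    (by norm_num : (0:ℝ) ≤ 1/2) (by norm_num)
  have hmix : (1/2 : ℝ) • x + (1/2 : ℝ) • (-x) = 0 := by
    rw [smul_neg]; abel
  rw [hmix] at this
  simp only [smul_eq_mul, h0, qf_zero, add_zero, qf_neg, hev] at this
  linarith

lemma Nice.continuous {A B : Matrix ι ι ℝ} {φ : (ι → ℝ) → ℝ} (hφ : Nice A B φ) :
    Continuous φ := by
  have hcvx := hφ.2.2.2
  have hcont : ContinuousOn (fun x => φ x + qf B x) univ :=
    ConvexOn.continuousOn isOpen_univ hcvx
  have : Continuous (fun x => φ x + qf B x) := continuousOn_univ.1 hcont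
  have h2 : Continuous (fun x => (φ x + qf B x) - qf B x) := this.sub (continuous_qf B)
  simpa using h2

lemma nice_modulus (A B : Matrix ι ι ℝ) {R : ℝ} (hR : 0 < R) :
    ∃ C : ℝ, 0 ≤ C ∧ ∀ φ : (ι → ℝ) → ℝ, Nice A B φ → ∀ x y : ι → ℝ,
      ‖x‖ ≤ R → ‖y‖ ≤ R → |φ x - φ y| ≤ C * ‖x - y‖ := by
  set W : ℝ := SM (B - A) * (R+2) * (R+2) with hWdef
  have hW0 : 0 ≤ W := by
    have := SM_nonneg (B - A); positivity
  refine ⟨2 * W / 1 + SM B * (R + R),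
    add_nonneg (by positivity) (mul_nonneg (SM_nonneg B) (by linarith)), ?_⟩
  intro φ hφ x y hx hy
  set ψ : (ι → ℝ) → ℝ := fun x => φ x + qf B x with hψdef
  have hψconv : ConvexOn ℝ (Metric.ball (0 : ι → ℝ) (R+2)) ψ :=
    hφ.2.2.2.subset (subset_univ _) (convex_ball _ _)
  have hψbound : ∀ a : ι → ℝ, dist a 0 < R + 2 → |ψ a| ≤ W := by
    intro a ha
    rw [dist_zero_right] at ha
    have h1 : 0 ≤ ψ a := by
      have := hφ.neg_qfB_le a; simp only [hψdef]; linarith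
    have h2 : ψ a ≤ qf (B - A) a := by
      have := hφ.le_neg_qfA a
      rw [qf_sub_matrix]
      simp only [hψdef]; linarith
    rw [abs_of_nonneg h1]
    refine h2.trans ?_
    have := abs_qf_le (B - A) a
    have hna : ‖a‖ ≤ R + 2 := le_of_lt ha
    have hSn := SM_nonneg (B - A)
    have h3 : qf (B-A) a ≤ SM (B-A) * ‖a‖ * ‖a‖ := (le_abs_self _).trans this
    have h4 : SM (B-A) * ‖a‖ ≤ SM (B-A) * (R+2) := mul_le_mul_of_nonneg_left hna hSn
    have h5 : SM (B-A) * ‖a‖ * ‖a‖ ≤ SM (B-A) * (R+2) * (R+2) :=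
      mul_le_mul h4 hna (norm_nonneg a) (by positivity)
    rw [hWdef]
    linarith
  have hlip := ConvexOn.lipschitzOnWith_of_abs_le hψconv one_pos hψbound
  have hx' : x ∈ Metric.ball (0 : ι → ℝ) (R + 2 - 1) := by
    rw [Metric.mem_ball, dist_zero_right]; linarith
  have hy' : y ∈ Metric.ball (0 : ι → ℝ) (R + 2 - 1) := by
    rw [Metric.mem_ball, dist_zero_right]; linarith
  have hd := hlip.dist_le_mul x hx' y hy'
  rw [Real.dist_eq, dist_eq_norm] at hd
  have hcoe : ((2 * W / 1).toNNReal : ℝ) = 2 * W / 1 := Real.coe_toNNReal _ (by positivity)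
  rw [hcoe] at hd
  have hqf := abs_qf_sub_le B x y
  have hφsub : φ x - φ y = (ψ x - ψ y) - (qf B x - qf B y) := by
    simp only [hψdef]; ring
  rw [hφsub]
  have habs : |(ψ x - ψ y) - (qf B x - qf B y)| ≤ |ψ x - ψ y| + |qf B x - qf B y| :=
    abs_sub _ _
  refine habs.trans ?_
  have hSB := SM_nonneg B
  have h2 : |qf B x - qf B y| ≤ SM B * (R + R) * ‖x - y‖ := by
    refine hqf.trans ?_
    have : SM B * (‖x‖ + ‖y‖) ≤ SM B * (R + R) := by
      apply mul_le_mul_of_nonneg_left (by linarith) hSB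
    exact mul_le_mul_of_nonneg_right this (norm_nonneg _)
  rw [add_mul]
  linarith [hd, h2]

lemma gauss_eq (A : Matrix ι ι ℝ) (x : ι → ℝ) : gaussFn A x = rexp (-qf A x) := by
  unfold gaussFn qf; rw [neg_mul]

lemma nice_block {A B : Matrix ι ι ℝ} (hA : A.PosDef) {φ : (ι → ℝ) → ℝ} (hφ : Nice A B φ) :
    Integrable (fun x : ι → ℝ => rexp (φ x)) ∧ (∀ x, (0:ℝ) ≤ rexp (φ x)) ∧
    (∀ x : ι → ℝ, rexp (φ (-x)) = rexp (φ x)) ∧ (0 < ∫ x : ι → ℝ, rexp (φ x)) ∧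
    MoreLogConcaveThan A (fun x => rexp (φ x)) ∧ MoreLogConvexThan B (fun x => rexp (φ x)) := by
  have hcont : Continuous φ := hφ.continuous
  have hint : Integrable (fun x : ι → ℝ => rexp (φ x)) := by
    apply (integrable_exp_neg_qf hA).mono' (hcont.rexp).aestronglyMeasurable
    apply Eventually.of_forall
    intro x
    rw [Real.norm_eq_abs, abs_of_pos (Real.exp_pos _)]
    exact Real.exp_le_exp.2 (hφ.le_neg_qfA x)
  refine ⟨hint, fun x => (Real.exp_pos _).le, fun x => by rw [hφ.2.1 x],
    integral_pos_of_pos hint (fun x => Real.exp_pos _), ?_, ?_⟩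
  · refine ⟨fun x => rexp (φ x + qf A x), ⟨fun x => (Real.exp_pos _).le, ?_⟩, ?_⟩
    · intro x y t ht h1t
      rw [← Real.exp_mul, ← Real.exp_mul, ← Real.exp_add]
      apply Real.exp_le_exp.2
      have := hφ.2.2.1.2 (mem_univ x) (mem_univ y) ht (by linarith : (0:ℝ) ≤ 1 - t)
        (by ring : t + (1 - t) = 1)
      simp only [smul_eq_mul] at this
      linarith
    · funext x
      rw [gauss_eq, ← Real.exp_add]
      congr 1
      ring
  · refine ⟨fun x => rexp (φ x + qf B x), ⟨fun x => (Real.exp_pos _).le, ?_⟩, ?_⟩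
    · intro x y t ht h1t
      rw [← Real.exp_mul, ← Real.exp_mul, ← Real.exp_add]
      apply Real.exp_le_exp.2
      have := hφ.2.2.2.2 (mem_univ x) (mem_univ y) ht (by linarith : (0:ℝ) ≤ 1 - t)
        (by ring : t + (1 - t) = 1)
      simp only [smul_eq_mul] at this
      linarith
    · funext x
      rw [gauss_eq, ← Real.exp_add]
      congr 1
      ring

lemma exists_nice {A B : Matrix ι ι ℝ} {f : (ι → ℝ) → ℝ}
    (hint : Integrable f) (hpos : ∀ x, 0 ≤ f x) (hev : ∀ x, f (-x) = f x)
    (hipos : 0 < ∫ x : ι → ℝ, f x) (hlc : MoreLogConcaveThan A f) (hlv : MoreLogConvexThan B f) :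
    ∃ φ, Nice A B φ ∧ 0 < f 0 ∧ f = fun x => f 0 * rexp (φ x) := by
  obtain ⟨h, ⟨hh0, hhc⟩, hfeq⟩ := hlc
  obtain ⟨h₂, ⟨hh₂0, hh₂c⟩, hfeq₂⟩ := hlv
  have hfx : ∀ x, f x = rexp (-qf A x) * h x := by
    intro x; have := congrFun hfeq x; rwa [gauss_eq] at this
  have hfx₂ : ∀ x, f x = rexp (-qf B x) * h₂ x := by
    intro x; have := congrFun hfeq₂ x; rwa [gauss_eq] at this
  have hh : ∀ x, h x = f x * rexp (qf A x) := by
    intro x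
    rw [hfx x, mul_comm (rexp (-qf A x)) (h x), mul_assoc, ← Real.exp_add]
    simp
  have hh₂ : ∀ x, h₂ x = f x * rexp (qf B x) := by
    intro x
    rw [hfx₂ x, mul_comm (rexp (-qf B x)) (h₂ x), mul_assoc, ← Real.exp_add]
    simp
  have hhev : ∀ x, h (-x) = h x := by
    intro x; rw [hh, hh, qf_neg, hev]
  have hh₂ev : ∀ x, h₂ (-x) = h₂ x := by
    intro x; rw [hh₂, hh₂, qf_neg, hev]
  have hmix : ∀ x : ι → ℝ, (1/2 : ℝ) • x + (1 - 1/2 : ℝ) • (-x) = 0 := by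
    intro x; rw [smul_neg]; norm_num
  have hhle : ∀ x, h x ≤ h 0 := by
    intro x
    have := hhc x (-x) (1/2) (by norm_num) (by norm_num)
    rw [hmix x, hhev x, ← Real.rpow_add' (hh0 x) (by norm_num)] at this
    norm_num at this
    exact this
  have hh₂ge : ∀ x, h₂ 0 ≤ h₂ x := by
    intro x
    have := hh₂c x (-x) (1/2) (by norm_num) (by norm_num)
    rw [hmix x, hh₂ev x, ← Real.rpow_add' (hh₂0 x) (by norm_num)] at this
    norm_num at this
    exact this
  have hf0h : f 0 = h 0 := by
    have := hfx 0; rw [qf_zero] at this; simpa using this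
  have hf0h₂ : f 0 = h₂ 0 := by
    have := hfx₂ 0; rw [qf_zero] at this; simpa using this
  have hf0 : 0 < f 0 := by
    rcases eq_or_lt_of_le (hpos 0) with hz | hp
    · exfalso
      have hfz : ∀ x, f x = 0 := by
        intro x
        refine le_antisymm ?_ (hpos x)
        calc f x = rexp (-qf A x) * h x := hfx x
          _ ≤ rexp (-qf A x) * h 0 := by
              apply mul_le_mul_of_nonneg_left (hhle x) (Real.exp_pos _).le
          _ = 0 := by rw [← hf0h, ← hz]; ring
      rw [show f = (fun _ : ι → ℝ => (0:ℝ)) from funext hfz] at hipos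
      simp at hipos
    · exact hp
  have hfpos : ∀ x, 0 < f x := by
    intro x
    rw [hfx₂ x]
    have : 0 < h₂ x := lt_of_lt_of_le (by rw [← hf0h₂]; exact hf0) (hh₂ge x)
    exact mul_pos (Real.exp_pos _) this
  have hhpos : ∀ x, 0 < h x := by
    intro x; rw [hh x]; exact mul_pos (hfpos x) (Real.exp_pos _)
  have hh₂pos : ∀ x, 0 < h₂ x := by
    intro x; rw [hh₂ x]; exact mul_pos (hfpos x) (Real.exp_pos _)
  refine ⟨fun x => Real.log (f x) - Real.log (f 0), ⟨by simp, ?_, ?_, ?_⟩, hf0, ?_⟩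
  · intro x
    show Real.log (f (-x)) - Real.log (f 0) = Real.log (f x) - Real.log (f 0)
    rw [hev x]
  · -- concave part
    have hkey : ∀ x, Real.log (f x) - Real.log (f 0) + qf A x
        = Real.log (h x) - Real.log (f 0) := by
      intro x
      rw [hfx x, Real.log_mul (Real.exp_pos _).ne' (hhpos x).ne', Real.log_exp]
      ring
    refine ⟨convex_univ, ?_⟩
    intro x _ y _ a b ha hb hab
    simp only [smul_eq_mul, hkey]
    have hineq := hhc x y a ha (by linarith)
    rw [show (1 - a) = b by linarith] at hineq
    have hlog := Real.log_le_log
      (mul_pos (Real.rpow_pos_of_pos (hhpos x) a) (Real.rpow_pos_of_pos (hhpos y) b)) hineq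
    rw [Real.log_mul (Real.rpow_pos_of_pos (hhpos x) a).ne' (Real.rpow_pos_of_pos (hhpos y) b).ne',
      Real.log_rpow (hhpos x), Real.log_rpow (hhpos y)] at hlog
    have hexp : a * (Real.log (h x) - Real.log (f 0)) + b * (Real.log (h y) - Real.log (f 0))
        = a * Real.log (h x) + b * Real.log (h y) - (a + b) * Real.log (f 0) := by ring
    rw [hexp, hab, one_mul]
    linarith [hlog]
  · -- convex part
    have hkey : ∀ x, Real.log (f x) - Real.log (f 0) + qf B x
        = Real.log (h₂ x) - Real.log (f 0) := by
      intro x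
      rw [hfx₂ x, Real.log_mul (Real.exp_pos _).ne' (hh₂pos x).ne', Real.log_exp]
      ring
    refine ⟨convex_univ, ?_⟩
    intro x _ y _ a b ha hb hab
    simp only [smul_eq_mul, hkey]
    have hineq := hh₂c x y a ha (by linarith)
    rw [show (1 - a) = b by linarith] at hineq
    have hlog := Real.log_le_log (hh₂pos _) hineq
    rw [Real.log_mul (Real.rpow_pos_of_pos (hh₂pos x) a).ne' (Real.rpow_pos_of_pos (hh₂pos y) b).ne',
      Real.log_rpow (hh₂pos x), Real.log_rpow (hh₂pos y)] at hlog
    have hexp : a * (Real.log (h₂ x) - Real.log (f 0)) + b * (Real.log (h₂ y) - Real.log (f 0))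
        = a * Real.log (h₂ x) + b * Real.log (h₂ y) - (a + b) * Real.log (f 0) := by ring
    rw [hexp, hab, one_mul]
    linarith [hlog]
  · funext x
    rw [Real.exp_sub, Real.exp_log (hfpos x), Real.exp_log hf0]
    field_simp

lemma nice_limit {A B : Matrix ι ι ℝ} {φk : ℕ → (ι → ℝ) → ℝ} (hk : ∀ k, Nice A B (φk k))
    {d : ℕ → ι → ℝ} (hd : DenseRange d)
    (hcv : ∀ j : ℕ, ∃ L : ℝ, Tendsto (fun k => φk k (d j)) atTop (𝓝 L)) :
    ∃ φ : (ι → ℝ) → ℝ, Nice A B φ ∧ ∀ x, Tendsto (fun k => φk k x) atTop (𝓝 (φ x)) := by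
  have key : ∀ x : ι → ℝ, ∃ L : ℝ, Tendsto (fun k => φk k x) atTop (𝓝 L) := by
    intro x
    apply cauchySeq_tendsto_of_complete
    rw [Metric.cauchySeq_iff]
    intro ε hε
    set R : ℝ := ‖x‖ + 1 with hR
    have hRpos : 0 < R := by positivity
    obtain ⟨C, hC0, hC⟩ := nice_modulus A B hRpos
    set δ : ℝ := min (ε / (3 * (C + 1))) 1 with hδ
    have hδpos : 0 < δ := by
      apply lt_min _ one_pos
      apply div_pos hε (by linarith)
    obtain ⟨j, hj⟩ := hd.exists_dist_lt x hδpos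
    have hdx : ‖x - d j‖ < δ := by
      rwa [dist_eq_norm] at hj
    have hdj_norm : ‖d j‖ ≤ R := by
      have h2 := norm_sub_norm_le (d j) x
      have h3 : ‖d j - x‖ = ‖x - d j‖ := norm_sub_rev _ _
      have h4 : δ ≤ 1 := min_le_right _ _
      rw [hR]
      linarith
    have hxnorm : ‖x‖ ≤ R := by rw [hR]; linarith
    have hCδ : C * δ ≤ ε / 3 := by
      have h₁ : C * δ ≤ C * (ε / (3*(C+1))) :=
        mul_le_mul_of_nonneg_left (min_le_left _ _) hC0
      have h₂ : C * (ε / (3*(C+1))) ≤ ε/3 := by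
        rw [mul_div_assoc', div_le_div_iff₀ (by positivity) (by norm_num)]
        nlinarith [hC0, hε.le]
      linarith
    obtain ⟨L, hL⟩ := hcv j
    obtain ⟨N, hN⟩ := Metric.cauchySeq_iff.1 hL.cauchySeq (ε/3) (by linarith)
    refine ⟨N, fun m hm n hn => ?_⟩
    have h1 : |φk m x - φk m (d j)| ≤ C * ‖x - d j‖ := hC _ (hk m) x (d j) hxnorm hdj_norm
    have h2 : |φk n (d j) - φk n x| ≤ C * ‖d j - x‖ := hC _ (hk n) (d j) x hdj_norm hxnorm
    have h3 := hN m hm n hn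
    rw [Real.dist_eq] at h3 ⊢
    have htri : |φk m x - φk n x| ≤ |φk m x - φk m (d j)| + |φk m (d j) - φk n (d j)|
        + |φk n (d j) - φk n x| := by
      have t1 := abs_sub_le (φk m x) (φk m (d j)) (φk n x)
      have t2 := abs_sub_le (φk m (d j)) (φk n (d j)) (φk n x)
      linarith
    have hb1 : C * ‖x - d j‖ ≤ ε / 3 := by
      have := mul_le_mul_of_nonneg_left hdx.le hC0
      linarith
    have hb2 : C * ‖d j - x‖ ≤ ε / 3 := by
      rw [norm_sub_rev]
      have := mul_le_mul_of_nonneg_left hdx.le hC0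
      linarith
    linarith
  choose φ hφ using key
  have hzero : φ 0 = 0 := by
    have h1 : (fun k => φk k 0) = fun _ => (0:ℝ) := funext fun k => (hk k).1
    refine tendsto_nhds_unique (hφ 0) ?_
    rw [h1]
    exact tendsto_const_nhds
  have heven : ∀ x, φ (-x) = φ x := by
    intro x
    refine tendsto_nhds_unique (hφ (-x)) ?_
    have h1 : (fun k => φk k (-x)) = fun k => φk k x := funext fun k => (hk k).2.1 x
    rw [h1]
    exact hφ x
  refine ⟨φ, ⟨hzero, heven, ⟨convex_univ, ?_⟩, ⟨convex_univ, ?_⟩⟩, hφ⟩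
  · intro x _ y _ a b ha hb hab
    simp only [smul_eq_mul]
    have h1 : Tendsto (fun k => a * (φk k x + qf A x) + b * (φk k y + qf A y)) atTop
        (𝓝 (a * (φ x + qf A x) + b * (φ y + qf A y))) :=
      (((hφ x).add tendsto_const_nhds).const_mul a).add
        (((hφ y).add tendsto_const_nhds).const_mul b)
    have h2 : Tendsto (fun k => φk k (a • x + b • y) + qf A (a • x + b • y)) atTop
        (𝓝 (φ (a • x + b • y) + qf A (a • x + b • y))) :=
      (hφ _).add tendsto_const_nhds
    refine le_of_tendsto_of_tendsto' h1 h2 ?_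
    intro k
    have := (hk k).2.2.1.2 (mem_univ x) (mem_univ y) ha hb hab
    simpa only [smul_eq_mul] using this
  · intro x _ y _ a b ha hb hab
    simp only [smul_eq_mul]
    have h1 : Tendsto (fun k => a * (φk k x + qf B x) + b * (φk k y + qf B y)) atTop
        (𝓝 (a * (φ x + qf B x) + b * (φ y + qf B y))) :=
      (((hφ x).add tendsto_const_nhds).const_mul a).add
        (((hφ y).add tendsto_const_nhds).const_mul b)
    have h2 : Tendsto (fun k => φk k (a • x + b • y) + qf B (a • x + b • y)) atTop
        (𝓝 (φ (a • x + b • y) + qf B (a • x + b • y))) :=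
      (hφ _).add tendsto_const_nhds
    refine le_of_tendsto_of_tendsto' h2 h1 ?_
    intro k
    have := (hk k).2.2.2.2 (mem_univ x) (mem_univ y) ha hb hab
    simpa only [smul_eq_mul] using this

end NT

section Global
open NT

variable {m : ℕ} {n : Fin m → ℕ}

lemma NT.nice_negA {ι : Type*} [Fintype ι] {A B : Matrix ι ι ℝ} (hBA : (B - A).PosSemidef) :
    Nice A B (fun x => -qf A x) := by
  refine ⟨by simp [qf_zero], fun x => by show -qf A (-x) = -qf A x; rw [qf_neg], ?_, ?_⟩
  · have h : (fun x : ι → ℝ => -qf A x + qf A x) = fun _ => (0:ℝ) := funext fun x => by ring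
    rw [h]
    exact concaveOn_const 0 convex_univ
  · have h : (fun x : ι → ℝ => -qf A x + qf B x) = fun x => qf (B - A) x :=
      funext fun x => by rw [qf_sub_matrix]; ring
    rw [h]
    exact convexOn_qf hBA

lemma memFAB_of_nice (A B : ∀ i, Matrix (Fin (n i)) (Fin (n i)) ℝ) (hA : ∀ i, (A i).PosDef)
    (φ : ∀ i, (Fin (n i) → ℝ) → ℝ) (hφ : ∀ i, NT.Nice (A i) (B i) (φ i)) :
    memFAB A B (fun i => fun x => rexp (φ i x)) := by
  constructor
  · intro i
    obtain ⟨h1, h2, h3, h4, h5, _⟩ := NT.nice_block (hA i) (hφ i)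
    exact ⟨h1, h2, h3, h4, h5⟩
  · intro i
    exact (NT.nice_block (hA i) (hφ i)).2.2.2.2.2

lemma BL_nonneg_s15 (Q : Matrix ((i : Fin m) × Fin (n i)) ((i : Fin m) × Fin (n i)) ℝ)
    (c : Fin m → ℝ) {A B : ∀ i, Matrix (Fin (n i)) (Fin (n i)) ℝ}
    {g : ∀ i, (Fin (n i) → ℝ) → ℝ} (hg : memFAB A B g) : 0 ≤ BL Q c g := by
  unfold BL
  apply div_nonneg
  · apply integral_nonneg
    intro x
    apply mul_nonneg (Real.exp_pos _).le
    apply Finset.prod_nonneg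
    intro i _
    exact Real.rpow_nonneg ((hg.1 i).2.1 _) _
  · apply Finset.prod_nonneg
    intro i _
    exact Real.rpow_nonneg (le_of_lt (hg.1 i).2.2.2.1) _

lemma BL_exp (Q : Matrix ((i : Fin m) × Fin (n i)) ((i : Fin m) × Fin (n i)) ℝ)
    (c : Fin m → ℝ) (φ : ∀ i, (Fin (n i) → ℝ) → ℝ) :
    BL Q c (fun i => fun x => rexp (φ i x)) =
      (∫ x : ((i : Fin m) × Fin (n i)) → ℝ,
        rexp (-NT.qf Q x + ∑ i, c i * φ i (fun j => x ⟨i, j⟩))) /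
      ∏ i, (∫ y : Fin (n i) → ℝ, rexp (φ i y)) ^ c i := by
  unfold BL
  congr 1
  apply integral_congr_ae
  apply Eventually.of_forall
  intro x
  show rexp (-(1/2 : ℝ) * (x ⬝ᵥ Q.mulVec x)) * ∏ i, rexp (φ i (fun j => x ⟨i, j⟩)) ^ c i = _
  rw [show -(1/2 : ℝ) * (x ⬝ᵥ Q.mulVec x) = -NT.qf Q x from by unfold NT.qf; ring]
  rw [Finset.prod_congr rfl (fun i _ => (Real.exp_mul (φ i (fun j => x ⟨i, j⟩)) (c i)).symm),
    ← Real.exp_sum, ← Real.exp_add]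
  congr 1
  rw [Finset.sum_congr rfl (fun i _ => mul_comm (φ i (fun j => x ⟨i, j⟩)) (c i))]

lemma BL_scale (Q : Matrix ((i : Fin m) × Fin (n i)) ((i : Fin m) × Fin (n i)) ℝ)
    (c : Fin m → ℝ) (φ : ∀ i, (Fin (n i) → ℝ) → ℝ) (C : Fin m → ℝ) (hC : ∀ i, 0 < C i) :
    BL Q c (fun i => fun x => C i * rexp (φ i x)) = BL Q c (fun i => fun x => rexp (φ i x)) := by
  unfold BL
  set K : ℝ := ∏ i, C i ^ c i with hK
  have hKpos : 0 < K := Finset.prod_pos (fun i _ => Real.rpow_pos_of_pos (hC i) _)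
  have hnum : (∫ x : ((i : Fin m) × Fin (n i)) → ℝ,
      rexp (-(1/2 : ℝ) * (x ⬝ᵥ Q.mulVec x)) * ∏ i, (C i * rexp (φ i (fun j => x ⟨i, j⟩))) ^ c i)
      = K * ∫ x : ((i : Fin m) × Fin (n i)) → ℝ,
        rexp (-(1/2 : ℝ) * (x ⬝ᵥ Q.mulVec x)) * ∏ i, rexp (φ i (fun j => x ⟨i, j⟩)) ^ c i := by
    rw [← integral_const_mul]
    apply integral_congr_ae
    apply Eventually.of_forall
    intro x
    show rexp (-(1/2 : ℝ) * (x ⬝ᵥ Q.mulVec x)) * ∏ i, (C i * rexp (φ i (fun j => x ⟨i, j⟩))) ^ c i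
      = K * (rexp (-(1/2 : ℝ) * (x ⬝ᵥ Q.mulVec x)) * ∏ i, rexp (φ i (fun j => x ⟨i, j⟩)) ^ c i)
    rw [Finset.prod_congr rfl (fun i _ =>
      Real.mul_rpow (hC i).le (Real.exp_pos _).le), Finset.prod_mul_distrib, hK]
    ring
  have hden : ∀ i, (∫ y : Fin (n i) → ℝ, C i * rexp (φ i y)) ^ c i
      = C i ^ c i * (∫ y : Fin (n i) → ℝ, rexp (φ i y)) ^ c i := by
    intro i
    rw [integral_const_mul]
    exact Real.mul_rpow (hC i).le (integral_nonneg (fun y => (Real.exp_pos _).le))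
  rw [hnum, Finset.prod_congr rfl (fun i _ => hden i), Finset.prod_mul_distrib, ← hK]
  exact mul_div_mul_left _ _ hKpos.ne'

end Global

/-- Step 1 of the Nakamura–Tsuji scheme: for `0 < A_i ≤ B_i`, the infimum
`I_{A,B} = inf_{f ∈ F_{A,B}} BL(f)` is attained by some `f ∈ F_{A,B}`. -/
theorem inf_BL_attained
    (m : ℕ) (n : Fin m → ℕ)
    (Q : Matrix ((i : Fin m) × Fin (n i)) ((i : Fin m) × Fin (n i)) ℝ) (hQ : Q.IsSymm)
    (c : Fin m → ℝ) (hc : ∀ i, 0 < c i)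
    (A B : ∀ i, Matrix (Fin (n i)) (Fin (n i)) ℝ)
    (hA : ∀ i, (A i).PosDef) (hBsymm : ∀ i, (B i).IsSymm)
    (hAB : ∀ i, (B i - A i).PosSemidef) :
    ∃ f, memFAB A B f ∧ BL Q c f = sInf {r : ℝ | ∃ g, memFAB A B g ∧ r = BL Q c g} := by
  classical
  set S : Set ℝ := {r : ℝ | ∃ g, memFAB A B g ∧ r = BL Q c g} with hSdef
  have hgaussNice : ∀ i, NT.Nice (A i) (B i) (fun x => -NT.qf (A i) x) :=
    fun i => NT.nice_negA (hAB i)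
  have hgaussfun : (fun i => gaussFn (A i)) =
      (fun i => fun x => rexp ((fun y => -NT.qf (A i) y) x)) := by
    funext i x
    exact NT.gauss_eq (A i) x
  have hgaussMem : memFAB A B (fun i => gaussFn (A i)) := by
    rw [hgaussfun]
    exact memFAB_of_nice A B hA _ hgaussNice
  have hSne : S.Nonempty := ⟨BL Q c (fun i => gaussFn (A i)), ⟨_, hgaussMem, rfl⟩⟩
  have hSbdd : BddBelow S := by
    refine ⟨0, fun r hr => ?_⟩
    obtain ⟨g, hg, rfl⟩ := hr
    exact BL_nonneg_s15 Q c hg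
  by_cases hI : Integrable (fun x : ((i : Fin m) × Fin (n i)) → ℝ =>
      rexp (-NT.qf Q x + ∑ i, c i * (fun y => -NT.qf (A i) y) (fun j => x ⟨i, j⟩)))
  case neg =>
    have hBL0 : BL Q c (fun i => gaussFn (A i)) = 0 := by
      rw [hgaussfun, BL_exp, integral_undef hI, zero_div]
    have h0S : (0:ℝ) ∈ S := ⟨_, hgaussMem, hBL0.symm⟩
    have hinf : sInf S = 0 := le_antisymm (csInf_le hSbdd h0S)
      (le_csInf hSne (fun r hr => by obtain ⟨g, hg, rfl⟩ := hr; exact BL_nonneg_s15 Q c hg))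
    exact ⟨_, hgaussMem, by rw [hBL0, hinf]⟩
  case pos =>
    set T : ℝ := sInf S with hT
    have hseq : ∀ k : ℕ, ∃ g, memFAB A B g ∧ BL Q c g < T + 1/((k:ℝ)+1) := by
      intro k
      have hpos : 0 < 1/((k:ℝ)+1) := by positivity
      obtain ⟨r, hrS, hrlt⟩ := Real.lt_sInf_add_pos hSne hpos
      obtain ⟨g, hg, rfl⟩ := hrS
      exact ⟨g, hg, hrlt⟩
    choose g hgmem hglt using hseq
    have hblock : ∀ k i, ∃ φ, NT.Nice (A i) (B i) φ ∧ 0 < g k i 0 ∧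
        g k i = fun x => g k i 0 * rexp (φ x) := by
      intro k i
      obtain ⟨h1, h2, h3, h4, h5⟩ := (hgmem k).1 i
      exact NT.exists_nice h1 h2 h3 h4 h5 ((hgmem k).2 i)
    choose Φ hΦnice hΦ0 hΦeq using hblock
    have hBLg : ∀ k, BL Q c (g k) = BL Q c (fun i => fun x => rexp (Φ k i x)) := by
      intro k
      have hgk : g k = fun i => fun x => g k i 0 * rexp (Φ k i x) := funext fun i => hΦeq k i
      rw [hgk, BL_scale Q c (Φ k) (fun i => g k i 0) (fun i => hΦ0 k i)]
    have hdseq : ∀ i : Fin m, ∃ dd : ℕ → (Fin (n i) → ℝ), DenseRange dd := fun i =>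
      TopologicalSpace.exists_dense_seq _
    choose d hd using hdseq
    have hscomp : IsCompact (Set.pi Set.univ (fun i : Fin m => Set.pi Set.univ
        (fun j : ℕ => Icc (-NT.qf (B i) (d i j)) (-NT.qf (A i) (d i j))))) :=
      isCompact_univ_pi (fun i => isCompact_univ_pi (fun j => isCompact_Icc))
    have humem : ∀ k, (fun i j => Φ k i (d i j)) ∈ Set.pi Set.univ (fun i : Fin m => Set.pi Set.univ
        (fun j : ℕ => Icc (-NT.qf (B i) (d i j)) (-NT.qf (A i) (d i j)))) := by
      intro k i _ j _
      exact ⟨(hΦnice k i).neg_qfB_le (d i j), (hΦnice k i).le_neg_qfA (d i j)⟩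
    obtain ⟨p, hps, σ, hσ, hσtend⟩ := hscomp.tendsto_subseq humem
    have hcoord : ∀ i j, Tendsto (fun k => Φ (σ k) i (d i j)) atTop (𝓝 (p i j)) := by
      intro i j
      exact tendsto_pi_nhds.1 (tendsto_pi_nhds.1 hσtend i) j
    have hlim : ∀ i, ∃ φ, NT.Nice (A i) (B i) φ ∧
        ∀ x, Tendsto (fun k => Φ (σ k) i x) atTop (𝓝 (φ x)) := by
      intro i
      exact NT.nice_limit (fun k => hΦnice (σ k) i) (hd i) (fun j => ⟨p i j, hcoord i j⟩)
    choose ψ hψnice hψtend using hlim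
    have hmemf : memFAB A B (fun i => fun x => rexp (ψ i x)) := memFAB_of_nice A B hA ψ hψnice
    -- numerator convergence
    have hnumtend : Tendsto (fun k => ∫ x : ((i : Fin m) × Fin (n i)) → ℝ,
        rexp (-NT.qf Q x + ∑ i, c i * (fun y => Φ (σ k) i y) (fun j => x ⟨i, j⟩))) atTop
        (𝓝 (∫ x : ((i : Fin m) × Fin (n i)) → ℝ,
          rexp (-NT.qf Q x + ∑ i, c i * (fun y => ψ i y) (fun j => x ⟨i, j⟩)))) := by
      apply tendsto_integral_of_dominated_convergence
        (fun x => rexp (-NT.qf Q x + ∑ i, c i * (fun y => -NT.qf (A i) y) (fun j => x ⟨i, j⟩)))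
      · intro k
        apply Continuous.aestronglyMeasurable
        apply Continuous.rexp
        apply Continuous.add (NT.continuous_qf Q).neg
        apply continuous_finset_sum
        intro i _
        exact continuous_const.mul (((hΦnice (σ k) i).continuous).comp
          (continuous_pi (fun j => continuous_apply (⟨i, j⟩ : (i : Fin m) × Fin (n i)))))
      · exact hI
      · intro k
        apply Eventually.of_forall
        intro x
        rw [Real.norm_eq_abs, abs_of_pos (Real.exp_pos _)]
        apply Real.exp_le_exp.2
        apply add_le_add le_rfl
        apply Finset.sum_le_sum
        intro i _
        exact mul_le_mul_of_nonneg_left ((hΦnice (σ k) i).le_neg_qfA _) (hc i).le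
      · apply Eventually.of_forall
        intro x
        apply (Real.continuous_exp.tendsto _).comp
        apply Tendsto.add tendsto_const_nhds
        apply tendsto_finset_sum
        intro i _
        exact (hψtend i _).const_mul (c i)
    -- denominator convergence
    have hdenpos : ∀ i, 0 < ∫ y : Fin (n i) → ℝ, rexp (ψ i y) := by
      intro i
      exact (NT.nice_block (hA i) (hψnice i)).2.2.2.1
    have hdentend : ∀ i, Tendsto (fun k => ∫ y : Fin (n i) → ℝ, rexp (Φ (σ k) i y)) atTop
        (𝓝 (∫ y : Fin (n i) → ℝ, rexp (ψ i y))) := by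
      intro i
      apply tendsto_integral_of_dominated_convergence (fun y => rexp (-NT.qf (A i) y))
      · intro k
        exact ((hΦnice (σ k) i).continuous.rexp).aestronglyMeasurable
      · exact NT.integrable_exp_neg_qf (hA i)
      · intro k
        apply Eventually.of_forall
        intro y
        rw [Real.norm_eq_abs, abs_of_pos (Real.exp_pos _)]
        exact Real.exp_le_exp.2 ((hΦnice (σ k) i).le_neg_qfA y)
      · apply Eventually.of_forall
        intro y
        exact (Real.continuous_exp.tendsto _).comp (hψtend i y)
    have hdenprod : Tendsto (fun k => ∏ i, (∫ y : Fin (n i) → ℝ, rexp (Φ (σ k) i y)) ^ c i) atTop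
        (𝓝 (∏ i, (∫ y : Fin (n i) → ℝ, rexp (ψ i y)) ^ c i)) := by
      apply tendsto_finset_prod
      intro i _
      exact (hdentend i).rpow_const (Or.inl (hdenpos i).ne')
    have hdenprodpos : 0 < ∏ i, (∫ y : Fin (n i) → ℝ, rexp (ψ i y)) ^ c i :=
      Finset.prod_pos (fun i _ => Real.rpow_pos_of_pos (hdenpos i) _)
    have hBLtend : Tendsto (fun k => BL Q c (fun i => fun x => rexp (Φ (σ k) i x))) atTop
        (𝓝 (BL Q c (fun i => fun x => rexp (ψ i x)))) := by
      simp only [BL_exp]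
      exact hnumtend.div hdenprod hdenprodpos.ne'
    have hTlow : ∀ k, T ≤ BL Q c (fun i => fun x => rexp (Φ (σ k) i x)) := by
      intro k
      rw [← hBLg (σ k)]
      exact csInf_le hSbdd ⟨g (σ k), hgmem _, rfl⟩
    have hThigh : ∀ k, BL Q c (fun i => fun x => rexp (Φ (σ k) i x)) ≤ T + 1/((σ k : ℝ)+1) := by
      intro k
      rw [← hBLg (σ k)]
      exact (hglt (σ k)).le
    have hupper : Tendsto (fun k => T + 1/((σ k : ℝ)+1)) atTop (𝓝 T) := by
      have h0 : Tendsto (fun k : ℕ => 1/((σ k : ℝ)+1)) atTop (𝓝 0) :=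
        tendsto_one_div_add_atTop_nhds_zero_nat.comp hσ.tendsto_atTop
      have := tendsto_const_nhds.add h0 (f := fun _ : ℕ => T) (x := atTop)
      simpa using this
    have hsq : Tendsto (fun k => BL Q c (fun i => fun x => rexp (Φ (σ k) i x))) atTop (𝓝 T) :=
      tendsto_of_tendsto_of_tendsto_of_le_of_le tendsto_const_nhds hupper hTlow hThigh
    exact ⟨_, hmemf, tendsto_nhds_unique hBLtend hsq⟩
end

section
/- Let Σ be an N×N positive-definite real symmetric matrix written in block form Σ = [[Σ_1, Σ_o],[Σ_o^*, Σ_2]] corresponding to ℝ^N = ℝ^{n_1} ⊕ ℝ^{n_2}, and for s ∈ [0,1] set Σ^(s) := [[Σ_1, sΣ_o],[sΣ_o^*, Σ_2]]. Then for all positive semi-definite n_i×n_i matrices A_i ≥ 0, i = 1,2, the function [0,1] ∋ s ↦ det(Id_N + (A_1 ⊕ A_2) Σ^(s)) is monotone non-increasing. In particular, inf_{A_1,A_2 ≥ 0} det(Id_N + (A_1 ⊕ A_2)(Σ_1 ⊕ Σ_2)) / det(Id_N + (A_1 ⊕ A_2) Σ) = 1. -/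
open Matrix

section RoyenAux

open scoped MatrixOrder

variable {k l : Type*} [Fintype k] [DecidableEq k] [Fintype l] [DecidableEq l]

private lemma aux_psd_smul {c : ℝ} (hc : 0 ≤ c) {X : Matrix k k ℝ} (hX : X.PosSemidef) :
    (c • X).PosSemidef := by
  refine PosSemidef.of_dotProduct_mulVec_nonneg ?_ (fun x => ?_)
  · show (c • X)ᴴ = c • X
    rw [conjTranspose_smul, star_trivial, hX.1]
  · rw [smul_mulVec, dotProduct_smul, smul_eq_mul]
    exact mul_nonneg hc (hX.dotProduct_mulVec_nonneg x)

private lemma aux_one_le_det {N : Matrix k k ℝ} (hN : N.PosSemidef) : 1 ≤ (1 + N).det := by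
  have hH := hN.isHermitian
  have hU : (hH.eigenvectorUnitary : Matrix k k ℝ) *
      star (hH.eigenvectorUnitary : Matrix k k ℝ) = 1 :=
    Matrix.mem_unitaryGroup_iff.mp hH.eigenvectorUnitary.2
  have h1 : (1 : Matrix k k ℝ) + N =
      (hH.eigenvectorUnitary : Matrix k k ℝ) *
        (1 + diagonal (RCLike.ofReal ∘ hH.eigenvalues)) *
        star (hH.eigenvectorUnitary : Matrix k k ℝ) := by
    rw [Matrix.mul_add, Matrix.add_mul, Matrix.mul_one, hU]
    nth_rewrite 1 [hH.spectral_theorem]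
    rw [Unitary.conjStarAlgAut_apply, Matrix.mul_assoc]
  rw [h1, det_mul_right_comm, hU, Matrix.one_mul]
  have h2 : (1 : Matrix k k ℝ) + diagonal (RCLike.ofReal ∘ hH.eigenvalues) =
      diagonal (fun i => 1 + hH.eigenvalues i) := by
    rw [← diagonal_one, diagonal_add]
    congr 1
  rw [h2, det_diagonal]
  calc (1:ℝ) = ∏ _i : k, 1 := by simp
  _ ≤ ∏ i, (1 + hH.eigenvalues i) := by
      refine Finset.prod_le_prod (fun i _ => zero_le_one) (fun i _ => ?_)
      have := hN.eigenvalues_nonneg i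
      linarith

private lemma aux_det_le {Q Y : Matrix k k ℝ} (hQ : Q.PosDef) (hY : Y.PosSemidef) :
    Q.det ≤ (Q + Y).det := by
  set R := CFC.sqrt Q with hRdef
  have hR : R.PosSemidef := (CFC.sqrt_nonneg Q).posSemidef
  have hRR : R * R = Q := CFC.sqrt_mul_sqrt_self Q hQ.posSemidef.nonneg
  have hdetQ : 0 < Q.det := hQ.det_pos
  have hdetR : IsUnit R.det := by
    rw [← hRR, det_mul] at hdetQ
    have hne : R.det ≠ 0 := fun h => by simp [h] at hdetQ
    exact hne.isUnit
  have hRinv : R * R⁻¹ = 1 := mul_nonsing_inv _ hdetR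
  have hRinv' : R⁻¹ * R = 1 := nonsing_inv_mul _ hdetR
  have key : Q + Y = R * (1 + R⁻¹ * Y * R⁻¹) * R := by
    rw [Matrix.mul_add, Matrix.add_mul, Matrix.mul_one, hRR]
    congr 1
    have : R * (R⁻¹ * Y * R⁻¹) * R = (R * R⁻¹) * Y * (R⁻¹ * R) := by
      simp only [Matrix.mul_assoc]
    rw [this, hRinv, hRinv', Matrix.one_mul, Matrix.mul_one]
  have hZ : (R⁻¹ * Y * R⁻¹).PosSemidef := by
    have := hY.conjTranspose_mul_mul_same (R⁻¹)
    rwa [hR.isHermitian.inv.eq] at this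
  calc Q.det = Q.det * 1 := (mul_one _).symm
  _ ≤ Q.det * (1 + R⁻¹ * Y * R⁻¹).det :=
      mul_le_mul_of_nonneg_left (aux_one_le_det hZ) hdetQ.le
  _ = (Q + Y).det := by
      rw [key, det_mul, det_mul]
      nth_rewrite 1 [← hRR]
      rw [det_mul]
      ring

private lemma aux_schur_pd {m' n' : Type*} [Fintype m'] [DecidableEq m'] [Fintype n']
    [DecidableEq n'] {A : Matrix m' m' ℝ} (B : Matrix m' n' ℝ) {D : Matrix n' n' ℝ}
    (hA : A.PosDef) [Invertible A] (h : (fromBlocks A B Bᴴ D).PosDef) :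
    (D - Bᴴ * A⁻¹ * B).PosDef := by
  refine PosDef.of_dotProduct_mulVec_pos ((IsHermitian.fromBlocks₁₁ B D hA.1).mp h.1) (fun x hx => ?_)
  have hne : (-((A⁻¹ * B) *ᵥ x) ⊕ᵥ x) ≠ 0 := by
    intro hc
    exact hx (funext fun i => congrFun hc (Sum.inr i))
  have := h.dotProduct_mulVec_pos hne
  rw [dotProduct_mulVec, schur_complement_eq₁₁ B D _ _ hA.1, neg_add_cancel, dotProduct_zero,
    zero_add] at this
  rw [dotProduct_mulVec]
  exact this

private lemma aux_toBlocks₁₁_posDef {S : Matrix (k ⊕ l) (k ⊕ l) ℝ} (hS : S.PosDef) :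
    S.toBlocks₁₁.PosDef := by
  refine PosDef.of_dotProduct_mulVec_pos ?_ (fun x hx => ?_)
  · ext i j
    have h := congrFun (congrFun hS.1 (Sum.inl i)) (Sum.inl j)
    simpa [toBlocks₁₁, conjTranspose_apply] using h
  · have hne : (x ⊕ᵥ (0 : l → ℝ)) ≠ 0 := by
      intro hc
      exact hx (funext fun i => congrFun hc (Sum.inl i))
    have h := hS.dotProduct_mulVec_pos hne
    have he : star (x ⊕ᵥ (0 : l → ℝ)) ⬝ᵥ (S *ᵥ (x ⊕ᵥ (0 : l → ℝ))) =
        star x ⬝ᵥ (S.toBlocks₁₁ *ᵥ x) := by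
      simp [dotProduct, Matrix.mulVec, Fintype.sum_sum_type, toBlocks₁₁,
        star_trivial]
    rwa [he] at h

private lemma aux_toBlocks₂₁ {S : Matrix (k ⊕ l) (k ⊕ l) ℝ} (hS : S.IsHermitian) :
    S.toBlocks₂₁ = (S.toBlocks₁₂)ᴴ := by
  ext i j
  have h := congrFun (congrFun hS (Sum.inr i)) (Sum.inl j)
  simpa [toBlocks₂₁, toBlocks₁₂, conjTranspose_apply] using h.symm

private lemma aux_main {S : Matrix (k ⊕ l) (k ⊕ l) ℝ} (hS : S.PosDef)
    (A₁ : Matrix k k ℝ) (A₂ : Matrix l l ℝ) (h₁ : A₁.PosSemidef) (h₂ : A₂.PosSemidef) :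
    ∃ (d : ℝ) (C₂ X : Matrix l l ℝ), 0 < d ∧ X.PosSemidef ∧ (1 + C₂ - X).PosDef ∧
      ∀ s : ℝ, (1 + fromBlocks A₁ 0 0 A₂ *
          fromBlocks S.toBlocks₁₁ (s • S.toBlocks₁₂) (s • S.toBlocks₂₁) S.toBlocks₂₂).det
        = d * (1 + C₂ - (s * s) • X).det := by
  set B₁ := CFC.sqrt A₁ with hB₁def
  set B₂ := CFC.sqrt A₂ with hB₂def
  have hB₁ : B₁ᴴ = B₁ := (CFC.sqrt_nonneg A₁).posSemidef.isHermitian.eq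
  have hB₂ : B₂ᴴ = B₂ := (CFC.sqrt_nonneg A₂).posSemidef.isHermitian.eq
  set C₁ := B₁ * S.toBlocks₁₁ * B₁ with hC₁def
  set Co := B₁ * S.toBlocks₁₂ * B₂ with hCodef
  set C₂ := B₂ * S.toBlocks₂₂ * B₂ with hC₂def
  have hBB : (fromBlocks B₁ 0 0 B₂) * (fromBlocks B₁ 0 0 B₂) = fromBlocks A₁ 0 0 A₂ := by
    rw [fromBlocks_multiply]
    simp [CFC.sqrt_mul_sqrt_self A₁ h₁.nonneg, CFC.sqrt_mul_sqrt_self A₂ h₂.nonneg]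
    exact ⟨CFC.sqrt_mul_sqrt_self A₁ h₁.nonneg, CFC.sqrt_mul_sqrt_self A₂ h₂.nonneg⟩
  have hB₁t : B₁ᵀ = B₁ := by
    ext i j
    have := congrFun (congrFun hB₁ i) j
    simpa [conjTranspose_apply] using this
  have hB₂t : B₂ᵀ = B₂ := by
    ext i j
    have := congrFun (congrFun hB₂ i) j
    simpa [conjTranspose_apply] using this
  have e21 : B₂ * S.toBlocks₂₁ * B₁ = Coᴴ := by
    simp [hCodef, aux_toBlocks₂₁ hS.1, conjTranspose_mul, hB₁, hB₂, hB₁t, hB₂t,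
      Matrix.mul_assoc]
  have hprod : ∀ s : ℝ, (fromBlocks B₁ 0 0 B₂) *
      fromBlocks S.toBlocks₁₁ (s • S.toBlocks₁₂) (s • S.toBlocks₂₁) S.toBlocks₂₂ *
      (fromBlocks B₁ 0 0 B₂) = fromBlocks C₁ (s • Co) (s • Coᴴ) C₂ := by
    intro s
    rw [fromBlocks_multiply, fromBlocks_multiply, ← e21]
    simp only [Matrix.zero_mul, Matrix.mul_zero, add_zero, zero_add, Matrix.mul_smul,
      Matrix.smul_mul, smul_zero]
    rfl
  have hfb : ∀ s : ℝ, (1 : Matrix (k ⊕ l) (k ⊕ l) ℝ) + fromBlocks C₁ (s • Co) (s • Coᴴ) C₂ =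
      fromBlocks (1 + C₁) (s • Co) (s • Coᴴ) (1 + C₂) := by
    intro s
    rw [← fromBlocks_one, fromBlocks_add, zero_add, zero_add]
  have hC₁psd : C₁.PosSemidef := by
    have := (aux_toBlocks₁₁_posDef hS).posSemidef.conjTranspose_mul_mul_same B₁
    rwa [hB₁] at this
  have hPD1 : (1 + C₁).PosDef := Matrix.PosDef.one.add_posSemidef hC₁psd
  haveI : Invertible (1 + C₁) := (1 + C₁).invertibleOfIsUnitDet hPD1.det_pos.ne'.isUnit
  have hX : (Coᴴ * (1 + C₁)⁻¹ * Co).PosSemidef :=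
    hPD1.inv.posSemidef.conjTranspose_mul_mul_same Co
  have hfull : (fromBlocks (1 + C₁) Co Coᴴ (1 + C₂)).PosDef := by
    have h1 : (fromBlocks B₁ 0 0 B₂)ᴴ = fromBlocks B₁ 0 0 B₂ := by
      simp [fromBlocks_conjTranspose, fromBlocks_transpose, hB₁, hB₂, hB₁t, hB₂t]
    have hpsd := hS.posSemidef.conjTranspose_mul_mul_same (fromBlocks B₁ 0 0 B₂)
    rw [h1] at hpsd
    have hthis := Matrix.PosDef.one.add_posSemidef hpsd
    have hS1 : fromBlocks S.toBlocks₁₁ ((1:ℝ) • S.toBlocks₁₂) ((1:ℝ) • S.toBlocks₂₁)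
        S.toBlocks₂₂ = S := by
      rw [one_smul, one_smul, fromBlocks_toBlocks]
    rw [← hS1, hprod 1, hfb 1, one_smul, one_smul] at hthis
    exact hthis
  have hschur : (1 + C₂ - Coᴴ * (1 + C₁)⁻¹ * Co).PosDef := aux_schur_pd Co hPD1 hfull
  refine ⟨(1 + C₁).det, C₂, Coᴴ * (1 + C₁)⁻¹ * Co, hPD1.det_pos, hX, hschur, fun s => ?_⟩
  rw [← hBB, Matrix.mul_assoc, det_one_add_mul_comm, ← Matrix.mul_assoc, hprod s, hfb s,
    det_fromBlocks₁₁, invOf_eq_nonsing_inv]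
  congr 2
  simp only [Matrix.smul_mul, Matrix.mul_smul, smul_smul, hCodef, conjTranspose_mul,
    Matrix.mul_assoc]

private lemma aux_mono {d : ℝ} {C₂ X : Matrix l l ℝ} (hd : 0 < d) (hX : X.PosSemidef)
    (hPD : (1 + C₂ - X).PosDef) {s t : ℝ} (hs : 0 ≤ s) (hst : s ≤ t) (ht : t ≤ 1) :
    d * (1 + C₂ - (t * t) • X).det ≤ d * (1 + C₂ - (s * s) • X).det := by
  have h1 : 0 ≤ 1 - t * t := by nlinarith
  have h2 : 0 ≤ t * t - s * s := by nlinarith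
  have hQt : (1 + C₂ - (t * t) • X).PosDef := by
    have heq : 1 + C₂ - (t * t) • X = (1 + C₂ - X) + (1 - t * t) • X := by
      rw [sub_smul, one_smul]; abel
    rw [heq]
    exact hPD.add_posSemidef (aux_psd_smul h1 hX)
  have heq : 1 + C₂ - (s * s) • X = (1 + C₂ - (t * t) • X) + (t * t - s * s) • X := by
    rw [sub_smul]; abel
  refine mul_le_mul_of_nonneg_left ?_ hd.le
  rw [heq]
  exact aux_det_le hQt (aux_psd_smul h2 hX)

end RoyenAux

/-- **Royen's monotonicity lemma**: for a positive-definite `Σ` in block form, with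
`Σ^(s) = [[Σ₁, sΣ_o],[sΣ_o^*, Σ₂]]`, the map `s ↦ det(Id + (A₁ ⊕ A₂)Σ^(s))` is monotone
non-increasing on `[0,1]` for all positive semi-definite `A₁, A₂ ≥ 0`; in particular,
`inf_{A₁,A₂ ≥ 0} det(Id + (A₁ ⊕ A₂)(Σ₁ ⊕ Σ₂)) / det(Id + (A₁ ⊕ A₂)Σ) = 1`. -/
theorem royen_monotonicity (n₁ n₂ : ℕ)
    (S : Matrix (Fin n₁ ⊕ Fin n₂) (Fin n₁ ⊕ Fin n₂) ℝ) (hS : S.PosDef) :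
    (∀ (A₁ : Matrix (Fin n₁) (Fin n₁) ℝ) (A₂ : Matrix (Fin n₂) (Fin n₂) ℝ),
      A₁.PosSemidef → A₂.PosSemidef →
      AntitoneOn (fun s : ℝ =>
          (1 + fromBlocks A₁ 0 0 A₂ *
            fromBlocks S.toBlocks₁₁ (s • S.toBlocks₁₂) (s • S.toBlocks₂₁) S.toBlocks₂₂).det)
        (Set.Icc (0 : ℝ) 1)) ∧
    sInf {r : ℝ | ∃ (A₁ : Matrix (Fin n₁) (Fin n₁) ℝ) (A₂ : Matrix (Fin n₂) (Fin n₂) ℝ),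
        A₁.PosSemidef ∧ A₂.PosSemidef ∧
        r = (1 + fromBlocks A₁ 0 0 A₂ * fromBlocks S.toBlocks₁₁ 0 0 S.toBlocks₂₂).det /
            (1 + fromBlocks A₁ 0 0 A₂ * S).det} = 1 := by
  constructor
  · intro A₁ A₂ h₁ h₂
    obtain ⟨d, C₂, X, hd, hX, hPD, hdet⟩ := aux_main hS A₁ A₂ h₁ h₂
    intro x hx y hy hxy
    dsimp only
    rw [hdet x, hdet y]
    exact aux_mono hd hX hPD hx.1 hxy hy.2
  · have hmem : (1:ℝ) ∈ {r : ℝ | ∃ (A₁ : Matrix (Fin n₁) (Fin n₁) ℝ)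
        (A₂ : Matrix (Fin n₂) (Fin n₂) ℝ),
        A₁.PosSemidef ∧ A₂.PosSemidef ∧
        r = (1 + fromBlocks A₁ 0 0 A₂ * fromBlocks S.toBlocks₁₁ 0 0 S.toBlocks₂₂).det /
            (1 + fromBlocks A₁ 0 0 A₂ * S).det} := by
      refine ⟨0, 0, Matrix.PosSemidef.zero, Matrix.PosSemidef.zero, ?_⟩
      rw [fromBlocks_zero]
      simp
    have hub : ∀ r ∈ {r : ℝ | ∃ (A₁ : Matrix (Fin n₁) (Fin n₁) ℝ)
        (A₂ : Matrix (Fin n₂) (Fin n₂) ℝ),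
        A₁.PosSemidef ∧ A₂.PosSemidef ∧
        r = (1 + fromBlocks A₁ 0 0 A₂ * fromBlocks S.toBlocks₁₁ 0 0 S.toBlocks₂₂).det /
            (1 + fromBlocks A₁ 0 0 A₂ * S).det}, (1:ℝ) ≤ r := by
      rintro r ⟨A₁, A₂, h₁, h₂, rfl⟩
      obtain ⟨d, C₂, X, hd, hX, hPD, hdet⟩ := aux_main hS A₁ A₂ h₁ h₂
      have hden : (1 + fromBlocks A₁ 0 0 A₂ * S).det = d * (1 + C₂ - (1:ℝ) • X).det := by
        have h := hdet 1
        rw [one_smul, one_smul, fromBlocks_toBlocks] at h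
        simpa using h
      have hnum : (1 + fromBlocks A₁ 0 0 A₂ *
          fromBlocks S.toBlocks₁₁ 0 0 S.toBlocks₂₂).det = d * (1 + C₂ - (0:ℝ) • X).det := by
        have h := hdet 0
        rw [zero_smul, zero_smul] at h
        simpa using h
      have hden_pos : 0 < (1 + fromBlocks A₁ 0 0 A₂ * S).det := by
        rw [hden, one_smul]
        exact mul_pos hd hPD.det_pos
      rw [one_le_div hden_pos, hden, hnum]
      have := aux_mono hd hX hPD (le_refl (0:ℝ)) zero_le_one (le_refl (1:ℝ))
      simpa using this
    exact le_antisymm (csInf_le ⟨1, fun r hr => hub r hr⟩ hmem) (le_csInf ⟨1, hmem⟩ hub)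
end

section
/- Let X be a centered Gaussian random vector in ℝ^N with positive-definite covariance Σ, let n_1 + n_2 = N, let P_i : ℝ^N → ℝ^{n_i} be given by P_i x = x_i for x = (x_1,x_2) ∈ ℝ^{n_1} ⊕ ℝ^{n_2}, and let Σ_i denote the covariance of P_i X (the corresponding diagonal block of Σ). Then for all positive semi-definite symmetric matrices A_1, A_2 ≥ 0: E[g_{A_1}(P_1 X) g_{A_2}(P_2 X)] / (E[g_{A_1}(P_1 X)] · E[g_{A_2}(P_2 X)]) = (det(Id_{n_1} + A_1Σ_1) · det(Id_{n_2} + A_2Σ_2) / det(Id_N + (A_1 ⊕ A_2)Σ))^{1/2}. -/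
open MeasureTheory Matrix

set_option maxHeartbeats 1600000

lemma integral_gauss_posdef {ι : Type*} [Fintype ι] [DecidableEq ι]
    {M : Matrix ι ι ℝ} (hM : M.PosDef) :
    ∫ x : ι → ℝ, Real.exp (-(1/2 : ℝ) * (x ⬝ᵥ M.mulVec x)) =
      Real.sqrt ((2 * Real.pi) ^ (Fintype.card ι) / M.det) := by
  set B := (open scoped MatrixOrder in CFC.sqrt M) with hBdef
  have hB : B.PosSemidef := by open scoped MatrixOrder in exact (CFC.sqrt_nonneg M).posSemidef
  have hBB : B * B = M := by
    open scoped MatrixOrder in exact CFC.sqrt_mul_sqrt_self M hM.posSemidef.nonneg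
  have hdetM : 0 < M.det := hM.det_pos
  have hdetB : B.det = Real.sqrt M.det := by
    have h1 : B.det * B.det = M.det := by rw [← det_mul, hBB]
    have h2 : 0 ≤ B.det := by
      rw [hB.isHermitian.det_eq_prod_eigenvalues]
      exact Finset.prod_nonneg fun i _ => hB.eigenvalues_nonneg i
    nlinarith [Real.sq_sqrt hdetM.le, Real.sqrt_nonneg M.det]
  have hdetB0 : B.det ≠ 0 := by
    rw [hdetB]; positivity
  have hquad : ∀ x : ι → ℝ, x ⬝ᵥ M.mulVec x = ∑ i, (B.mulVec x i) ^ 2 := by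
    intro x
    have hsym : B.transpose = B := by
      have := hB.isHermitian
      simpa [Matrix.IsHermitian, Matrix.conjTranspose_eq_transpose_of_trivial] using this
    calc x ⬝ᵥ M.mulVec x = x ⬝ᵥ B.mulVec (B.mulVec x) := by
            rw [Matrix.mulVec_mulVec, hBB]
      _ = (B.mulVec x) ⬝ᵥ (B.mulVec x) := by
            rw [dotProduct_mulVec, ← Matrix.mulVec_transpose, hsym]
      _ = ∑ i, (B.mulVec x i) ^ 2 := by simp [dotProduct, sq]
  have hmap := Real.map_matrix_volume_pi_eq_smul_volume_pi hdetB0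
  set f : (ι → ℝ) → ℝ := fun y => Real.exp (-(1/2 : ℝ) * ∑ i, (y i)^2) with hf
  have hfc : Continuous f := by fun_prop
  have hTmeas : Measurable (Matrix.toLin' B) :=
    (LinearMap.continuous_of_finiteDimensional _).measurable
  have key : ∫ x : ι → ℝ, f (Matrix.toLin' B x) = |B.det⁻¹| * ∫ y, f y := by
    rw [← integral_map hTmeas.aemeasurable hfc.aestronglyMeasurable, hmap,
      integral_smul_measure, ENNReal.toReal_ofReal (abs_nonneg _), smul_eq_mul]
  have hfy : ∫ y : ι → ℝ, f y = Real.sqrt (2 * Real.pi) ^ (Fintype.card ι) := by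
    have h1 : f = fun y => ∏ i, Real.exp (-(1/2 : ℝ) * (y i)^2) := by
      funext y
      rw [hf]
      simp only [Finset.mul_sum, Real.exp_sum]
    rw [h1, volume_pi, integral_fintype_prod_eq_pow (ι := ι) (fun t : ℝ => Real.exp (-(1/2:ℝ) * t^2))]
    congr 1
    have hg := integral_gaussian (1/2 : ℝ)
    simp only [neg_mul] at hg ⊢
    rw [hg, div_div_eq_mul_div, div_one, mul_comm]
  calc ∫ x : ι → ℝ, Real.exp (-(1/2 : ℝ) * (x ⬝ᵥ M.mulVec x))
      = ∫ x : ι → ℝ, f (Matrix.toLin' B x) := by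
        congr 1; ext x; rw [hf]; simp only [Matrix.toLin'_apply]; rw [hquad x]
    _ = |B.det⁻¹| * ∫ y, f y := key
    _ = Real.sqrt ((2 * Real.pi) ^ (Fintype.card ι) / M.det) := by
        have hpow : Real.sqrt ((2 * Real.pi) ^ (Fintype.card ι)) =
            Real.sqrt (2 * Real.pi) ^ (Fintype.card ι) := by
          have h2 : ((2:ℝ) * Real.pi) ^ (Fintype.card ι) =
              (Real.sqrt (2 * Real.pi) ^ (Fintype.card ι))^2 := by
            rw [← pow_mul, mul_comm (Fintype.card ι) 2, pow_mul,
              Real.sq_sqrt (by positivity)]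
          rw [h2, Real.sqrt_sq (by positivity)]
        rw [hfy, hdetB, abs_inv, abs_of_nonneg (Real.sqrt_nonneg _),
          Real.sqrt_div (by positivity), hpow, inv_mul_eq_div]

lemma quad_block {n₁ n₂ : ℕ} (A₁ : Matrix (Fin n₁) (Fin n₁) ℝ)
    (A₂ : Matrix (Fin n₂) (Fin n₂) ℝ) (x : Fin n₁ ⊕ Fin n₂ → ℝ) :
    x ⬝ᵥ (fromBlocks A₁ 0 0 A₂).mulVec x =
      (x ∘ Sum.inl) ⬝ᵥ A₁.mulVec (x ∘ Sum.inl) + (x ∘ Sum.inr) ⬝ᵥ A₂.mulVec (x ∘ Sum.inr) := by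
  have hx : x = Sum.elim (x ∘ Sum.inl) (x ∘ Sum.inr) := (Sum.elim_comp_inl_inr x).symm
  rw [hx]
  rw [Matrix.fromBlocks_mulVec]
  simp [dotProduct, Fintype.sum_sum_type]

lemma fromBlocks_posSemidef {n₁ n₂ : ℕ} {A₁ : Matrix (Fin n₁) (Fin n₁) ℝ}
    {A₂ : Matrix (Fin n₂) (Fin n₂) ℝ} (hA₁ : A₁.PosSemidef) (hA₂ : A₂.PosSemidef) :
    (fromBlocks A₁ 0 0 A₂).PosSemidef := by
  refine Matrix.posSemidef_iff_dotProduct_mulVec.mpr ⟨?_, ?_⟩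
  · rw [Matrix.IsHermitian, Matrix.fromBlocks_conjTranspose]
    refine Matrix.fromBlocks_inj.mpr ⟨?_, by simp, by simp, ?_⟩ <;>
      simp [Matrix.conjTranspose] <;> first | exact hA₁.1 | exact hA₂.1
  · intro x
    rw [star_trivial, quad_block]
    exact add_nonneg (by simpa using hA₁.dotProduct_mulVec_nonneg (x ∘ Sum.inl))
      (by simpa using hA₂.dotProduct_mulVec_nonneg (x ∘ Sum.inr))

/-- The density (up to normalization) of a centered Gaussian vector with positive-definite
covariance `S`, namely `x ↦ exp(-(1/2)⟨S⁻¹x,x⟩)`. -/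
noncomputable def gaussDensityInv {ι : Type*} [Fintype ι] [DecidableEq ι]
    (S : Matrix ι ι ℝ) (x : ι → ℝ) : ℝ :=
  Real.exp (-(1/2 : ℝ) * (x ⬝ᵥ (S⁻¹).mulVec x))

/-- If `X` is a centered Gaussian random vector in `ℝ^N = ℝ^{n₁} ⊕ ℝ^{n₂}` with
positive-definite covariance `S` (with diagonal blocks `Σ₁, Σ₂`), then for all positive
semi-definite `A₁, A₂ ≥ 0`:
`E[g_{A₁}(P₁X)g_{A₂}(P₂X)] / (E[g_{A₁}(P₁X)] E[g_{A₂}(P₂X)])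
  = (det(Id + A₁Σ₁) det(Id + A₂Σ₂) / det(Id + (A₁ ⊕ A₂)Σ))^{1/2}`.
Expectations are expressed as normalized integrals of the Gaussian density. -/
theorem gaussian_ratio_formula (n₁ n₂ : ℕ)
    (S : Matrix (Fin n₁ ⊕ Fin n₂) (Fin n₁ ⊕ Fin n₂) ℝ) (hS : S.PosDef)
    (A₁ : Matrix (Fin n₁) (Fin n₁) ℝ) (A₂ : Matrix (Fin n₂) (Fin n₂) ℝ)
    (hA₁ : A₁.PosSemidef) (hA₂ : A₂.PosSemidef) :
    ((∫ x : Fin n₁ ⊕ Fin n₂ → ℝ,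
        gaussFn A₁ (x ∘ Sum.inl) * gaussFn A₂ (x ∘ Sum.inr) * gaussDensityInv S x) /
      (∫ x : Fin n₁ ⊕ Fin n₂ → ℝ, gaussDensityInv S x)) /
    (((∫ x : Fin n₁ ⊕ Fin n₂ → ℝ, gaussFn A₁ (x ∘ Sum.inl) * gaussDensityInv S x) /
        (∫ x : Fin n₁ ⊕ Fin n₂ → ℝ, gaussDensityInv S x)) *
      ((∫ x : Fin n₁ ⊕ Fin n₂ → ℝ, gaussFn A₂ (x ∘ Sum.inr) * gaussDensityInv S x) /
        (∫ x : Fin n₁ ⊕ Fin n₂ → ℝ, gaussDensityInv S x)))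
    = Real.sqrt ((1 + A₁ * S.toBlocks₁₁).det * (1 + A₂ * S.toBlocks₂₂).det /
        (1 + fromBlocks A₁ 0 0 A₂ * S).det) := by
  have hT : (S⁻¹).PosDef := hS.inv
  have hSdet : S.det ≠ 0 := hS.det_pos.ne'
  set c : ℝ := (2 * Real.pi) ^ (Fintype.card (Fin n₁ ⊕ Fin n₂)) with hcdef
  have hc : 0 < c := by positivity
  set F : Matrix (Fin n₁ ⊕ Fin n₂) (Fin n₁ ⊕ Fin n₂) ℝ := fromBlocks A₁ 0 0 A₂ with hFdef
  set F₁ : Matrix (Fin n₁ ⊕ Fin n₂) (Fin n₁ ⊕ Fin n₂) ℝ := fromBlocks A₁ 0 0 0 with hF₁def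
  set F₂ : Matrix (Fin n₁ ⊕ Fin n₂) (Fin n₁ ⊕ Fin n₂) ℝ := fromBlocks 0 0 0 A₂ with hF₂def
  have hF : F.PosSemidef := fromBlocks_posSemidef hA₁ hA₂
  have hF₁ : F₁.PosSemidef := fromBlocks_posSemidef hA₁ .zero
  have hF₂ : F₂.PosSemidef := fromBlocks_posSemidef .zero hA₂
  have hFT : (F + S⁻¹).PosDef := Matrix.PosDef.posSemidef_add hF hT
  have hF₁T : (F₁ + S⁻¹).PosDef := Matrix.PosDef.posSemidef_add hF₁ hT
  have hF₂T : (F₂ + S⁻¹).PosDef := Matrix.PosDef.posSemidef_add hF₂ hT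
  -- integral computations
  have hI0 : ∫ x : Fin n₁ ⊕ Fin n₂ → ℝ, gaussDensityInv S x = Real.sqrt (c / (S⁻¹).det) :=
    integral_gauss_posdef hT
  have hIgen : ∀ (B₁ : Matrix (Fin n₁) (Fin n₁) ℝ) (B₂ : Matrix (Fin n₂) (Fin n₂) ℝ),
      (fromBlocks B₁ 0 0 B₂ + S⁻¹).PosDef →
      ∫ x : Fin n₁ ⊕ Fin n₂ → ℝ,
          gaussFn B₁ (x ∘ Sum.inl) * gaussFn B₂ (x ∘ Sum.inr) * gaussDensityInv S x
        = Real.sqrt (c / (fromBlocks B₁ 0 0 B₂ + S⁻¹).det) := by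
    intro B₁ B₂ hpd
    rw [← integral_gauss_posdef hpd]
    congr 1
    funext x
    rw [gaussFn, gaussFn, gaussDensityInv, ← Real.exp_add, ← Real.exp_add]
    congr 1
    rw [Matrix.add_mulVec, dotProduct_add, quad_block]
    ring
  have hIF : ∫ x : Fin n₁ ⊕ Fin n₂ → ℝ,
      gaussFn A₁ (x ∘ Sum.inl) * gaussFn A₂ (x ∘ Sum.inr) * gaussDensityInv S x
      = Real.sqrt (c / (F + S⁻¹).det) := hIgen A₁ A₂ hFT
  have hone : ∀ x : Fin n₁ ⊕ Fin n₂ → ℝ, gaussFn (0 : Matrix (Fin n₂) (Fin n₂) ℝ) (x ∘ Sum.inr) = 1 := by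
    intro x; simp [gaussFn]
  have hone' : ∀ x : Fin n₁ ⊕ Fin n₂ → ℝ, gaussFn (0 : Matrix (Fin n₁) (Fin n₁) ℝ) (x ∘ Sum.inl) = 1 := by
    intro x; simp [gaussFn]
  have hIF₁ : ∫ x : Fin n₁ ⊕ Fin n₂ → ℝ, gaussFn A₁ (x ∘ Sum.inl) * gaussDensityInv S x
      = Real.sqrt (c / (F₁ + S⁻¹).det) := by
    rw [← hIgen A₁ 0 hF₁T]
    congr 1; funext x; rw [hone x, mul_one]
  have hIF₂ : ∫ x : Fin n₁ ⊕ Fin n₂ → ℝ, gaussFn A₂ (x ∘ Sum.inr) * gaussDensityInv S x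
      = Real.sqrt (c / (F₂ + S⁻¹).det) := by
    rw [← hIgen 0 A₂ hF₂T]
    congr 1; funext x; rw [hone' x, one_mul]
  -- determinant identities
  have hdet : ∀ G : Matrix (Fin n₁ ⊕ Fin n₂) (Fin n₁ ⊕ Fin n₂) ℝ,
      (G + S⁻¹).det = (1 + G * S).det * (S⁻¹).det := by
    intro G
    have h : (1 + G * S) * S⁻¹ = G + S⁻¹ := by
      rw [add_mul, one_mul, mul_assoc, Matrix.mul_nonsing_inv _ (isUnit_iff_ne_zero.mpr hSdet), mul_one, add_comm]
    rw [← h, det_mul]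
  have hb1 : (1 + F₁ * S).det = (1 + A₁ * S.toBlocks₁₁).det := by
    rw [hF₁def]
    nth_rewrite 1 [← Matrix.fromBlocks_toBlocks S]
    rw [Matrix.fromBlocks_multiply, ← Matrix.fromBlocks_one]
    simp only [Matrix.zero_mul, Matrix.fromBlocks_add, add_zero, zero_add]
    rw [Matrix.det_fromBlocks_zero₂₁]
    simp
  have hb2 : (1 + F₂ * S).det = (1 + A₂ * S.toBlocks₂₂).det := by
    rw [hF₂def]
    nth_rewrite 1 [← Matrix.fromBlocks_toBlocks S]
    rw [Matrix.fromBlocks_multiply, ← Matrix.fromBlocks_one]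
    simp only [Matrix.zero_mul, Matrix.fromBlocks_add, add_zero, zero_add]
    rw [Matrix.det_fromBlocks_zero₁₂]
    simp
  set t : ℝ := (S⁻¹).det with htdef
  have ht : 0 < t := hT.det_pos
  set a : ℝ := (1 + A₁ * S.toBlocks₁₁).det with hadef
  set b : ℝ := (1 + A₂ * S.toBlocks₂₂).det with hbdef
  set d : ℝ := (1 + F * S).det with hddef
  have hFTd : (F + S⁻¹).det = d * t := hdet F
  have hF₁Td : (F₁ + S⁻¹).det = a * t := by rw [hdet F₁, hb1]
  have hF₂Td : (F₂ + S⁻¹).det = b * t := by rw [hdet F₂, hb2]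
  have hd : 0 < d := by
    have h := hFT.det_pos; rw [hFTd] at h; nlinarith
  have ha : 0 < a := by
    have h := hF₁T.det_pos; rw [hF₁Td] at h; nlinarith
  have hb : 0 < b := by
    have h := hF₂T.det_pos; rw [hF₂Td] at h; nlinarith
  rw [hIF, hIF₁, hIF₂, hI0, hFTd, hF₁Td, hF₂Td]
  have cancel : ∀ u : ℝ, 0 < u →
      Real.sqrt (c / (u * t)) / Real.sqrt (c / t) = (Real.sqrt u)⁻¹ := by
    intro u hu
    have h1 : c / (u * t) = c / t * u⁻¹ := by
      field_simp
    have hX : Real.sqrt (c / t) ≠ 0 := by positivity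
    rw [h1, Real.sqrt_mul (by positivity), Real.sqrt_inv, mul_comm, mul_div_assoc,
      div_self hX, mul_one]
  rw [cancel d hd, cancel a ha, cancel b hb,
    Real.sqrt_div (by positivity : (0:ℝ) ≤ a * b), Real.sqrt_mul ha.le]
  have h1 : Real.sqrt a ≠ 0 := by positivity
  have h2 : Real.sqrt b ≠ 0 := by positivity
  have h3 : Real.sqrt d ≠ 0 := by positivity
  field_simp
end
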